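/- arXiv:1511.08826 — 6 statements merged into one kernel-verified Lean document; each statement's English description precedes it below -/
import Mathlib

section
/- Let t ≥ 3 be an integer, let G be a finite simple graph containing no cycle whose length lies in {8, 10, 12, …, 2t+2}, and let x be a vertex of G. Then G contains no path v₀v₁v₂v₃v₄v₅v₆ of length 6 (seven distinct vertices, consecutive ones adjacent) such that v₀, v₂, v₄, v₆ are all at distance exactly t−1 from x and each of v₁, v₃, v₅ is at distance exactly t−1 or exactly t from x. -/
open SimpleGraph Walk

variable {V : Type} {G : SimpleGraph V}

/-- A path from `u` to `v` containing the edge `s(u,v)` has length 1. -/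
lemma path_edge_endpoints {u v : V} {p : G.Walk u v} (hp : p.IsPath)
    (h : s(u, v) ∈ p.edges) : p.length = 1 := by
  cases p with
  | nil => simp at h
  | @cons _ w _ hadj q =>
    rw [Walk.edges_cons, List.mem_cons] at h
    rcases h with h | h
    · rw [Sym2.eq_iff] at h
      rcases h with ⟨-, hv⟩ | ⟨huw, -⟩
      · subst hv
        have hq : q.IsPath := hp.of_cons
        rw [Walk.isPath_iff_eq_nil] at hq
        subst hq
        rfl
      · exact absurd huw hadj.ne
    · have := Walk.fst_mem_support_of_mem_edges q h
      have hu : u ∉ q.support := (Walk.cons_isPath_iff _ _ |>.mp hp).2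
      exact absurd this hu

/-- Two internally disjoint paths between distinct vertices form a cycle. -/
lemma cycle_of_two_paths {u v : V} {p q : G.Walk u v} (hp : p.IsPath) (hq : q.IsPath)
    (hne : u ≠ v) (hlen : 2 ≤ p.length)
    (hint : ∀ z ∈ p.support, z ∈ q.support → z = u ∨ z = v) :
    (p.append q.reverse).IsCycle := by
  rw [Walk.isCycle_def]
  refine ⟨?_, ?_, ?_⟩
  · rw [Walk.isTrail_def, Walk.edges_append, Walk.edges_reverse, List.nodup_append]
    refine ⟨hp.isTrail.edges_nodup, List.nodup_reverse.mpr hq.isTrail.edges_nodup, ?_⟩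
    intro e hep e' heq he; subst he
    rw [List.mem_reverse] at heq
    revert hep heq
    refine e.ind fun a b hep heq => ?_
    have hab : a ≠ b := (p.adj_of_mem_edges hep).ne
    have ha : a = u ∨ a = v :=
      hint a (Walk.fst_mem_support_of_mem_edges p hep) (Walk.fst_mem_support_of_mem_edges q heq)
    have hb : b = u ∨ b = v :=
      hint b (Walk.snd_mem_support_of_mem_edges p hep) (Walk.snd_mem_support_of_mem_edges q heq)
    have he : s(a, b) = s(u, v) := by
      rcases ha with rfl | rfl <;> rcases hb with rfl | rfl
      · exact absurd rfl hab
      · rfl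
      · exact Sym2.eq_swap
      · exact absurd rfl hab
    rw [he] at hep
    have := path_edge_endpoints hp hep
    omega
  · intro hnil
    have h0 : (p.append q.reverse).length = 0 := by rw [hnil]; rfl
    rw [Walk.length_append, Walk.length_reverse] at h0
    omega
  · rw [Walk.tail_support_append, List.nodup_append]
    have hpn := hp.support_nodup
    rw [p.support_eq_cons, List.nodup_cons] at hpn
    have hqr : q.reverse.IsPath := hq.reverse
    have hqn := hqr.support_nodup
    rw [q.reverse.support_eq_cons, List.nodup_cons] at hqn
    refine ⟨hpn.2, hqn.2, ?_⟩
    intro z hz1 z' hz2 hzz; subst hzz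
    have hz1' : z ∈ p.support := by rw [p.support_eq_cons]; exact List.mem_cons_of_mem _ hz1
    have hz2' : z ∈ q.support := by
      have : z ∈ q.reverse.support := by
        rw [q.reverse.support_eq_cons]; exact List.mem_cons_of_mem _ hz2
      rwa [Walk.support_reverse, List.mem_reverse] at this
    rcases hint z hz1' hz2' with rfl | rfl
    · exact hpn.1 hz1
    · exact hqn.1 hz2

/-- Along a walk realizing the distance to `a`, distances grow linearly. -/
lemma radial_take_drop [DecidableEq V] {x w a : V} (hr : G.Reachable x w) (p : G.Walk w a)
    (h : G.dist x w + p.length = G.dist x a) {z : V} (hz : z ∈ p.support) :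
    G.dist x w + (p.takeUntil z hz).length = G.dist x z ∧
    G.dist x z + (p.dropUntil z hz).length = G.dist x a := by
  obtain ⟨W, hW⟩ := hr.exists_walk_length_eq_dist
  have hsum : (p.takeUntil z hz).length + (p.dropUntil z hz).length = p.length := by
    conv_rhs => rw [← p.take_spec hz]
    exact (Walk.length_append _ _).symm
  have h1 : G.dist x z ≤ G.dist x w + (p.takeUntil z hz).length := by
    have := SimpleGraph.dist_le (W.append (p.takeUntil z hz))
    rwa [Walk.length_append, hW] at this
  obtain ⟨W2, hW2⟩ := (W.append (p.takeUntil z hz)).reachable.exists_walk_length_eq_dist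
  have h2 : G.dist x a ≤ G.dist x z + (p.dropUntil z hz).length := by
    have := SimpleGraph.dist_le (W2.append (p.dropUntil z hz))
    rwa [Walk.length_append, hW2] at this
  omega

/-- Key step: two vertices at level `n` joined by a 4-path staying at level `≥ n`
have a common neighbour at level `n - 1`. -/
lemma key_common_neighbor [Fintype V] {x a b : V} {n : ℕ} (hn : 2 ≤ n) (hab : a ≠ b)
    (ha : G.dist x a = n) (hb : G.dist x b = n)
    (M : G.Walk a b) (hM : M.IsPath) (hMlen : M.length = 4)
    (hMdist : ∀ z ∈ M.support, n ≤ G.dist x z)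
    (hcyc : ∀ (v : V) (c : G.Walk v v), c.IsCycle →
      ¬(8 ≤ c.length ∧ c.length ≤ 2 * n + 4 ∧ Even c.length)) :
    ∃ w : V, G.dist x w = n - 1 ∧ G.Adj w a ∧ G.Adj w b := by
  classical
  have hra : G.Reachable x a := Reachable.of_dist_ne_zero (by omega)
  have hrb : G.Reachable x b := Reachable.of_dist_ne_zero (by omega)
  obtain ⟨p0, hp0⟩ := hra.exists_walk_length_eq_dist
  obtain ⟨q0, hq0⟩ := hrb.exists_walk_length_eq_dist
  set p := p0.bypass with hpdef
  set q := q0.bypass with hqdef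
  have hpPath : p.IsPath := p0.bypass_isPath
  have hqPath : q.IsPath := q0.bypass_isPath
  have hplen : p.length = n := by
    have h1 : p.length ≤ n := by rw [hpdef, ← ha, ← hp0]; exact p0.length_bypass_le
    have h2 : n ≤ p.length := by rw [← ha]; exact SimpleGraph.dist_le p
    omega
  have hqlen : q.length = n := by
    have h1 : q.length ≤ n := by rw [hqdef, ← hb, ← hq0]; exact q0.length_bypass_le
    have h2 : n ≤ q.length := by rw [← hb]; exact SimpleGraph.dist_le q
    omega
  let S : Finset V := Finset.univ.filter (fun z => z ∈ p.support ∧ z ∈ q.support)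
  have hxS : x ∈ S := by simp [S]
  obtain ⟨w, hwS, hwmax⟩ := S.exists_max_image (fun z => G.dist x z) ⟨x, hxS⟩
  have hwp : w ∈ p.support := by simp only [S, Finset.mem_filter] at hwS; exact hwS.2.1
  have hwq : w ∈ q.support := by simp only [S, Finset.mem_filter] at hwS; exact hwS.2.2
  have hwmax' : ∀ z, z ∈ p.support → z ∈ q.support → G.dist x z ≤ G.dist x w := by
    intro z h1 h2
    exact hwmax z (by simp [S, h1, h2])
  have hradp : G.dist x x + p.length = G.dist x a := by
    rw [SimpleGraph.dist_self, hplen, ha]; omega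
  have hradq : G.dist x x + q.length = G.dist x b := by
    rw [SimpleGraph.dist_self, hqlen, hb]; omega
  have hrw : G.Reachable x w := (p.takeUntil w hwp).reachable
  set Sp := p.dropUntil w hwp with hSpdef
  set Sq := q.dropUntil w hwq with hSqdef
  have hSp : G.dist x w + Sp.length = n := by
    show G.dist x w + (p.dropUntil w hwp).length = n
    have := (radial_take_drop (Reachable.refl x) p hradp hwp).2
    omega
  have hSq : G.dist x w + Sq.length = n := by
    show G.dist x w + (q.dropUntil w hwq).length = n
    have := (radial_take_drop (Reachable.refl x) q hradq hwq).2
    omega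
  have hSpPath : Sp.IsPath := hpPath.dropUntil hwp
  have hSqPath : Sq.IsPath := hqPath.dropUntil hwq
  set m := Sp.length with hmdef
  have hmq : Sq.length = m := by omega
  have hm1 : 1 ≤ m := by
    by_contra hm0
    have h1 : Sp.length = 0 := by omega
    have h2 : Sq.length = 0 := by omega
    have e1 : w = a := Walk.eq_of_length_eq_zero h1
    have e2 : w = b := Walk.eq_of_length_eq_zero h2
    exact hab (e1 ▸ e2)
  have hradSp : G.dist x w + Sp.length = G.dist x a := by rw [ha]; exact hSp
  have hradSq : G.dist x w + Sq.length = G.dist x b := by rw [hb]; exact hSq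
  have hSpFacts : ∀ z (hz : z ∈ Sp.support), G.dist x w ≤ G.dist x z ∧
      (G.dist x z = G.dist x w → z = w) ∧ G.dist x z ≤ n ∧ (G.dist x z = n → z = a) := by
    intro z hz
    obtain ⟨e1, e2⟩ := radial_take_drop hrw Sp hradSp hz
    rw [ha] at e2
    refine ⟨by omega, ?_, by omega, ?_⟩
    · intro hzd
      have h0 : (Sp.takeUntil z hz).length = 0 := by omega
      exact (Walk.eq_of_length_eq_zero h0).symm
    · intro hzn
      have h0 : (Sp.dropUntil z hz).length = 0 := by omega
      exact Walk.eq_of_length_eq_zero h0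
  have hSqFacts : ∀ z (hz : z ∈ Sq.support), G.dist x w ≤ G.dist x z ∧
      (G.dist x z = G.dist x w → z = w) ∧ G.dist x z ≤ n ∧ (G.dist x z = n → z = b) := by
    intro z hz
    obtain ⟨e1, e2⟩ := radial_take_drop hrw Sq hradSq hz
    rw [hb] at e2
    refine ⟨by omega, ?_, by omega, ?_⟩
    · intro hzd
      have h0 : (Sq.takeUntil z hz).length = 0 := by omega
      exact (Walk.eq_of_length_eq_zero h0).symm
    · intro hzn
      have h0 : (Sq.dropUntil z hz).length = 0 := by omega
      exact Walk.eq_of_length_eq_zero h0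
  have hPQ : ∀ z, z ∈ Sp.support → z ∈ Sq.support → z = w := by
    intro z h1 h2
    refine (hSpFacts z h1).2.1 (le_antisymm ?_ (hSpFacts z h1).1)
    exact hwmax' z (p.support_dropUntil_subset hwp h1) (q.support_dropUntil_subset hwq h2)
  have hPM : ∀ z, z ∈ Sp.support → z ∈ M.support → z = a := by
    intro z h1 h2
    exact (hSpFacts z h1).2.2.2 (le_antisymm (hSpFacts z h1).2.2.1 (hMdist z h2))
  have hQM : ∀ z, z ∈ Sq.support → z ∈ M.support → z = b := by
    intro z h1 h2
    exact (hSqFacts z h1).2.2.2 (le_antisymm (hSqFacts z h1).2.2.1 (hMdist z h2))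
  set P1 := Sp.append M with hP1def
  have hP1Path : P1.IsPath := by
    rw [Walk.isPath_def, Walk.support_append, List.nodup_append]
    have hMn := hM.support_nodup
    rw [M.support_eq_cons, List.nodup_cons] at hMn
    refine ⟨hSpPath.support_nodup, hMn.2, ?_⟩
    intro z hz1 z' hz2 hzz; subst hzz
    have hz2' : z ∈ M.support := by rw [M.support_eq_cons]; exact List.mem_cons_of_mem _ hz2
    have := hPM z hz1 hz2'
    subst this
    exact hMn.1 hz2
  have hwb : w ≠ b := by
    intro h
    rw [← h] at hb
    omega
  have hlenP1 : 2 ≤ P1.length := by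
    rw [hP1def, Walk.length_append, hMlen]; omega
  have hint : ∀ z ∈ P1.support, z ∈ Sq.support → z = w ∨ z = b := by
    intro z hz1 hz2
    rw [hP1def, Walk.mem_support_append_iff] at hz1
    rcases hz1 with hz1 | hz1
    · exact Or.inl (hPQ z hz1 hz2)
    · exact Or.inr (hQM z hz2 hz1)
  have hC : (P1.append Sq.reverse).IsCycle :=
    cycle_of_two_paths hP1Path hSqPath hwb hlenP1 hint
  have hClen : (P1.append Sq.reverse).length = 2 * m + 4 := by
    rw [Walk.length_append, Walk.length_reverse, hP1def, Walk.length_append, hMlen]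
    omega
  have hforb := hcyc w (P1.append Sq.reverse) hC
  rw [hClen] at hforb
  have hm : m = 1 := by
    by_contra hm'
    exact hforb ⟨by omega, by omega, ⟨m + 2, by omega⟩⟩
  have hadja : G.Adj w a := by
    have h01 : G.Adj (Sp.getVert 0) (Sp.getVert 1) := Sp.adj_getVert_succ (by omega)
    rwa [Walk.getVert_zero, Sp.getVert_of_length_le (by omega)] at h01
  have hadjb : G.Adj w b := by
    have h01 : G.Adj (Sq.getVert 0) (Sq.getVert 1) := Sq.adj_getVert_succ (by omega)
    rwa [Walk.getVert_zero, Sq.getVert_of_length_le (by omega)] at h01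
  exact ⟨w, by omega, hadja, hadjb⟩

set_option maxHeartbeats 1000000 in
/-- Claim 1: if `t ≥ 3` and `G` has no cycle of length in `{8, 10, ..., 2t+2}`, then `G`
contains no path `v₀v₁v₂v₃v₄v₅v₆` with `v₀, v₂, v₄, v₆` at distance exactly `t-1` from `x`
and `v₁, v₃, v₅` at distance exactly `t-1` or `t` from `x`. -/
theorem no_sixpath_at_level_t_minus_one
    (t : ℕ) (ht : 3 ≤ t) (V : Type) [Fintype V] (G : SimpleGraph V)
    (hcyc : ∀ (v : V) (w : G.Walk v v), w.IsCycle →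
      ¬(8 ≤ w.length ∧ w.length ≤ 2 * t + 2 ∧ Even w.length))
    (x : V) :
    ¬ ∃ v₀ v₁ v₂ v₃ v₄ v₅ v₆ : V,
      ([v₀, v₁, v₂, v₃, v₄, v₅, v₆] : List V).Nodup ∧
      G.Adj v₀ v₁ ∧ G.Adj v₁ v₂ ∧ G.Adj v₂ v₃ ∧ G.Adj v₃ v₄ ∧ G.Adj v₄ v₅ ∧ G.Adj v₅ v₆ ∧
      G.dist x v₀ = t - 1 ∧ G.dist x v₂ = t - 1 ∧ G.dist x v₄ = t - 1 ∧ G.dist x v₆ = t - 1 ∧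
      (G.dist x v₁ = t - 1 ∨ G.dist x v₁ = t) ∧
      (G.dist x v₃ = t - 1 ∨ G.dist x v₃ = t) ∧
      (G.dist x v₅ = t - 1 ∨ G.dist x v₅ = t) := by
  classical
  rintro ⟨v₀, v₁, v₂, v₃, v₄, v₅, v₆, hnd, a01, a12, a23, a34, a45, a56,
    h0, h2, h4, h6, h1, h3, h5⟩
  simp only [List.nodup_cons, List.mem_cons, List.mem_singleton, List.not_mem_nil,
    or_false, not_or, List.nodup_nil, and_true] at hnd
  obtain ⟨⟨h01, h02, h03, h04, h05, h06⟩, ⟨h12, h13, h14, h15, h16⟩,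
    ⟨h23, h24, h25, h26⟩, ⟨h34, h35, h36⟩, ⟨h45, h46⟩, h56⟩ := hnd
  have hn2 : 2 ≤ t - 1 := by omega
  have hcyc' : ∀ (v : V) (c : G.Walk v v), c.IsCycle →
      ¬(8 ≤ c.length ∧ c.length ≤ 2 * (t - 1) + 4 ∧ Even c.length) := by
    intro v c hc ⟨hl1, hl2, hl3⟩
    exact hcyc v c hc ⟨hl1, by omega, hl3⟩
  -- the middle path v₀v₁v₂v₃v₄
  have hwa := key_common_neighbor (G := G) (x := x) hn2 h04 h0 h4
    (Walk.cons a01 (Walk.cons a12 (Walk.cons a23 (Walk.cons a34 Walk.nil)))) ?_ (by simp) ?_ hcyc'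
  rotate_left
  · rw [Walk.isPath_def]
    simp only [Walk.support_cons, Walk.support_nil, List.nodup_cons, List.mem_cons,
      List.mem_singleton, List.not_mem_nil, or_false, not_or, List.nodup_nil, and_true]
    tauto
  · intro z hz
    simp only [Walk.support_cons, Walk.support_nil, List.mem_cons, List.mem_singleton,
      List.not_mem_nil, or_false] at hz
    rcases hz with rfl | rfl | rfl | rfl | rfl
    · omega
    · rcases h1 with h1 | h1 <;> omega
    · omega
    · rcases h3 with h3 | h3 <;> omega
    · omega
  -- the middle path v₂v₃v₄v₅v₆
  have hwb := key_common_neighbor (G := G) (x := x) hn2 h26 h2 h6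
    (Walk.cons a23 (Walk.cons a34 (Walk.cons a45 (Walk.cons a56 Walk.nil)))) ?_ (by simp) ?_ hcyc'
  rotate_left
  · rw [Walk.isPath_def]
    simp only [Walk.support_cons, Walk.support_nil, List.nodup_cons, List.mem_cons,
      List.mem_singleton, List.not_mem_nil, or_false, not_or, List.nodup_nil, and_true]
    tauto
  · intro z hz
    simp only [Walk.support_cons, Walk.support_nil, List.mem_cons, List.mem_singleton,
      List.not_mem_nil, or_false] at hz
    rcases hz with rfl | rfl | rfl | rfl | rfl
    · omega
    · rcases h3 with h3 | h3 <;> omega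
    · omega
    · rcases h5 with h5 | h5 <;> omega
    · omega
  obtain ⟨wa, hda, haa0, haa4⟩ := hwa
  obtain ⟨wb, hdb, hbb2, hbb6⟩ := hwb
  -- wa, wb are at distance t-2 < t-1, hence distinct from all the vᵢ
  have hwa0 : wa ≠ v₀ := fun h => by rw [h, h0] at hda; omega
  have hwa1 : wa ≠ v₁ := fun h => by rw [h] at hda; rcases h1 with h1 | h1 <;> omega
  have hwa2 : wa ≠ v₂ := fun h => by rw [h, h2] at hda; omega
  have hwa3 : wa ≠ v₃ := fun h => by rw [h] at hda; rcases h3 with h3 | h3 <;> omega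
  have hwa4 : wa ≠ v₄ := fun h => by rw [h, h4] at hda; omega
  have hwa5 : wa ≠ v₅ := fun h => by rw [h] at hda; rcases h5 with h5 | h5 <;> omega
  have hwa6 : wa ≠ v₆ := fun h => by rw [h, h6] at hda; omega
  have hwb0 : wb ≠ v₀ := fun h => by rw [h, h0] at hdb; omega
  have hwb1 : wb ≠ v₁ := fun h => by rw [h] at hdb; rcases h1 with h1 | h1 <;> omega
  have hwb2 : wb ≠ v₂ := fun h => by rw [h, h2] at hdb; omega
  have hwb4 : wb ≠ v₄ := fun h => by rw [h, h4] at hdb; omega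
  have hwb5 : wb ≠ v₅ := fun h => by rw [h] at hdb; rcases h5 with h5 | h5 <;> omega
  have hwb6 : wb ≠ v₆ := fun h => by rw [h, h6] at hdb; omega
  by_cases hww : wa = wb
  · -- 8-cycle wa v₀ v₁ v₂ v₃ v₄ v₅ v₆ wa
    subst hww
    have hav6 : G.Adj wa v₆ := hbb6
    set p : G.Walk wa v₆ := Walk.cons haa0 (Walk.cons a01 (Walk.cons a12 (Walk.cons a23
      (Walk.cons a34 (Walk.cons a45 (Walk.cons a56 Walk.nil)))))) with hpdef
    set q : G.Walk wa v₆ := Walk.cons hav6 Walk.nil with hqdef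
    have hpPath : p.IsPath := by
      rw [Walk.isPath_def, hpdef]
      simp only [Walk.support_cons, Walk.support_nil, List.nodup_cons, List.mem_cons,
        List.mem_singleton, List.not_mem_nil, or_false, not_or, List.nodup_nil, and_true]
      tauto
    have hqPath : q.IsPath := by
      rw [Walk.isPath_def, hqdef]
      simp [hwa6]
    have hC := cycle_of_two_paths hpPath hqPath hwa6 (by rw [hpdef]; simp) ?_
    · have hClen : (p.append q.reverse).length = 8 := by
        rw [Walk.length_append, Walk.length_reverse, hpdef, hqdef]; simp
      have := hcyc wa (p.append q.reverse) hC
      rw [hClen] at this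
      exact this ⟨by omega, by omega, ⟨4, by omega⟩⟩
    · intro z hz1 hz2
      rw [hqdef] at hz2
      simp only [Walk.support_cons, Walk.support_nil, List.mem_cons, List.mem_singleton,
        List.not_mem_nil, or_false] at hz2
      tauto
  · -- 8-cycle wa v₀ v₁ v₂ wb v₆ v₅ v₄ wa
    set p : G.Walk wa wb := Walk.cons haa0 (Walk.cons a01 (Walk.cons a12
      (Walk.cons hbb2.symm Walk.nil))) with hpdef
    set q : G.Walk wa wb := Walk.cons haa4 (Walk.cons a45 (Walk.cons a56
      (Walk.cons hbb6.symm Walk.nil))) with hqdef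
    have hpPath : p.IsPath := by
      rw [Walk.isPath_def, hpdef]
      simp only [Walk.support_cons, Walk.support_nil, List.nodup_cons, List.mem_cons,
        List.mem_singleton, List.not_mem_nil, or_false, not_or, List.nodup_nil,
        not_false_eq_true, and_true]
      exact ⟨⟨hwa0, hwa1, hwa2, hww⟩, ⟨h01, h02, hwb0.symm⟩, ⟨h12, hwb1.symm⟩, hwb2.symm⟩
    have hqPath : q.IsPath := by
      rw [Walk.isPath_def, hqdef]
      simp only [Walk.support_cons, Walk.support_nil, List.nodup_cons, List.mem_cons,
        List.mem_singleton, List.not_mem_nil, or_false, not_or, List.nodup_nil,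
        not_false_eq_true, and_true]
      exact ⟨⟨hwa4, hwa5, hwa6, hww⟩, ⟨h45, h46, hwb4.symm⟩, ⟨h56.1, hwb5.symm⟩, hwb6.symm⟩
    have hC := cycle_of_two_paths hpPath hqPath hww (by rw [hpdef]; simp) ?_
    · have hClen : (p.append q.reverse).length = 8 := by
        rw [Walk.length_append, Walk.length_reverse, hpdef, hqdef]; simp
      have := hcyc wa (p.append q.reverse) hC
      rw [hClen] at this
      exact this ⟨by omega, by omega, ⟨4, by omega⟩⟩
    · intro z hz1 hz2
      rw [hpdef] at hz1
      rw [hqdef] at hz2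
      simp only [Walk.support_cons, Walk.support_nil, List.mem_cons, List.mem_singleton,
        List.not_mem_nil, or_false] at hz1 hz2
      rcases hz1 with rfl | rfl | rfl | rfl | rfl
      · exact Or.inl rfl
      · rcases hz2 with h | h | h | h | h
        exacts [absurd h (Ne.symm hwa0), absurd h h04, absurd h h05, absurd h h06,
          absurd h (Ne.symm hwb0)]
      · rcases hz2 with h | h | h | h | h
        exacts [absurd h (Ne.symm hwa1), absurd h h14, absurd h h15, absurd h h16,
          absurd h (Ne.symm hwb1)]
      · rcases hz2 with h | h | h | h | h
        exacts [absurd h (Ne.symm hwa2), absurd h h24, absurd h h25, absurd h h26,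
          absurd h (Ne.symm hwb2)]
      · exact Or.inr rfl
end

section
/- Let t ≥ 3 be an integer, let G be a finite simple graph containing no cycle whose length lies in {8, 10, 12, …, 2t+2}, and let x be a vertex of G. Then G contains no path v₀v₁v₂v₃v₄v₅v₆ of length 6 (seven distinct vertices, consecutive ones adjacent) such that v₀, v₂, v₄, v₆ are all at distance exactly t from x and each of v₁, v₃, v₅ is at distance exactly t or exactly t+1 from x. -/
open SimpleGraph

namespace NoSixPathAux

variable {V : Type} {G : SimpleGraph V} {x : V} {par : V → V} {t : ℕ}

lemma parent_exists {v : V} (hv : 0 < G.dist x v) :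
    ∃ u, G.Adj u v ∧ G.dist x u = G.dist x v - 1 := by
  have hr : G.Reachable x v := SimpleGraph.Reachable.of_dist_ne_zero (by omega)
  obtain ⟨p, hp⟩ := hr.exists_walk_length_eq_dist
  have hnn : ¬ p.reverse.Nil := by
    rw [SimpleGraph.Walk.not_nil_iff_lt_length, SimpleGraph.Walk.length_reverse, hp]
    omega
  obtain ⟨u, h, q, hq⟩ := SimpleGraph.Walk.not_nil_iff.mp hnn
  refine ⟨u, h.symm, ?_⟩
  have h1 : G.dist x u ≤ q.length := by
    have := SimpleGraph.dist_le q.reverse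
    rwa [SimpleGraph.Walk.length_reverse] at this
  have hlen : q.length + 1 = G.dist x v := by
    have : p.reverse.length = p.length := SimpleGraph.Walk.length_reverse _
    rw [hq] at this
    simpa [hp] using this
  have hru : G.Reachable x u := SimpleGraph.Walk.reachable q.reverse
  obtain ⟨r, hr2⟩ := hru.exists_walk_length_eq_dist
  have h2 : G.dist x v ≤ G.dist x u + 1 := by
    have := SimpleGraph.dist_le (r.concat h.symm)
    rwa [SimpleGraph.Walk.length_concat, hr2] at this
  omega

lemma anc_dist (hd : ∀ v, 0 < G.dist x v → G.dist x (par v) = G.dist x v - 1)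
    (v : V) : ∀ k, k ≤ G.dist x v → G.dist x (par^[k] v) = G.dist x v - k := by
  intro k
  induction k with
  | zero => simp
  | succ k ih =>
    intro hk
    have h1 : G.dist x (par^[k] v) = G.dist x v - k := ih (by omega)
    rw [Function.iterate_succ_apply', hd _ (by rw [h1]; omega), h1]
    omega

lemma anc_reachable (ha : ∀ v, 0 < G.dist x v → G.Adj (par v) v)
    (hd : ∀ v, 0 < G.dist x v → G.dist x (par v) = G.dist x v - 1)
    (v : V) (hv : 0 < G.dist x v) : ∀ k, k ≤ G.dist x v → G.Reachable x (par^[k] v) := by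
  intro k
  induction k with
  | zero => simpa using SimpleGraph.Reachable.of_dist_ne_zero (by omega)
  | succ k ih =>
    intro hk
    have hpos : 0 < G.dist x (par^[k] v) := by
      rw [anc_dist hd v k (by omega)]; omega
    rw [Function.iterate_succ_apply']
    exact (ih (by omega)).trans (ha _ hpos).reachable.symm

lemma anc_top (ha : ∀ v, 0 < G.dist x v → G.Adj (par v) v)
    (hd : ∀ v, 0 < G.dist x v → G.dist x (par v) = G.dist x v - 1)
    (v : V) (hv : 0 < G.dist x v) : par^[G.dist x v] v = x := by
  have h0 : G.dist x (par^[G.dist x v] v) = 0 := by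
    rw [anc_dist hd v _ le_rfl]; omega
  have hr := anc_reachable ha hd v hv (G.dist x v) le_rfl
  rcases SimpleGraph.dist_eq_zero_iff_eq_or_not_reachable.mp h0 with h | h
  · exact h.symm
  · exact absurd hr h

lemma tree_walk (ha : ∀ v, 0 < G.dist x v → G.Adj (par v) v)
    (hd : ∀ v, 0 < G.dist x v → G.dist x (par v) = G.dist x v - 1)
    (v : V) : ∀ k, k ≤ G.dist x v →
    ∃ p : G.Walk (par^[k] v) v, p.length = k ∧
      p.support = (List.range (k + 1)).map (fun i => par^[k - i] v) := by
  intro k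
  induction k with
  | zero => exact fun _ => ⟨SimpleGraph.Walk.nil, rfl, by simp⟩
  | succ k ih =>
    intro hk
    obtain ⟨p, hl, hs⟩ := ih (by omega)
    have hadj : G.Adj (par^[k + 1] v) (par^[k] v) := by
      rw [Function.iterate_succ_apply']
      exact ha _ (by rw [anc_dist hd v k (by omega)]; omega)
    refine ⟨SimpleGraph.Walk.cons hadj p, by rw [SimpleGraph.Walk.length_cons, hl], ?_⟩
    rw [SimpleGraph.Walk.support_cons, hs]
    conv_rhs => rw [List.range_succ_eq_map, List.map_cons, List.map_map]
    congr 1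
    refine List.map_congr_left fun i _ => ?_
    simp [Function.comp_def, Nat.succ_sub_succ]


lemma lift_eq {v w : V} {n : ℕ} (s : ℕ) (h : par^[n] v = par^[n] w) :
    par^[s + n] v = par^[s + n] w := by
  rw [Function.iterate_add_apply, Function.iterate_add_apply, h]

lemma meet_cycle (ha : ∀ v, 0 < G.dist x v → G.Adj (par v) v)
    (hd : ∀ v, 0 < G.dist x v → G.dist x (par v) = G.dist x v - 1)
    (hcyc : ∀ (z : V) (c : G.Walk z z), c.IsCycle →
      ¬(8 ≤ c.length ∧ c.length ≤ 2 * t + 2 ∧ Even c.length))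
    {v w : V} (hv : G.dist x v = t) (hw : G.dist x w = t)
    {k : ℕ} (hk1 : 1 ≤ k) (hkt : k ≤ t)
    (heq : par^[k] v = par^[k] w) (hne : par^[k - 1] v ≠ par^[k - 1] w)
    (Q : G.Walk v w) (hQ : Q.IsPath) (hQs : ∀ u ∈ Q.support, t ≤ G.dist x u)
    (hQe : Even Q.length) :
    ¬(8 ≤ 2 * k + Q.length ∧ 2 * k + Q.length ≤ 2 * t + 2) := by
  intro hcon
  obtain ⟨p1, hp1l, hp1s⟩ := tree_walk ha hd v (k - 1) (by omega)
  obtain ⟨p3, hp3l, hp3s⟩ := tree_walk ha hd w k (by omega)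
  have dav : ∀ i ≤ k, G.dist x (par^[i] v) = t - i := fun i hi => by
    rw [anc_dist hd v i (by omega), hv]
  have daw : ∀ i ≤ k, G.dist x (par^[i] w) = t - i := fun i hi => by
    rw [anc_dist hd w i (by omega), hw]
  let R : G.Walk w (par^[k] v) := (p3.reverse).copy rfl heq.symm
  let P : G.Walk (par^[k - 1] v) (par^[k] v) := p1.append (Q.append R)
  have hadj : G.Adj (par^[k] v) (par^[k - 1] v) := by
    have hk' : k = (k - 1) + 1 := by omega
    rw [hk', Function.iterate_succ_apply']
    exact ha _ (by rw [dav (k - 1) (by omega)]; omega)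
  have hmem1 : ∀ u ∈ p1.support, ∃ i, i ≤ k - 1 ∧ u = par^[i] v := by
    rw [hp1s]
    simp only [List.mem_map, List.mem_range]
    rintro u ⟨i, hi, rfl⟩
    exact ⟨k - 1 - i, by omega, rfl⟩
  have hmem3 : ∀ u ∈ p3.support, ∃ i, i ≤ k ∧ u = par^[i] w := by
    rw [hp3s]
    simp only [List.mem_map, List.mem_range]
    rintro u ⟨i, hi, rfl⟩
    exact ⟨k - i, by omega, rfl⟩
  have hrt : p3.support.reverse.tail
      = ((List.range k).map (fun i => par^[k - i] w)).reverse := by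
    rw [hp3s, List.range_succ, List.map_append, List.reverse_append]
    simp
  have hmemC : ∀ u ∈ p3.support.reverse.tail, ∃ i, 1 ≤ i ∧ i ≤ k ∧ u = par^[i] w := by
    rw [hrt]
    simp only [List.mem_reverse, List.mem_map, List.mem_range]
    rintro u ⟨i, hi, rfl⟩
    exact ⟨k - i, by omega, by omega, rfl⟩
  have hPsup : P.support = p1.support ++ (Q.support.tail ++ p3.support.reverse.tail) := by
    show (p1.append (Q.append R)).support = _
    rw [SimpleGraph.Walk.support_append, SimpleGraph.Walk.tail_support_append]
    congr 2
    show R.support.tail = _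
    rw [SimpleGraph.Walk.support_copy, SimpleGraph.Walk.support_reverse]
  have hQnd := hQ.support_nodup
  have hQcons : Q.support = v :: Q.support.tail := Q.support_eq_cons
  have hvtail : v ∉ Q.support.tail := by
    rw [hQcons] at hQnd
    exact (List.nodup_cons.mp hQnd).1
  have nd1 : p1.support.Nodup := by
    rw [hp1s]
    refine List.Nodup.map_on ?_ List.nodup_range
    intro a ha' b hb' hab
    rw [List.mem_range] at ha' hb'
    have h2 := congrArg (G.dist x) hab
    rw [dav _ (by omega), dav _ (by omega)] at h2
    omega
  have nd2 : Q.support.tail.Nodup := by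
    rw [hQcons] at hQnd
    exact (List.nodup_cons.mp hQnd).2
  have ndC : p3.support.reverse.tail.Nodup := by
    rw [hrt, List.nodup_reverse]
    refine List.Nodup.map_on ?_ List.nodup_range
    intro a ha' b hb' hab
    rw [List.mem_range] at ha' hb'
    have h2 := congrArg (G.dist x) hab
    rw [daw _ (by omega), daw _ (by omega)] at h2
    omega
  have hPpath : P.IsPath := by
    rw [SimpleGraph.Walk.isPath_def, hPsup, List.nodup_append, List.nodup_append]
    refine ⟨nd1, ⟨nd2, ndC, ?_⟩, ?_⟩
    · intro u hu u' huC hEqC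
      rw [← hEqC] at huC
      have h1 : t ≤ G.dist x u := hQs u (by rw [hQcons]; exact List.mem_cons_of_mem _ hu)
      obtain ⟨i, hi1, hik, rfl⟩ := hmemC u huC
      rw [daw i hik] at h1
      omega
    · intro u hu u' hu2 hEq2
      rw [← hEq2] at hu2
      obtain ⟨i, hik, rfl⟩ := hmem1 u hu
      rcases List.mem_append.mp hu2 with hB | hC
      · have h1 : t ≤ G.dist x (par^[i] v) :=
          hQs _ (by rw [hQcons]; exact List.mem_cons_of_mem _ hB)
        rw [dav i (by omega)] at h1
        have hi0 : i = 0 := by omega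
        subst hi0
        exact hvtail (by simpa using hB)
      · obtain ⟨j, hj1, hjk, hEq⟩ := hmemC _ hC
        have hdd := congrArg (G.dist x) hEq
        rw [dav i (by omega), daw j hjk] at hdd
        have hij : i = j := by omega
        subst hij
        have h3 : par^[k - 1] v = par^[k - 1] w := by
          have h1 := lift_eq (par := par) (k - 1 - i) hEq
          rwa [(by omega : k - 1 - i + i = k - 1)] at h1
        exact hne h3
  have hEdge : s(par^[k] v, par^[k - 1] v) ∉ P.edges := by
    intro hE
    have hPe : P.edges = p1.edges ++ (Q.edges ++ R.edges) := by
      show (p1.append (Q.append R)).edges = _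
      rw [SimpleGraph.Walk.edges_append, SimpleGraph.Walk.edges_append]
    rw [hPe, List.mem_append, List.mem_append] at hE
    rcases hE with h1 | h2 | h3
    · have hmem := SimpleGraph.Walk.fst_mem_support_of_mem_edges _ h1
      obtain ⟨i, hik, hEq⟩ := hmem1 _ hmem
      have hdd := congrArg (G.dist x) hEq
      rw [dav k le_rfl, dav i (by omega)] at hdd
      omega
    · have hmem := SimpleGraph.Walk.fst_mem_support_of_mem_edges _ h2
      have h1 := hQs _ hmem
      rw [dav k le_rfl] at h1
      omega
    · have hRe : R.edges = p3.edges.reverse := by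
        show ((p3.reverse).copy rfl heq.symm).edges = _
        rw [SimpleGraph.Walk.edges_copy, SimpleGraph.Walk.edges_reverse]
      rw [hRe, List.mem_reverse] at h3
      have hmem := SimpleGraph.Walk.snd_mem_support_of_mem_edges _ h3
      obtain ⟨i, hik, hEq⟩ := hmem3 _ hmem
      have hdd := congrArg (G.dist x) hEq
      rw [dav (k - 1) (by omega), daw i hik] at hdd
      have hik1 : i = k - 1 := by omega
      subst hik1
      exact hne hEq
  have hCcyc : (SimpleGraph.Walk.cons hadj P).IsCycle :=
    (SimpleGraph.Walk.cons_isCycle_iff P hadj).mpr ⟨hPpath, hEdge⟩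
  have hClen : (SimpleGraph.Walk.cons hadj P).length = 2 * k + Q.length := by
    have hRlen : R.length = k := by
      show ((p3.reverse).copy rfl heq.symm).length = k
      rw [SimpleGraph.Walk.length_copy, SimpleGraph.Walk.length_reverse, hp3l]
    have hPlen : P.length = (k - 1) + (Q.length + k) := by
      show (p1.append (Q.append R)).length = _
      rw [SimpleGraph.Walk.length_append, SimpleGraph.Walk.length_append, hp1l, hRlen]
    rw [SimpleGraph.Walk.length_cons, hPlen]
    omega
  refine hcyc _ _ hCcyc ⟨?_, ?_, ?_⟩
  · rw [hClen]; exact hcon.1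
  · rw [hClen]; exact hcon.2
  · rw [hClen]
    exact Even.add (⟨k, two_mul k⟩ : Even (2 * k)) hQe


lemma meet (ha : ∀ v, 0 < G.dist x v → G.Adj (par v) v)
    (hd : ∀ v, 0 < G.dist x v → G.dist x (par v) = G.dist x v - 1)
    (hcyc : ∀ (z : V) (c : G.Walk z z), c.IsCycle →
      ¬(8 ≤ c.length ∧ c.length ≤ 2 * t + 2 ∧ Even c.length))
    {v w : V} (hv : G.dist x v = t) (hw : G.dist x w = t) (hvw : v ≠ w) (ht0 : 0 < t)
    (Q : G.Walk v w) (hQ : Q.IsPath) (hQs : ∀ u ∈ Q.support, t ≤ G.dist x u)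
    (L : ℕ) (hQl : Q.length = L) (hLe : Even L) :
    ∃ m, m ≤ t - 1 ∧ par^[t - m] v = par^[t - m] w ∧
      (∀ j, m < j → j ≤ t → par^[t - j] v ≠ par^[t - j] w) ∧
      ¬(8 ≤ 2 * (t - m) + L ∧ 2 * (t - m) + L ≤ 2 * t + 2) := by
  classical
  have h0 : par^[t - 0] v = par^[t - 0] w := by
    rw [Nat.sub_zero]
    have h1 : par^[t] v = x := by rw [← hv]; exact anc_top ha hd v (by omega)
    have h2 : par^[t] w = x := by rw [← hw]; exact anc_top ha hd w (by omega)
    rw [h1, h2]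
  have hnt : ¬ (par^[t - t] v = par^[t - t] w) := by
    rw [Nat.sub_self]
    simpa using hvw
  set m := Nat.findGreatest (fun j => par^[t - j] v = par^[t - j] w) t with hmdef
  have hm : par^[t - m] v = par^[t - m] w :=
    Nat.findGreatest_spec (P := fun j => par^[t - j] v = par^[t - j] w) (Nat.zero_le t) h0
  have hmt : m ≤ t := Nat.findGreatest_le t
  have hmax : ∀ j, m < j → j ≤ t → ¬ (par^[t - j] v = par^[t - j] w) := fun j h1 h2 =>
    Nat.findGreatest_is_greatest (P := fun j => par^[t - j] v = par^[t - j] w) h1 h2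
  have hmlt : m ≤ t - 1 := by
    rcases Nat.lt_or_ge m t with h | h
    · omega
    · exact absurd (by rw [(by omega : m = t)] at hm; exact hm) hnt
  have hne : par^[t - m - 1] v ≠ par^[t - m - 1] w := by
    have h1 := hmax (m + 1) (by omega) (by omega)
    rwa [(by omega : t - (m + 1) = t - m - 1)] at h1
  have hc := meet_cycle ha hd hcyc hv hw (k := t - m) (by omega) (by omega) hm
    (by rwa [(by omega : t - m - 1 = t - m - 1)]) Q hQ hQs (hQl ▸ hLe)
  exact ⟨m, hmlt, hm, hmax, by rw [← hQl]; exact hc⟩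

end NoSixPathAux

set_option maxHeartbeats 2000000 in
/-- Claim 2: if `t ≥ 3` and `G` has no cycle of length in `{8, 10, ..., 2t+2}`, then `G`
contains no path `v₀v₁v₂v₃v₄v₅v₆` with `v₀, v₂, v₄, v₆` at distance exactly `t` from `x`
and `v₁, v₃, v₅` at distance exactly `t` or `t+1` from `x`. -/
theorem no_sixpath_at_level_t
    (t : ℕ) (ht : 3 ≤ t) (V : Type) [Fintype V] (G : SimpleGraph V)
    (hcyc : ∀ (v : V) (w : G.Walk v v), w.IsCycle →
      ¬(8 ≤ w.length ∧ w.length ≤ 2 * t + 2 ∧ Even w.length))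
    (x : V) :
    ¬ ∃ v₀ v₁ v₂ v₃ v₄ v₅ v₆ : V,
      ([v₀, v₁, v₂, v₃, v₄, v₅, v₆] : List V).Nodup ∧
      G.Adj v₀ v₁ ∧ G.Adj v₁ v₂ ∧ G.Adj v₂ v₃ ∧ G.Adj v₃ v₄ ∧ G.Adj v₄ v₅ ∧ G.Adj v₅ v₆ ∧
      G.dist x v₀ = t ∧ G.dist x v₂ = t ∧ G.dist x v₄ = t ∧ G.dist x v₆ = t ∧
      (G.dist x v₁ = t ∨ G.dist x v₁ = t + 1) ∧
      (G.dist x v₃ = t ∨ G.dist x v₃ = t + 1) ∧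
      (G.dist x v₅ = t ∨ G.dist x v₅ = t + 1) := by
  rintro ⟨v0, v1, v2, v3, v4, v5, v6, hnd, h01, h12, h23, h34, h45, h56,
    hd0, hd2, hd4, hd6, hd1, hd3, hd5⟩
  simp only [List.nodup_cons, List.mem_cons, List.not_mem_nil, or_false, not_or,
    List.nodup_nil, and_true, not_false_eq_true] at hnd
  obtain ⟨⟨n01, n02, n03, n04, n05, n06⟩, ⟨n12, n13, n14, n15, n16⟩,
    ⟨n23, n24, n25, n26⟩, ⟨n34, n35, n36⟩, ⟨n45, n46⟩, n56⟩ := hnd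
  have ht0 : 0 < t := by omega
  have hpar : ∃ par : V → V, ∀ v, 0 < G.dist x v →
      G.Adj (par v) v ∧ G.dist x (par v) = G.dist x v - 1 := by
    have h : ∀ v : V, ∃ u : V, 0 < G.dist x v → G.Adj u v ∧ G.dist x u = G.dist x v - 1 := by
      intro v
      by_cases hv : 0 < G.dist x v
      · obtain ⟨u, h1, h2⟩ := NoSixPathAux.parent_exists hv
        exact ⟨u, fun _ => ⟨h1, h2⟩⟩
      · exact ⟨v, fun h => absurd h hv⟩
    choose par hp using h
    exact ⟨par, hp⟩
  obtain ⟨par, hpp⟩ := hpar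
  have ha : ∀ v, 0 < G.dist x v → G.Adj (par v) v := fun v h => (hpp v h).1
  have hd : ∀ v, 0 < G.dist x v → G.dist x (par v) = G.dist x v - 1 := fun v h => (hpp v h).2
  have g0 : t ≤ G.dist x v0 := by omega
  have g1 : t ≤ G.dist x v1 := by rcases hd1 with h | h <;> omega
  have g2 : t ≤ G.dist x v2 := by omega
  have g3 : t ≤ G.dist x v3 := by rcases hd3 with h | h <;> omega
  have g4 : t ≤ G.dist x v4 := by omega
  have g5 : t ≤ G.dist x v5 := by rcases hd5 with h | h <;> omega
  have g6 : t ≤ G.dist x v6 := by omega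
  obtain ⟨m02, hm02le, hm02eq, hm02max, hm02c⟩ :=
    NoSixPathAux.meet ha hd hcyc hd0 hd2 n02 ht0
      (SimpleGraph.Walk.cons h01 (SimpleGraph.Walk.cons h12 SimpleGraph.Walk.nil))
      (by rw [SimpleGraph.Walk.isPath_def]; simp [n01, n02, n12])
      (by intro u hu
          simp only [SimpleGraph.Walk.support_cons, SimpleGraph.Walk.support_nil,
            List.mem_cons, List.not_mem_nil, or_false, List.mem_singleton] at hu
          rcases hu with rfl | rfl | rfl <;> assumption)
      2 rfl (by decide)
  obtain ⟨m24, hm24le, hm24eq, hm24max, hm24c⟩ :=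
    NoSixPathAux.meet ha hd hcyc hd2 hd4 n24 ht0
      (SimpleGraph.Walk.cons h23 (SimpleGraph.Walk.cons h34 SimpleGraph.Walk.nil))
      (by rw [SimpleGraph.Walk.isPath_def]; simp [n23, n24, n34])
      (by intro u hu
          simp only [SimpleGraph.Walk.support_cons, SimpleGraph.Walk.support_nil,
            List.mem_cons, List.not_mem_nil, or_false, List.mem_singleton] at hu
          rcases hu with rfl | rfl | rfl <;> assumption)
      2 rfl (by decide)
  obtain ⟨m46, hm46le, hm46eq, hm46max, hm46c⟩ :=
    NoSixPathAux.meet ha hd hcyc hd4 hd6 n46 ht0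
      (SimpleGraph.Walk.cons h45 (SimpleGraph.Walk.cons h56 SimpleGraph.Walk.nil))
      (by rw [SimpleGraph.Walk.isPath_def]; simp [n45, n46, n56])
      (by intro u hu
          simp only [SimpleGraph.Walk.support_cons, SimpleGraph.Walk.support_nil,
            List.mem_cons, List.not_mem_nil, or_false, List.mem_singleton] at hu
          rcases hu with rfl | rfl | rfl <;> assumption)
      2 rfl (by decide)
  obtain ⟨m04, hm04le, hm04eq, hm04max, hm04c⟩ :=
    NoSixPathAux.meet ha hd hcyc hd0 hd4 n04 ht0
      (SimpleGraph.Walk.cons h01 (SimpleGraph.Walk.cons h12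
        (SimpleGraph.Walk.cons h23 (SimpleGraph.Walk.cons h34 SimpleGraph.Walk.nil))))
      (by rw [SimpleGraph.Walk.isPath_def]
          simp [n01, n02, n03, n04, n12, n13, n14, n23, n24, n34])
      (by intro u hu
          simp only [SimpleGraph.Walk.support_cons, SimpleGraph.Walk.support_nil,
            List.mem_cons, List.not_mem_nil, or_false, List.mem_singleton] at hu
          rcases hu with rfl | rfl | rfl | rfl | rfl <;> assumption)
      4 rfl (by decide)
  obtain ⟨m26, hm26le, hm26eq, hm26max, hm26c⟩ :=
    NoSixPathAux.meet ha hd hcyc hd2 hd6 n26 ht0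
      (SimpleGraph.Walk.cons h23 (SimpleGraph.Walk.cons h34
        (SimpleGraph.Walk.cons h45 (SimpleGraph.Walk.cons h56 SimpleGraph.Walk.nil))))
      (by rw [SimpleGraph.Walk.isPath_def]
          simp [n23, n24, n25, n26, n34, n35, n36, n45, n46, n56])
      (by intro u hu
          simp only [SimpleGraph.Walk.support_cons, SimpleGraph.Walk.support_nil,
            List.mem_cons, List.not_mem_nil, or_false, List.mem_singleton] at hu
          rcases hu with rfl | rfl | rfl | rfl | rfl <;> assumption)
      4 rfl (by decide)
  obtain ⟨m06, hm06le, hm06eq, hm06max, hm06c⟩ :=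
    NoSixPathAux.meet ha hd hcyc hd0 hd6 n06 ht0
      (SimpleGraph.Walk.cons h01 (SimpleGraph.Walk.cons h12 (SimpleGraph.Walk.cons h23
        (SimpleGraph.Walk.cons h34 (SimpleGraph.Walk.cons h45
        (SimpleGraph.Walk.cons h56 SimpleGraph.Walk.nil))))))
      (by rw [SimpleGraph.Walk.isPath_def]
          simp [n01, n02, n03, n04, n05, n06, n12, n13, n14, n15, n16,
            n23, n24, n25, n26, n34, n35, n36, n45, n46, n56])
      (by intro u hu
          simp only [SimpleGraph.Walk.support_cons, SimpleGraph.Walk.support_nil,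
            List.mem_cons, List.not_mem_nil, or_false, List.mem_singleton] at hu
          rcases hu with rfl | rfl | rfl | rfl | rfl | rfl | rfl <;> assumption)
      6 rfl (by decide)
  have k02 : t - 2 ≤ m02 := by clear * - ht hm02le hm02c; omega
  have k24 : t - 2 ≤ m24 := by clear * - ht hm24le hm24c; omega
  have k46 : t - 2 ≤ m46 := by clear * - ht hm46le hm46c; omega
  have ar02 : m02 - (t - 2) + (t - m02) = t - (t - 2) := by clear * - ht k02 hm02le; omega
  have ar24 : m24 - (t - 2) + (t - m24) = t - (t - 2) := by clear * - ht k24 hm24le; omega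
  have ar46 : m46 - (t - 2) + (t - m46) = t - (t - 2) := by clear * - ht k46 hm46le; omega
  have e02 : par^[t - (t - 2)] v0 = par^[t - (t - 2)] v2 := by
    have h1 := NoSixPathAux.lift_eq (par := par) (m02 - (t - 2)) hm02eq
    rwa [ar02] at h1
  have e24 : par^[t - (t - 2)] v2 = par^[t - (t - 2)] v4 := by
    have h1 := NoSixPathAux.lift_eq (par := par) (m24 - (t - 2)) hm24eq
    rwa [ar24] at h1
  have e46 : par^[t - (t - 2)] v4 = par^[t - (t - 2)] v6 := by
    have h1 := NoSixPathAux.lift_eq (par := par) (m46 - (t - 2)) hm46eq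
    rwa [ar46] at h1
  have hm04ge : t - 2 ≤ m04 := by
    by_contra hcc
    refine hm04max (t - 2) ?_ ?_ (e02.trans e24) <;> clear * - hcc ht <;> omega
  have hm26ge : t - 2 ≤ m26 := by
    by_contra hcc
    refine hm26max (t - 2) ?_ ?_ (e24.trans e46) <;> clear * - hcc ht <;> omega
  have hm04v : m04 = t - 1 := by clear * - ht hm04le hm04ge hm04c; omega
  have hm26v : m26 = t - 1 := by clear * - ht hm26le hm26ge hm26c; omega
  have hm06le1 : m06 ≤ 1 := by clear * - ht hm06le hm06c; omega
  have ar1 : t - (t - 1) = 1 := by clear * - ht; omega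
  have hbdef : par v0 = par v4 := by
    have h1 := hm04eq
    rw [hm04v, ar1] at h1
    simpa using h1
  have hcdef : par v2 = par v6 := by
    have h1 := hm26eq
    rw [hm26v, ar1] at h1
    simpa using h1
  have hbc : par v0 ≠ par v2 := by
    intro hEq
    have h6 : par^[t - (t - 1)] v0 = par^[t - (t - 1)] v6 := by
      rw [ar1]
      simp only [Function.iterate_one]
      rw [hEq, hcdef]
    refine hm06max (t - 1) ?_ ?_ h6 <;> clear * - ht hm06le1 <;> omega
  have pos0 : 0 < G.dist x v0 := by clear * - ht hd0; omega
  have pos2 : 0 < G.dist x v2 := by clear * - ht hd2; omega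
  have pos4 : 0 < G.dist x v4 := by clear * - ht hd4; omega
  have pos6 : 0 < G.dist x v6 := by clear * - ht hd6; omega
  have hdb : G.dist x (par v0) = t - 1 := by rw [hd v0 pos0, hd0]
  have hdc : G.dist x (par v2) = t - 1 := by rw [hd v2 pos2, hd2]
  have bne : ∀ u : V, t ≤ G.dist x u → par v0 ≠ u ∧ u ≠ par v0 := by
    intro u hu
    constructor
    · intro hEq
      rw [hEq] at hdb
      clear * - hu hdb ht; omega
    · intro hEq
      rw [← hEq] at hdb
      clear * - hu hdb ht; omega
  have cne : ∀ u : V, t ≤ G.dist x u → par v2 ≠ u ∧ u ≠ par v2 := by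
    intro u hu
    constructor
    · intro hEq
      rw [hEq] at hdc
      clear * - hu hdc ht; omega
    · intro hEq
      rw [← hEq] at hdc
      clear * - hu hdc ht; omega
  have Hb0 : G.Adj (par v0) v0 := ha v0 pos0
  have Hb4 : G.Adj (par v0) v4 := by rw [hbdef]; exact ha v4 pos4
  have Hc2 : G.Adj (par v2) v2 := ha v2 pos2
  have Hc6 : G.Adj (par v2) v6 := by rw [hcdef]; exact ha v6 pos6
  have B0 := bne v0 g0
  have B1 := bne v1 g1
  have B2 := bne v2 g2
  have B4 := bne v4 g4
  have B5 := bne v5 g5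
  have B6 := bne v6 g6
  have C0 := cne v0 g0
  have C1 := cne v1 g1
  have C2 := cne v2 g2
  have C4 := cne v4 g4
  have C5 := cne v5 g5
  have C6 := cne v6 g6
  have hp7 : (SimpleGraph.Walk.cons h01 (SimpleGraph.Walk.cons h12
      (SimpleGraph.Walk.cons Hc2.symm (SimpleGraph.Walk.cons Hc6
      (SimpleGraph.Walk.cons h56.symm (SimpleGraph.Walk.cons h45.symm
      (SimpleGraph.Walk.cons Hb4.symm SimpleGraph.Walk.nil))))))).IsPath := by
    rw [SimpleGraph.Walk.isPath_def]
    simp [n01, n02, n03, n04, n05, n06, n12, n13, n14, n15, n16, n23, n24, n25, n26,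
      n34, n35, n36, n45, n46, n56, Ne.symm n45, Ne.symm n46, Ne.symm n56,
      B0.1, B0.2, B1.1, B1.2, B2.1, B2.2, B4.1, B4.2, B5.1, B5.2, B6.1, B6.2,
      C0.1, C0.2, C1.1, C1.2, C2.1, C2.2, C4.1, C4.2, C5.1, C5.2, C6.1, C6.2,
      hbc, Ne.symm hbc]
  have hEdge : s(par v0, v0) ∉ (SimpleGraph.Walk.cons h01 (SimpleGraph.Walk.cons h12
      (SimpleGraph.Walk.cons Hc2.symm (SimpleGraph.Walk.cons Hc6
      (SimpleGraph.Walk.cons h56.symm (SimpleGraph.Walk.cons h45.symm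
      (SimpleGraph.Walk.cons Hb4.symm SimpleGraph.Walk.nil))))))).edges := by
    simp [Sym2.eq_iff, n01, n02, n03, n04, n05, n06, Ne.symm n01, Ne.symm n02,
      Ne.symm n04, Ne.symm n06,
      B0.1, B0.2, B1.1, B1.2, B2.1, B2.2, B4.1, B4.2, B5.1, B5.2, B6.1, B6.2,
      hbc, Ne.symm hbc]
  have hcycW := (SimpleGraph.Walk.cons_isCycle_iff _ Hb0).mpr ⟨hp7, hEdge⟩
  have hlen : (SimpleGraph.Walk.cons Hb0 (SimpleGraph.Walk.cons h01 (SimpleGraph.Walk.cons h12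
      (SimpleGraph.Walk.cons Hc2.symm (SimpleGraph.Walk.cons Hc6
      (SimpleGraph.Walk.cons h56.symm (SimpleGraph.Walk.cons h45.symm
      (SimpleGraph.Walk.cons Hb4.symm SimpleGraph.Walk.nil)))))))).length = 8 := rfl
  exact hcyc _ _ hcycW ⟨by rw [hlen], by rw [hlen]; omega, by rw [hlen]; decide⟩
end

section
/- Let t ≥ 3 be an integer, let G be a finite simple graph containing no cycle whose length lies in {8, 10, 12, …, 2t+2}, and let x be a vertex of G. Call a vertex u of G a bottleneck of type 1 if u is at distance exactly t from x and u has at least four neighbours at distance exactly t−1 from x. Then the number of bottlenecks of type 1 is at most 2·|A_{t−1}(x)|, twice the number of vertices at distance exactly t−1 from x. -/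
open SimpleGraph
namespace BottleneckAux
variable {V : Type} {G : SimpleGraph V} {x : V}

lemma exists_parent (G : SimpleGraph V) (x v : V) (h : 0 < G.dist x v) :
    ∃ p, G.Adj v p ∧ G.dist x p + 1 = G.dist x v := by
  have hr : G.Reachable x v := Reachable.of_dist_ne_zero h.ne'
  have hvx : x ≠ v := by rintro rfl; simp [SimpleGraph.dist_self] at h
  obtain ⟨w, hw⟩ := hr.exists_walk_length_eq_dist
  obtain ⟨b, hadj, q, hq⟩ := Walk.exists_eq_cons_of_ne (Ne.symm hvx) w.reverse
  have hlq : q.length + 1 = G.dist x v := by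
    have h2 := congrArg Walk.length hq
    rw [Walk.length_reverse, hw, Walk.length_cons] at h2
    omega
  refine ⟨b, hadj, ?_⟩
  have h1 : G.dist x b ≤ q.length := by
    have := SimpleGraph.dist_le q.reverse
    rwa [Walk.length_reverse] at this
  have h2 : G.dist x v ≤ G.dist x b + 1 := by
    have hrb : G.Reachable x b := ⟨q.reverse⟩
    obtain ⟨r, hr'⟩ := hrb.exists_walk_length_eq_dist
    have := SimpleGraph.dist_le (r.concat hadj.symm)
    rwa [Walk.length_concat, hr'] at this
  omega

lemma exists_parent' : True := trivial

lemma dist_iterate' (π : V → V) (hπd : ∀ v, 0 < G.dist x v → G.dist x (π v) + 1 = G.dist x v) :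
    ∀ (j : ℕ) (v : V), j ≤ G.dist x v → G.dist x (π^[j] v) + j = G.dist x v := by
  intro j
  induction j with
  | zero => simp
  | succ n ih =>
    intro v h
    rw [Function.iterate_succ_apply']
    have h1 := ih v (by omega)
    have h2 := hπd (π^[n] v) (by omega)
    omega

lemma reach_iterate' (π : V → V) (hπa : ∀ v, 0 < G.dist x v → G.Adj v (π v))
    (hπd : ∀ v, 0 < G.dist x v → G.dist x (π v) + 1 = G.dist x v) :
    ∀ (j : ℕ) (v : V), j ≤ G.dist x v → G.Reachable x v → G.Reachable x (π^[j] v) := by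
  intro j
  induction j with
  | zero => intro v _ hr; simpa using hr
  | succ n ih =>
    intro v h hr
    rw [Function.iterate_succ_apply']
    have h1 := dist_iterate' π hπd n v (by omega)
    exact (ih v (by omega) hr).trans (hπa (π^[n] v) (by omega)).reachable

noncomputable def descWalk' (π : V → V) (hπa : ∀ v, 0 < G.dist x v → G.Adj v (π v))
    (hπd : ∀ v, 0 < G.dist x v → G.dist x (π v) + 1 = G.dist x v) :
    (j : ℕ) → (v : V) → (h : j ≤ G.dist x v) → G.Walk v (π^[j] v)
  | 0, v, _ => Walk.nil.copy rfl (by simp)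
  | (n+1), v, h =>
    ((descWalk' π hπa hπd n v (by omega)).concat
      (hπa (π^[n] v) (by have := dist_iterate' π hπd n v (by omega); omega))).copy rfl
      (Function.iterate_succ_apply' π n v).symm

lemma descWalk_length' (π : V → V) (hπa : ∀ v, 0 < G.dist x v → G.Adj v (π v))
    (hπd : ∀ v, 0 < G.dist x v → G.dist x (π v) + 1 = G.dist x v)
    (j : ℕ) (v : V) (h : j ≤ G.dist x v) :
    (descWalk' π hπa hπd j v h).length = j := by
  induction j with
  | zero => simp [descWalk']
  | succ n ih => simp only [descWalk']; rw [Walk.length_copy, Walk.length_concat, ih]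

lemma descWalk_support' (π : V → V) (hπa : ∀ v, 0 < G.dist x v → G.Adj v (π v))
    (hπd : ∀ v, 0 < G.dist x v → G.dist x (π v) + 1 = G.dist x v)
    (j : ℕ) (v : V) (h : j ≤ G.dist x v) :
    (descWalk' π hπa hπd j v h).support = (List.range (j+1)).map (fun i => π^[i] v) := by
  induction j with
  | zero => simp [descWalk']
  | succ n ih =>
    simp only [descWalk', Walk.support_copy, Walk.support_concat, ih]
    rw [List.range_succ (n := n+1)]
    simp [Function.iterate_succ_apply']

lemma grandparent_eq (π : V → V)
    (hπa : ∀ v, 0 < G.dist x v → G.Adj v (π v))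
    (hπd : ∀ v, 0 < G.dist x v → G.dist x (π v) + 1 = G.dist x v)
    {t : ℕ} (ht : 3 ≤ t)
    (hcyc : ∀ (v : V) (w : G.Walk v v), w.IsCycle →
      ¬(8 ≤ w.length ∧ w.length ≤ 2 * t + 2 ∧ Even w.length))
    {u a a' : V} (hu : G.dist x u = t)
    (ha : G.dist x a = t - 1) (ha' : G.dist x a' = t - 1)
    (hadj : G.Adj u a) (hadj' : G.Adj u a') (hne : a ≠ a') :
    π (π a) = π (π a') := by
  classical
  by_contra hgg
  have hra : G.Reachable x a := Reachable.of_dist_ne_zero (by omega)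
  have hra' : G.Reachable x a' := Reachable.of_dist_ne_zero (by omega)
  have htop : π^[t-1] a = π^[t-1] a' := by
    have d1 := dist_iterate' π hπd (t-1) a (by omega)
    have d2 := dist_iterate' π hπd (t-1) a' (by omega)
    have r1 := reach_iterate' π hπa hπd (t-1) a (by omega) hra
    have r2 := reach_iterate' π hπa hπd (t-1) a' (by omega) hra'
    have e1 : x = π^[t-1] a := (r1.dist_eq_zero_iff).mp (by omega)
    have e2 : x = π^[t-1] a' := (r2.dist_eq_zero_iff).mp (by omega)
    rw [← e1, ← e2]
  have hex : ∃ i, π^[i] a = π^[i] a' := ⟨t-1, htop⟩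
  set m := Nat.find hex with hmdef
  have hm : π^[m] a = π^[m] a' := Nat.find_spec hex
  have hmin : ∀ i, i < m → π^[i] a ≠ π^[i] a' := fun i hi => Nat.find_min hex hi
  have hmle : m ≤ t - 1 := Nat.find_le htop
  have hm3 : 3 ≤ m := by
    by_contra hlt
    have h2a : π^[2] a = π (π a) := by
      rw [show (2:ℕ) = 1 + 1 from rfl, Function.iterate_succ_apply', Function.iterate_one]
    have h2a' : π^[2] a' = π (π a') := by
      rw [show (2:ℕ) = 1 + 1 from rfl, Function.iterate_succ_apply', Function.iterate_one]
    have hcases : m = 0 ∨ m = 1 ∨ m = 2 := by omega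
    rcases hcases with h | h | h
    · rw [h] at hm; simp at hm; exact hne hm
    · rw [h] at hm; simp at hm
      exact hgg (by rw [hm])
    · rw [h] at hm; rw [h2a, h2a'] at hm; exact hgg hm
  have hma : m ≤ G.dist x a := by omega
  have hma' : m ≤ G.dist x a' := by omega
  have hda : ∀ i, i ≤ t-1 → G.dist x (π^[i] a) = t-1-i := by
    intro i hi; have := dist_iterate' π hπd i a (by omega); omega
  have hda' : ∀ i, i ≤ t-1 → G.dist x (π^[i] a') = t-1-i := by
    intro i hi; have := dist_iterate' π hπd i a' (by omega); omega
  let p1 : G.Walk a (π^[m] a) := descWalk' π hπa hπd m a hma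
  let p2 : G.Walk a' (π^[m] a') := descWalk' π hπa hπd m a' hma'
  let pr : G.Walk (π^[m] a) a' := (p2.reverse).copy hm.symm rfl
  let P : G.Walk a a' := p1.append pr
  let Pfull : G.Walk a u := P.concat hadj'.symm
  let cyc : G.Walk u u := Walk.cons hadj Pfull
  have hPsup : P.support = ((List.range (m+1)).map (fun i => π^[i] a)) ++
      ((List.range m).map (fun i => π^[i] a')).reverse := by
    show (p1.append pr).support = _
    rw [Walk.support_append]
    rw [descWalk_support']
    congr 1
    show ((p2.reverse).copy _ rfl).support.tail = _
    rw [Walk.support_copy, Walk.support_reverse, descWalk_support']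
    rw [List.range_succ]
    simp
  have hmemP : ∀ z ∈ P.support, G.dist x z ≤ t - 1 := by
    intro z hz
    rw [hPsup] at hz
    simp only [List.mem_append, List.mem_reverse, List.mem_map, List.mem_range] at hz
    rcases hz with ⟨i, hi, rfl⟩ | ⟨i, hi, rfl⟩
    · rw [hda i (by omega)]; omega
    · rw [hda' i (by omega)]; omega
  have hnodup : Pfull.support.Nodup := by
    show ((P.concat hadj'.symm).support).Nodup
    rw [Walk.support_concat, List.nodup_append]
    refine ⟨?_, by simp, ?_⟩
    · rw [hPsup, List.nodup_append]
      refine ⟨?_, ?_, ?_⟩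
      · refine List.Nodup.map_on ?_ List.nodup_range
        intro i hi j hj hij
        rw [List.mem_range] at hi hj
        have e1 := hda i (by omega)
        have e2 := hda j (by omega)
        have : G.dist x (π^[i] a) = G.dist x (π^[j] a) := by rw [hij]
        omega
      · refine List.nodup_reverse.mpr (List.Nodup.map_on ?_ List.nodup_range)
        intro i hi j hj hij
        rw [List.mem_range] at hi hj
        have e1 := hda' i (by omega)
        have e2 := hda' j (by omega)
        have : G.dist x (π^[i] a') = G.dist x (π^[j] a') := by rw [hij]
        omega
      · intro z hz z' hz' hzz
        subst hzz
        simp only [List.mem_map, List.mem_range] at hz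
        simp only [List.mem_reverse, List.mem_map, List.mem_range] at hz'
        obtain ⟨i, hi, rfl⟩ := hz
        obtain ⟨j, hj, hij⟩ := hz'
        have e1 := hda i (by omega)
        have e2 := hda' j (by omega)
        have : G.dist x (π^[j] a') = G.dist x (π^[i] a) := by rw [hij]
        have hij' : i = j := by omega
        exact hmin j hj (by rw [← hij'] at hij ⊢; exact hij.symm)
    · intro z hz w hw
      simp only [List.mem_singleton] at hw
      subst hw
      rintro rfl
      have := hmemP _ hz
      omega
  have hedge : s(u, a) ∉ Pfull.edges := by
    show s(u,a) ∉ (P.concat hadj'.symm).edges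
    rw [Walk.edges_concat, List.concat_eq_append, List.mem_append]
    rintro (hmem | hmem)
    · have := Walk.fst_mem_support_of_mem_edges P hmem
      have := hmemP u this
      omega
    · simp only [List.mem_singleton, Sym2.eq, Sym2.rel_iff', Prod.mk.injEq, Prod.swap_prod_mk] at hmem
      rcases hmem with ⟨h1, h2⟩ | ⟨h1, h2⟩
      · rw [h1] at hu; omega
      · exact hne h2
  have hcycle : cyc.IsCycle :=
    (Walk.cons_isCycle_iff Pfull hadj).mpr ⟨(Walk.isPath_def _).mpr hnodup, hedge⟩
  have hlen : cyc.length = 2*m + 2 := by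
    show (Walk.cons hadj (P.concat hadj'.symm)).length = _
    rw [Walk.length_cons, Walk.length_concat]
    show (p1.append pr).length + 1 + 1 = _
    rw [Walk.length_append]
    show p1.length + ((p2.reverse).copy _ rfl).length + 1 + 1 = _
    rw [Walk.length_copy, Walk.length_reverse, descWalk_length', descWalk_length']
    omega
  exact hcyc u cyc hcycle ⟨by omega, by omega, ⟨m+1, by omega⟩⟩

lemma parent_eq (π : V → V)
    (hπa : ∀ v, 0 < G.dist x v → G.Adj v (π v))
    (hπd : ∀ v, 0 < G.dist x v → G.dist x (π v) + 1 = G.dist x v)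
    {t : ℕ} (ht : 3 ≤ t)
    (hcyc : ∀ (v : V) (w : G.Walk v v), w.IsCycle →
      ¬(8 ≤ w.length ∧ w.length ≤ 2 * t + 2 ∧ Even w.length))
    {u1 u2 a1 a2 a3 : V}
    (hu1 : G.dist x u1 = t) (hu2 : G.dist x u2 = t) (hu12 : u1 ≠ u2)
    (hd1 : G.dist x a1 = t - 1) (hd2 : G.dist x a2 = t - 1) (hd3 : G.dist x a3 = t - 1)
    (h11 : G.Adj u1 a1) (h12 : G.Adj u1 a2) (h22 : G.Adj u2 a2) (h23 : G.Adj u2 a3)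
    (h12' : a1 ≠ a2) (h13 : a1 ≠ a3) (h23' : a2 ≠ a3) :
    π a1 = π a3 := by
  classical
  by_contra hne
  have hg1 : π (π a1) = π (π a2) :=
    grandparent_eq π hπa hπd ht hcyc hu1 hd1 hd2 h11 h12 h12'
  have hg2 : π (π a2) = π (π a3) :=
    grandparent_eq π hπa hπd ht hcyc hu2 hd2 hd3 h22 h23 h23'
  have hg : π (π a1) = π (π a3) := hg1.trans hg2
  have hp1 : G.dist x (π a1) = t-2 := by have := hπd a1 (by omega); omega
  have hp3 : G.dist x (π a3) = t-2 := by have := hπd a3 (by omega); omega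
  have hc : G.dist x (π (π a1)) = t-3 := by have := hπd (π a1) (by omega); omega
  have NEQ : ∀ y z : V, G.dist x y ≠ G.dist x z → y ≠ z := fun y z h e => h (by rw [e])
  have A0 : G.Adj (π (π a1)) (π a1) := (hπa (π a1) (by omega)).symm
  have A1 : G.Adj (π a1) a1 := (hπa a1 (by omega)).symm
  have A2 : G.Adj a1 u1 := h11.symm
  have A4 : G.Adj a2 u2 := h22.symm
  have A6 : G.Adj a3 (π a3) := hπa a3 (by omega)
  have A7 : G.Adj (π a3) (π (π a1)) := by rw [hg]; exact hπa (π a3) (by omega)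
  let p : G.Walk (π a1) (π (π a1)) :=
    Walk.cons A1 (Walk.cons A2 (Walk.cons h12 (Walk.cons A4 (Walk.cons h23
      (Walk.cons A6 (Walk.cons A7 Walk.nil))))))
  have hnodup : p.support.Nodup := by
    show ((π a1) :: a1 :: u1 :: a2 :: u2 :: a3 :: (π a3) :: (π (π a1)) :: []).Nodup
    simp only [List.nodup_cons, List.mem_cons, List.not_mem_nil, or_false, List.nodup_nil,
      and_true]
    push_neg
    repeat' apply And.intro
    all_goals first
      | exact h12' | exact h13 | exact h23' | exact hu12 | exact hne
      | exact NEQ _ _ (by simp only [hc, hp1, hp3, hd1, hd2, hd3, hu1, hu2]; omega)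
      | exact not_false | exact trivial
  have hedge : s(π (π a1), π a1) ∉ p.edges := by
    show s(π (π a1), π a1) ∉ (Walk.cons A1 (Walk.cons A2 (Walk.cons h12 (Walk.cons A4
      (Walk.cons h23 (Walk.cons A6 (Walk.cons A7 Walk.nil))))))).edges
    intro h
    simp only [Walk.edges_cons, Walk.edges_nil, List.mem_cons, List.not_mem_nil,
      or_false] at h
    rcases h with h|h|h|h|h|h|h <;>
      rcases Sym2.eq_iff.mp h with ⟨h1,h2⟩|⟨h1,h2⟩ <;>
      first
        | exact hne h2.symm
        | exact hne h2
        | exact NEQ _ _ (by simp only [hc, hp1, hp3, hd1, hd2, hd3, hu1, hu2]; omega) h1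
        | exact NEQ _ _ (by simp only [hc, hp1, hp3, hd1, hd2, hd3, hu1, hu2]; omega) h2
  have hcycle : (Walk.cons A0 p).IsCycle :=
    (Walk.cons_isCycle_iff p A0).mpr ⟨(Walk.isPath_def _).mpr hnodup, hedge⟩
  have hlen : (Walk.cons A0 p).length = 8 := rfl
  exact hcyc _ _ hcycle (by rw [hlen]; exact ⟨by omega, by omega, by decide⟩)

lemma no_path3 (π : V → V)
    (hπa : ∀ v, 0 < G.dist x v → G.Adj v (π v))
    (hπd : ∀ v, 0 < G.dist x v → G.dist x (π v) + 1 = G.dist x v)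
    {t : ℕ} (ht : 3 ≤ t)
    (hcyc : ∀ (v : V) (w : G.Walk v v), w.IsCycle →
      ¬(8 ≤ w.length ∧ w.length ≤ 2 * t + 2 ∧ Even w.length))
    {u1 u2 u3 a1 a2 a3 a4 : V}
    (hu1 : G.dist x u1 = t) (hu2 : G.dist x u2 = t) (hu3 : G.dist x u3 = t)
    (hu12 : u1 ≠ u2) (hu13 : u1 ≠ u3) (hu23 : u2 ≠ u3)
    (hd1 : G.dist x a1 = t - 1) (hd2 : G.dist x a2 = t - 1)
    (hd3 : G.dist x a3 = t - 1) (hd4 : G.dist x a4 = t - 1)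
    (ha12 : a1 ≠ a2) (ha13 : a1 ≠ a3) (ha14 : a1 ≠ a4)
    (ha23 : a2 ≠ a3) (ha24 : a2 ≠ a4) (ha34 : a3 ≠ a4)
    (h11 : G.Adj u1 a1) (h12 : G.Adj u1 a2) (h22 : G.Adj u2 a2) (h23 : G.Adj u2 a3)
    (h33 : G.Adj u3 a3) (h34 : G.Adj u3 a4)
    (hpar : π a1 = π a4) : False := by
  classical
  have hp1 : G.dist x (π a1) = t-2 := by have := hπd a1 (by omega); omega
  have NEQ : ∀ y z : V, G.dist x y ≠ G.dist x z → y ≠ z := fun y z h e => h (by rw [e])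
  have A0 : G.Adj (π a1) a1 := (hπa a1 (by omega)).symm
  have A1 : G.Adj a1 u1 := h11.symm
  have A3 : G.Adj a2 u2 := h22.symm
  have A5 : G.Adj a3 u3 := h33.symm
  have A7 : G.Adj a4 (π a1) := by rw [hpar]; exact hπa a4 (by omega)
  let p : G.Walk a1 (π a1) :=
    Walk.cons A1 (Walk.cons h12 (Walk.cons A3 (Walk.cons h23 (Walk.cons A5
      (Walk.cons h34 (Walk.cons A7 Walk.nil))))))
  have hnodup : p.support.Nodup := by
    show (a1 :: u1 :: a2 :: u2 :: a3 :: u3 :: a4 :: (π a1) :: []).Nodup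
    simp only [List.nodup_cons, List.mem_cons, List.not_mem_nil, or_false, List.nodup_nil,
      and_true]
    push_neg
    repeat' apply And.intro
    all_goals first
      | exact ha12 | exact ha13 | exact ha14 | exact ha23 | exact ha24 | exact ha34
      | exact hu12 | exact hu13 | exact hu23
      | exact NEQ _ _ (by simp only [hp1, hd1, hd2, hd3, hd4, hu1, hu2, hu3]; omega)
      | exact not_false | exact trivial
  have hedge : s(π a1, a1) ∉ p.edges := by
    show s(π a1, a1) ∉ (Walk.cons A1 (Walk.cons h12 (Walk.cons A3 (Walk.cons h23
      (Walk.cons A5 (Walk.cons h34 (Walk.cons A7 Walk.nil))))))).edges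
    intro h
    simp only [Walk.edges_cons, Walk.edges_nil, List.mem_cons, List.not_mem_nil,
      or_false] at h
    rcases h with h|h|h|h|h|h|h <;>
      rcases Sym2.eq_iff.mp h with ⟨h1,h2⟩|⟨h1,h2⟩ <;>
      first
        | exact ha14 h2.symm
        | exact ha14 h2
        | exact NEQ _ _ (by simp only [hp1, hd1, hd2, hd3, hd4, hu1, hu2, hu3]; omega) h1
        | exact NEQ _ _ (by simp only [hp1, hd1, hd2, hd3, hd4, hu1, hu2, hu3]; omega) h2
  have hcycle : (Walk.cons A0 p).IsCycle :=
    (Walk.cons_isCycle_iff p A0).mpr ⟨(Walk.isPath_def _).mpr hnodup, hedge⟩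
  have hlen : (Walk.cons A0 p).length = 8 := rfl
  exact hcyc _ _ hcycle (by rw [hlen]; exact ⟨by omega, by omega, by decide⟩)

end BottleneckAux

set_option maxHeartbeats 2000000 in
open BottleneckAux in
/-- If `t ≥ 3` and `G` has no cycle of length in `{8, 10, ..., 2t+2}`, then the number of
bottlenecks of type 1 (vertices at distance exactly `t` from `x` with at least four
neighbours at distance exactly `t-1` from `x`) is at most twice the number of vertices at
distance exactly `t-1` from `x`. -/
theorem bottlenecks_type_one_bound
    (t : ℕ) (ht : 3 ≤ t) (V : Type) [Fintype V] (G : SimpleGraph V)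
    (hcyc : ∀ (v : V) (w : G.Walk v v), w.IsCycle →
      ¬(8 ≤ w.length ∧ w.length ≤ 2 * t + 2 ∧ Even w.length))
    (x : V) :
    {u : V | G.dist x u = t ∧ 4 ≤ {w : V | G.Adj u w ∧ G.dist x w = t - 1}.ncard}.ncard ≤
      2 * {v : V | G.dist x v = t - 1}.ncard := by
  classical
  have hpar : ∀ v : V, ∃ p : V, 0 < G.dist x v → (G.Adj v p ∧ G.dist x p + 1 = G.dist x v) := by
    intro v
    by_cases h : 0 < G.dist x v
    · obtain ⟨p, hp⟩ := exists_parent G x v h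
      exact ⟨p, fun _ => hp⟩
    · exact ⟨v, fun h' => absurd h' h⟩
  choose π hπ using hpar
  have hπa : ∀ v, 0 < G.dist x v → G.Adj v (π v) := fun v h => (hπ v h).1
  have hπd : ∀ v, 0 < G.dist x v → G.dist x (π v) + 1 = G.dist x v := fun v h => (hπ v h).2
  set Nf : V → Finset V := fun u => Set.toFinset {w | G.Adj u w ∧ G.dist x w = t - 1} with hNf
  have hNmem : ∀ u w, w ∈ Nf u ↔ (G.Adj u w ∧ G.dist x w = t - 1) := by
    intro u w; rw [hNf]; simp [Set.mem_toFinset]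
  have hNadj : ∀ u w, w ∈ Nf u → G.Adj u w := fun u w h => ((hNmem u w).1 h).1
  have hNd : ∀ u w, w ∈ Nf u → G.dist x w = t - 1 := fun u w h => ((hNmem u w).1 h).2
  set Bf : Finset V :=
    Set.toFinset {u : V | G.dist x u = t ∧
      4 ≤ Set.ncard {w | G.Adj u w ∧ G.dist x w = t - 1}} with hBf
  have hBmem : ∀ u, u ∈ Bf ↔ (G.dist x u = t ∧ 4 ≤ (Nf u).card) := by
    intro u
    rw [hBf, Set.mem_toFinset, Set.mem_setOf_eq, hNf]
    rw [Set.ncard_eq_toFinset_card']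
  -- Lemma K
  have lemK : ∀ u u1 u3 s1 s3 : V, u ∈ Bf → u1 ∈ Bf → u3 ∈ Bf → u ≠ u1 → u ≠ u3 → u1 ≠ u3 →
      s1 ∈ Nf u → s1 ∈ Nf u1 → s3 ∈ Nf u → s3 ∈ Nf u3 → s1 ≠ s3 → False := by
    intro u u1 u3 s1 s3 hu hu1 hu3 hne1 hne3 hne13 hs1u hs1u1 hs3u hs3u3 hs13
    obtain ⟨hud, hucard⟩ := (hBmem u).1 hu
    obtain ⟨hu1d, hu1card⟩ := (hBmem u1).1 hu1
    obtain ⟨hu3d, hu3card⟩ := (hBmem u3).1 hu3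
    have hb0 : ((Nf u) \ {s1, s3}).Nonempty := by
      rw [← Finset.card_pos]
      have h1 := Finset.card_le_card_sdiff_add_card (s := Nf u) (t := {s1, s3})
      have h2 : ({s1, s3} : Finset V).card ≤ 2 :=
        le_trans (Finset.card_insert_le _ _) (by simp)
      omega
    obtain ⟨b0, hb0mem⟩ := hb0
    have hb0N : b0 ∈ Nf u := (Finset.mem_sdiff.1 hb0mem).1
    have hb0s1 : b0 ≠ s1 := by
      have := (Finset.mem_sdiff.1 hb0mem).2; simp only [Finset.mem_insert,
        Finset.mem_singleton] at this; tauto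
    have hb0s3 : b0 ≠ s3 := by
      have := (Finset.mem_sdiff.1 hb0mem).2; simp only [Finset.mem_insert,
        Finset.mem_singleton] at this; tauto
    have claimI : ∀ a, a ∈ Nf u1 → a ≠ s1 → a ≠ b0 → π a = π b0 := by
      intro a ha has1 hab0
      exact parent_eq π hπa hπd ht hcyc hu1d hud hne1.symm
        (hNd _ _ ha) (hNd _ _ hs1u1) (hNd _ _ hb0N)
        (hNadj _ _ ha) (hNadj _ _ hs1u1) (hNadj _ _ hs1u) (hNadj _ _ hb0N)
        has1 hab0 hb0s1.symm
    have claimII : ∀ a, a ∈ Nf u3 → a ≠ s3 → a ≠ b0 → π a = π b0 := by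
      intro a ha has3 hab0
      exact parent_eq π hπa hπd ht hcyc hu3d hud hne3.symm
        (hNd _ _ ha) (hNd _ _ hs3u3) (hNd _ _ hb0N)
        (hNadj _ _ ha) (hNadj _ _ hs3u3) (hNadj _ _ hs3u) (hNadj _ _ hb0N)
        has3 hab0 hb0s3.symm
    have ha1ex : ((Nf u1) \ {s1, s3, b0}).Nonempty := by
      rw [← Finset.card_pos]
      have h1 := Finset.card_le_card_sdiff_add_card (s := Nf u1) (t := {s1, s3, b0})
      have h2 : ({s1, s3, b0} : Finset V).card ≤ 3 :=
        le_trans (Finset.card_insert_le _ _)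
          (by have := Finset.card_insert_le s3 ({b0} : Finset V); simp at this ⊢; omega)
      omega
    obtain ⟨a1, ha1mem⟩ := ha1ex
    have ha1N : a1 ∈ Nf u1 := (Finset.mem_sdiff.1 ha1mem).1
    have ha1ne : a1 ≠ s1 ∧ a1 ≠ s3 ∧ a1 ≠ b0 := by
      have := (Finset.mem_sdiff.1 ha1mem).2
      simp only [Finset.mem_insert, Finset.mem_singleton] at this; tauto
    by_cases hA : ((Nf u3) \ {s1, s3, b0, a1}).Nonempty
    · obtain ⟨a4, ha4mem⟩ := hA
      have ha4N : a4 ∈ Nf u3 := (Finset.mem_sdiff.1 ha4mem).1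
      have ha4ne : a4 ≠ s1 ∧ a4 ≠ s3 ∧ a4 ≠ b0 ∧ a4 ≠ a1 := by
        have := (Finset.mem_sdiff.1 ha4mem).2
        simp only [Finset.mem_insert, Finset.mem_singleton] at this; tauto
      have e1 : π a1 = π b0 := claimI a1 ha1N ha1ne.1 ha1ne.2.2
      have e4 : π a4 = π b0 := claimII a4 ha4N ha4ne.2.1 ha4ne.2.2.1
      exact no_path3 π hπa hπd ht hcyc hu1d hud hu3d hne1.symm hne13 hne3
        (hNd _ _ ha1N) (hNd _ _ hs1u) (hNd _ _ hs3u) (hNd _ _ ha4N)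
        ha1ne.1 ha1ne.2.1 ha4ne.2.2.2.symm hs13 ha4ne.1.symm ha4ne.2.1.symm
        (hNadj _ _ ha1N) (hNadj _ _ hs1u1) (hNadj _ _ hs1u) (hNadj _ _ hs3u)
        (hNadj _ _ hs3u3) (hNadj _ _ ha4N)
        (e1.trans e4.symm)
    · have hsub : Nf u3 ⊆ {s1, s3, b0, a1} := by
        intro z hz; by_contra hzc; exact hA ⟨z, Finset.mem_sdiff.2 ⟨hz, hzc⟩⟩
      have heq : Nf u3 = {s1, s3, b0, a1} := by
        refine Finset.eq_of_subset_of_card_le hsub ?_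
        have h2 : ({s1, s3, b0, a1} : Finset V).card ≤ 4 := by
          refine le_trans (Finset.card_insert_le _ _) ?_
          have h3 := Finset.card_insert_le s3 ({b0, a1} : Finset V)
          have h4 := Finset.card_insert_le b0 ({a1} : Finset V)
          simp at h3 h4 ⊢
          omega
        omega
      have hb0u3 : b0 ∈ Nf u3 := by rw [heq]; simp
      have ha1u3 : a1 ∈ Nf u3 := by rw [heq]; simp
      by_cases hB : ((Nf u1) \ {s1, s3, b0, a1}).Nonempty
      · obtain ⟨a1', hmem'⟩ := hB
        have ha1'N : a1' ∈ Nf u1 := (Finset.mem_sdiff.1 hmem').1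
        have ha1'ne : a1' ≠ s1 ∧ a1' ≠ s3 ∧ a1' ≠ b0 ∧ a1' ≠ a1 := by
          have := (Finset.mem_sdiff.1 hmem').2
          simp only [Finset.mem_insert, Finset.mem_singleton] at this; tauto
        have e1 : π a1' = π b0 := claimI a1' ha1'N ha1'ne.1 ha1'ne.2.2.1
        have e2 : π a1 = π b0 := claimII a1 ha1u3 ha1ne.2.1 ha1ne.2.2
        exact no_path3 π hπa hπd ht hcyc hu1d hud hu3d hne1.symm hne13 hne3
          (hNd _ _ ha1'N) (hNd _ _ hs1u) (hNd _ _ hs3u) (hNd _ _ ha1u3)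
          ha1'ne.1 ha1'ne.2.1 ha1'ne.2.2.2 hs13 ha1ne.1.symm ha1ne.2.1.symm
          (hNadj _ _ ha1'N) (hNadj _ _ hs1u1) (hNadj _ _ hs1u) (hNadj _ _ hs3u)
          (hNadj _ _ hs3u3) (hNadj _ _ ha1u3)
          (e1.trans e2.symm)
      · have hsub1 : Nf u1 ⊆ {s1, s3, b0, a1} := by
          intro z hz; by_contra hzc; exact hB ⟨z, Finset.mem_sdiff.2 ⟨hz, hzc⟩⟩
        have heq1 : Nf u1 = {s1, s3, b0, a1} := by
          refine Finset.eq_of_subset_of_card_le hsub1 ?_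
          have h2 : ({s1, s3, b0, a1} : Finset V).card ≤ 4 := by
            refine le_trans (Finset.card_insert_le _ _) ?_
            have h3 := Finset.card_insert_le s3 ({b0, a1} : Finset V)
            have h4 := Finset.card_insert_le b0 ({a1} : Finset V)
            simp at h3 h4 ⊢
            omega
          omega
        have hb0u1 : b0 ∈ Nf u1 := by rw [heq1]; simp
        have hpi : π a1 = π s3 :=
          parent_eq π hπa hπd ht hcyc hu1d hu3d hne13
            (hNd _ _ ha1N) (hNd _ _ hb0N) (hNd _ _ hs3u3)
            (hNadj _ _ ha1N) (hNadj _ _ hb0u1) (hNadj _ _ hb0u3) (hNadj _ _ hs3u3)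
            ha1ne.2.2 ha1ne.2.1 hb0s3
        exact no_path3 π hπa hπd ht hcyc hu1d hud hu3d hne1.symm hne13 hne3
          (hNd _ _ ha1N) (hNd _ _ hs1u) (hNd _ _ hb0N) (hNd _ _ hs3u3)
          ha1ne.1 ha1ne.2.2 ha1ne.2.1 hb0s1.symm hs13 hb0s3
          (hNadj _ _ ha1N) (hNadj _ _ hs1u1) (hNadj _ _ hs1u) (hNadj _ _ hb0N)
          (hNadj _ _ hb0u3) (hNadj _ _ hs3u3)
          hpi
  -- final counting
  set Sh : V → Finset V :=
    fun u => (Nf u).filter (fun a => ∃ u' ∈ Bf, u' ≠ u ∧ a ∈ Nf u') with hSh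
  set ψ : V → V := fun u =>
    if h : ((Nf u) \ Sh u).Nonempty then h.choose
    else if h2 : (Nf u).Nonempty then h2.choose else u with hψ
  have hψval1 : ∀ u, ∀ h : ((Nf u) \ Sh u).Nonempty, ψ u ∈ (Nf u) \ Sh u := by
    intro u h
    rw [hψ]
    simp only [dif_pos h]
    exact h.choose_spec
  have hψmem : ∀ u, u ∈ Bf → ψ u ∈ Nf u := by
    intro u hu
    by_cases h : ((Nf u) \ Sh u).Nonempty
    · exact (Finset.mem_sdiff.1 (hψval1 u h)).1
    · have h2 : (Nf u).Nonempty := by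
        rw [← Finset.card_pos]
        have := (hBmem u).1 hu
        omega
      rw [hψ]
      simp only [dif_neg h, dif_pos h2]
      exact h2.choose_spec
  have hfib : ∀ p : V, (Bf.filter (fun a => ψ a = p)).card ≤ 2 := by
    intro p
    by_contra hgt
    push_neg at hgt
    obtain ⟨v1, v2, v3, h1, h2, h3, h12, h13, h23⟩ := Finset.two_lt_card_iff.1 hgt
    obtain ⟨hb1, hψ1⟩ := Finset.mem_filter.1 h1
    obtain ⟨hb2, hψ2⟩ := Finset.mem_filter.1 h2
    obtain ⟨hb3, hψ3⟩ := Finset.mem_filter.1 h3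
    have hfull : ∀ v w, v ∈ Bf → w ∈ Bf → w ≠ v → ψ v = p → ψ w = p →
        ¬((Nf v) \ Sh v).Nonempty := by
      intro v w hv hw hwv hpv hpw hnon
      have hpNv : p ∈ Nf v := hpv ▸ hψmem v hv
      have hpNw : p ∈ Nf w := hpw ▸ hψmem w hw
      have hpsh : p ∈ Sh v := by
        rw [hSh]; exact Finset.mem_filter.2 ⟨hpNv, ⟨w, hw, hwv, hpNw⟩⟩
      have hv1 := hψval1 v hnon
      rw [hpv] at hv1
      exact (Finset.mem_sdiff.1 hv1).2 hpsh
    have hNsh : Nf v1 ⊆ Sh v1 := by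
      have hempty := hfull v1 v2 hb1 hb2 h12.symm hψ1 hψ2
      intro z hz; by_contra hzc; exact hempty ⟨z, Finset.mem_sdiff.2 ⟨hz, hzc⟩⟩
    have hane : ((Nf v1) \ {p}).Nonempty := by
      rw [← Finset.card_pos]
      have hc1 := Finset.card_le_card_sdiff_add_card (s := Nf v1) (t := {p})
      have := (hBmem v1).1 hb1
      simp only [Finset.card_singleton] at hc1
      omega
    obtain ⟨a, hamem⟩ := hane
    have haN : a ∈ Nf v1 := (Finset.mem_sdiff.1 hamem).1
    have hap : a ≠ p := by
      have := (Finset.mem_sdiff.1 hamem).2; simpa using this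
    have hash : a ∈ Sh v1 := hNsh haN
    obtain ⟨w, hwB, hwne, haw⟩ := (Finset.mem_filter.1 (by rw [hSh] at hash; exact hash)).2
    have hpv1 : p ∈ Nf v1 := hψ1 ▸ hψmem v1 hb1
    have hpv2 : p ∈ Nf v2 := hψ2 ▸ hψmem v2 hb2
    have hpv3 : p ∈ Nf v3 := hψ3 ▸ hψmem v3 hb3
    by_cases hw2 : w = v2
    · exact lemK v1 w v3 a p hb1 hwB hb3 hwne.symm h13 (by rw [hw2]; exact h23)
        haN haw hpv1 hpv3 hap
    · exact lemK v1 w v2 a p hb1 hwB hb2 hwne.symm h12 hw2 haN haw hpv1 hpv2 hap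
  rw [Set.ncard_eq_toFinset_card', Set.ncard_eq_toFinset_card']
  rw [← hBf]
  calc Bf.card ≤ 2 * (Set.toFinset {v : V | G.dist x v = t - 1}).card := by
        refine Finset.card_le_mul_card_image_of_maps_to (f := ψ) ?_ 2 (fun b _ => hfib b)
        intro u hu
        rw [Set.mem_toFinset, Set.mem_setOf_eq]
        exact hNd u (ψ u) (hψmem u hu)
    _ = 2 * (Set.toFinset {v : V | G.dist x v = t - 1}).card := rfl
end

section
/- Let t ≥ 3 be an integer, let G be a finite simple graph containing no cycle whose length lies in {8, 10, 12, …, 2t+2}, and let x be a vertex of G. Call an edge uv of G a bottleneck of type 2 if u is at distance exactly t from x, v is at distance exactly t+1 from x, and v has at least four neighbours at distance exactly t from x. Then the number of bottlenecks of type 2 is at most 2·|A_t(x)|, twice the number of vertices at distance exactly t from x. -/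
open SimpleGraph

namespace BottleneckAux

variable {V : Type}




def chainWalk (G : SimpleGraph V) (f : ℕ → V) :
    (n : ℕ) → (∀ i < n, G.Adj (f i) (f (i+1))) → G.Walk (f 0) (f n)
  | 0, _ => Walk.nil
  | (n+1), h => (chainWalk G f n (fun i hi => h i (by omega))).concat (h n (by omega))

lemma chainWalk_support (G : SimpleGraph V) (f : ℕ → V) (n : ℕ) (h) :
    (chainWalk G f n h).support = (List.range (n+1)).map f := by
  induction n with
  | zero => simp [chainWalk, List.range_succ]
  | succ n ih =>
    rw [chainWalk, Walk.support_concat, ih]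
    rw [List.range_succ (n := n+1)]
    simp

lemma chainWalk_length (G : SimpleGraph V) (f : ℕ → V) (n : ℕ) (h) :
    (chainWalk G f n h).length = n := by
  induction n with
  | zero => simp [chainWalk]
  | succ n ih => rw [chainWalk, Walk.length_concat, ih]

lemma chainWalk_edges (G : SimpleGraph V) (f : ℕ → V) (n : ℕ) (h) :
    (chainWalk G f n h).edges = (List.range n).map (fun i => s(f i, f (i+1))) := by
  induction n with
  | zero => simp [chainWalk]
  | succ n ih =>
    rw [chainWalk, Walk.edges_concat, ih]
    rw [List.range_succ (n := n)]
    simp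

lemma exists_cycle_fn (G : SimpleGraph V) (f : ℕ → V) (L : ℕ) (hL : 3 ≤ L)
    (hadj : ∀ i < L, G.Adj (f i) (f (i+1))) (hclose : f L = f 0)
    (hinj : ∀ i < L, ∀ j < L, f i = f j → i = j) :
    ∃ w : G.Walk (f 0) (f 0), w.IsCycle ∧ w.length = L := by
  have hadj' : ∀ i < L-1, G.Adj (f (i+1)) (f (i+1+1)) := fun i hi => hadj (i+1) (by omega)
  have hLL : L - 1 + 1 = L := by omega
  let P0 := chainWalk G (fun i => f (i+1)) (L-1) hadj'
  let P : G.Walk (f 1) (f 0) :=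
    P0.copy rfl (show f (L-1+1) = f 0 from by rw [hLL, hclose])
  have hsup : P.support = (List.range (L-1+1)).map (fun i => f (i+1)) := by
    simp only [P, P0, Walk.support_copy, chainWalk_support]
  rw [hLL] at hsup
  have hPpath : P.IsPath := by
    rw [Walk.isPath_def, hsup]
    refine List.Nodup.map_on ?_ (List.nodup_range : (List.range L).Nodup)
    intro a ha b hb hab
    simp only [List.mem_range] at ha hb
    rcases Nat.lt_or_ge (a+1) L with h1 | h1
    · rcases Nat.lt_or_ge (b+1) L with h2 | h2
      · exact Nat.succ_injective (hinj _ h1 _ h2 hab)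
      · have hb1 : b + 1 = L := by omega
        rw [hb1, hclose] at hab
        have := hinj _ h1 _ (by omega) hab
        omega
    · have ha1 : a + 1 = L := by omega
      rcases Nat.lt_or_ge (b+1) L with h2 | h2
      · rw [ha1, hclose] at hab
        have := hinj _ (by omega) _ h2 hab
        omega
      · omega
  have hedges : P.edges = (List.range (L-1)).map (fun i => s(f (i+1), f (i+1+1))) := by
    simp only [P, P0, Walk.edges_copy, chainWalk_edges]
  have hne : ¬ s(f 0, f 1) ∈ P.edges := by
    rw [hedges]
    intro hmem
    simp only [List.mem_map, List.mem_range] at hmem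
    obtain ⟨i, hi, heq⟩ := hmem
    rw [Sym2.eq_iff] at heq
    rcases heq with ⟨h1, h2⟩ | ⟨h1, h2⟩
    · have := hinj (i+1) (by omega) 0 (by omega) h1
      omega
    · have e1 := hinj (i+1) (by omega) 1 (by omega) h1
      rcases Nat.lt_or_ge (i+1+1) L with h | h
      · have := hinj (i+1+1) h 0 (by omega) h2
        omega
      · have : i + 1 + 1 = L := by omega
        omega
  refine ⟨Walk.cons (hadj 0 (by omega)) P, ?_, ?_⟩
  · exact SimpleGraph.Path.cons_isCycle ⟨P, hPpath⟩ (hadj 0 (by omega)) hne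
  · rw [Walk.length_cons]
    have : P.length = L - 1 := by
      simp only [P, P0, Walk.length_copy, chainWalk_length]
    omega



lemma dist_pred (G : SimpleGraph V) (x u : V) (n : ℕ) (h : G.dist x u = n + 1) :
    ∃ w, G.Adj w u ∧ G.dist x w = n ∧ G.Reachable x w := by
  have hr : G.Reachable x u := by
    apply Reachable.of_dist_ne_zero; omega
  obtain ⟨p, hp⟩ := hr.exists_walk_length_eq_dist
  rw [h] at hp
  cases hq : p.reverse with
  | nil =>
    exfalso
    have := congrArg Walk.length hq
    rw [Walk.length_reverse, hp] at this
    simp at this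
  | @cons _ w' _ hadj q' =>
    have hlen : q'.length = n := by
      have := congrArg Walk.length hq
      rw [Walk.length_reverse, hp, Walk.length_cons] at this
      omega
    have hrw : G.Reachable x w' := ⟨q'.reverse⟩
    refine ⟨w', hadj.symm, ?_, hrw⟩
    have h1 : G.dist x w' ≤ n := by
      have := SimpleGraph.dist_le q'.reverse
      rwa [Walk.length_reverse, hlen] at this
    have h2 : n ≤ G.dist x w' := by
      by_contra hlt
      push_neg at hlt
      obtain ⟨r, hr'⟩ := hrw.exists_walk_length_eq_dist
      have := SimpleGraph.dist_le (r.concat hadj.symm)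
      rw [Walk.length_concat, hr'] at this
      omega
    omega

lemma exists_chain' (G : SimpleGraph V) (x : V) :
    ∀ (n : ℕ) (u : V), G.dist x u = n → G.Reachable x u →
    ∃ c : ℕ → V, c 0 = x ∧ c n = u ∧ (∀ i < n, G.Adj (c i) (c (i+1))) ∧
      (∀ i ≤ n, G.dist x (c i) = i) := by
  intro n
  induction n with
  | zero =>
    intro u h hr
    have : u = x := ((hr.dist_eq_zero_iff).mp h).symm
    subst this
    exact ⟨fun _ => u, rfl, rfl, by omega, by intro i hi; interval_cases i; simpa using h⟩
  | succ n ih =>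
    intro u h _
    obtain ⟨w, hadj, hw, hrw⟩ := dist_pred G x u n h
    obtain ⟨c, hc0, hcn, hcadj, hcd⟩ := ih w hw hrw
    refine ⟨fun i => if i ≤ n then c i else u, by simp [hc0], by simp, ?_, ?_⟩
    · intro i hi
      show G.Adj (if i ≤ n then c i else u) (if i + 1 ≤ n then c (i+1) else u)
      rcases Nat.lt_or_ge i n with h1 | h1
      · rcases Nat.lt_or_ge (i+1) n with h2 | h2
        · rw [if_pos (by omega), if_pos (by omega)]
          exact hcadj i h1
        · rw [if_pos (by omega), if_pos (by omega)]
          exact hcadj i h1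
      · have : i = n := by omega
        subst this
        rw [if_pos le_rfl, if_neg (by omega), hcn]
        exact hadj
    · intro i hi
      show G.dist x (if i ≤ n then c i else u) = i
      rcases Nat.lt_or_ge i (n+1) with h1 | h1
      · rw [if_pos (by omega)]
        exact hcd i (by omega)
      · have : i = n + 1 := by omega
        subst this
        rw [if_neg (by omega)]
        exact h



lemma no_cycle_fn (t : ℕ) (G : SimpleGraph V)
    (hcyc : ∀ (v : V) (w : G.Walk v v), w.IsCycle →
      ¬(8 ≤ w.length ∧ w.length ≤ 2 * t + 2 ∧ Even w.length))
    (f : ℕ → V) (L : ℕ) (h8 : 8 ≤ L) (hle : L ≤ 2*t+2) (hev : Even L)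
    (hadj : ∀ i < L, G.Adj (f i) (f (i+1))) (hclose : f L = f 0)
    (hinj : ∀ i < L, ∀ j < L, f i = f j → i = j) : False := by
  obtain ⟨w, hc, hl⟩ := exists_cycle_fn G f L (by omega) hadj hclose hinj
  exact hcyc _ w hc ⟨by omega, by omega, hl ▸ hev⟩

lemma meet_lemma' (t : ℕ) (ht : 3 ≤ t) (G : SimpleGraph V) (x : V)
    (hcyc : ∀ (v : V) (w : G.Walk v v), w.IsCycle →
      ¬(8 ≤ w.length ∧ w.length ≤ 2 * t + 2 ∧ Even w.length))
    (u u' v : V) (hne : u ≠ u') (hv : G.dist x v = t + 1)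
    (h1 : G.Adj u v) (h2 : G.Adj u' v)
    (c c' : ℕ → V)
    (hc0 : c 0 = x) (hct : c t = u)
    (hcadj : ∀ i < t, G.Adj (c i) (c (i+1))) (hcdist : ∀ i ≤ t, G.dist x (c i) = i)
    (hc0' : c' 0 = x) (hct' : c' t = u')
    (hcadj' : ∀ i < t, G.Adj (c' i) (c' (i+1))) (hcdist' : ∀ i ≤ t, G.dist x (c' i) = i) :
    c (t-1) = c' (t-1) ∨ c (t-2) = c' (t-2) := by
  classical
  by_contra hcon
  push_neg at hcon
  obtain ⟨hp, hg⟩ := hcon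
  set D := (Finset.range (t+1)).filter (fun i => c i = c' i) with hD
  have hD0 : 0 ∈ D := by simp [hD, hc0, hc0']
  set d := D.max' ⟨0, hD0⟩ with hd
  have hdD : d ∈ D := D.max'_mem _
  have hdmax : ∀ i ∈ D, i ≤ d := fun i hi => D.le_max' i hi
  have hmax : ∀ m ≤ t, c m = c' m → m ≤ d := by
    intro m hm hcm
    exact hdmax m (by simp [hD, Finset.mem_filter, Finset.mem_range]; exact ⟨by omega, hcm⟩)
  have hdt : d ≤ t := by
    have := (Finset.mem_filter.mp hdD).1
    simp only [Finset.mem_range] at this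
    omega
  have hcdd : c d = c' d := (Finset.mem_filter.mp hdD).2
  have hdne1 : d ≠ t := by
    intro h
    exact hne (by rw [← hct, ← hct', ← h]; exact hcdd)
  have hdne2 : d ≠ t - 1 := fun h => hp (h ▸ hcdd)
  have hdne3 : d ≠ t - 2 := fun h => hg (h ▸ hcdd)
  have hds : d ≤ t - 3 := by omega
  set s := t - d with hs
  have hs3 : 3 ≤ s := by omega
  set f : ℕ → V := fun i =>
    if i ≤ s then c (t - i)
    else if i ≤ 2*s then c' (d + (i - s))
    else if i = 2*s+1 then v else u with hf
  have hf1 : ∀ i ≤ s, f i = c (t - i) := by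
    intro i hi; simp only [hf]; rw [if_pos hi]
  have hf2 : ∀ i, s < i → i ≤ 2*s → f i = c' (d + (i - s)) := by
    intro i hi1 hi2; simp only [hf]; rw [if_neg (by omega), if_pos hi2]
  have hf3 : f (2*s+1) = v := by
    simp only [hf]; rw [if_neg (by omega), if_neg (by omega)]; simp
  have hf4 : f (2*s+2) = u := by
    simp only [hf]; rw [if_neg (by omega), if_neg (by omega), if_neg (by omega)]
  have hd1 : ∀ i ≤ s, G.dist x (f i) = t - i := by
    intro i hi; rw [hf1 i hi]; exact hcdist _ (by omega)
  have hd2 : ∀ i, s < i → i ≤ 2*s → G.dist x (f i) = d + (i - s) := by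
    intro i hi1 hi2; rw [hf2 i hi1 hi2]; exact hcdist' _ (by omega)
  refine no_cycle_fn t G hcyc f (2*s+2) (by omega) (by omega) ⟨s+1, by omega⟩ ?_ ?_ ?_
  · -- adjacency
    intro i hi
    rcases Nat.lt_or_ge i s with hr1 | hr1
    · rw [hf1 i (by omega), hf1 (i+1) (by omega)]
      have harith : t - (i+1) + 1 = t - i := by omega
      have := hcadj (t - (i+1)) (by omega)
      rw [harith] at this
      exact this.symm
    rcases Nat.eq_or_lt_of_le hr1 with hr2 | hr2
    · -- i = s
      rw [hf1 i (by omega), hf2 (i+1) (by omega) (by omega)]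
      have e1 : t - i = d := by omega
      have e2 : d + (i + 1 - s) = d + 1 := by omega
      rw [e1, e2, hcdd]
      exact hcadj' d (by omega)
    rcases Nat.lt_or_ge i (2*s) with hr3 | hr3
    · rw [hf2 i (by omega) (by omega), hf2 (i+1) (by omega) (by omega)]
      have e2 : d + (i + 1 - s) = d + (i - s) + 1 := by omega
      rw [e2]
      exact hcadj' (d + (i - s)) (by omega)
    rcases Nat.eq_or_lt_of_le hr3 with hr4 | hr4
    · -- i = 2s
      have e : i = 2*s := by omega
      subst e
      rw [hf2 (2*s) (by omega) (by omega), hf3]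
      have e2 : d + (2*s - s) = t := by omega
      rw [e2, hct']
      exact h2
    · -- i = 2s+1
      have e : i = 2*s+1 := by omega
      subst e
      rw [hf3, hf4]
      exact h1.symm
  · -- close
    rw [hf4, hf1 0 (by omega)]
    rw [Nat.sub_zero, hct]
  · -- injectivity
    have aux : ∀ i j, i ≤ j → j < 2*s+2 → f i = f j → i = j := by
      intro i j hij hj hfij
      rcases Nat.lt_or_ge j (s+1) with hj1 | hj1
      · -- both in R1
        have := hd1 i (by omega)
        rw [hfij, hd1 j (by omega)] at this
        omega
      rcases Nat.lt_or_ge j (2*s+1) with hj2 | hj2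
      · -- j in R2
        rcases Nat.lt_or_ge i (s+1) with hi1 | hi1
        · -- i in R1, j in R2 : meet beyond d, contradiction
          have hdi := hd1 i (by omega)
          have hdj := hd2 j (by omega) (by omega)
          rw [hfij] at hdi
          rw [hdj] at hdi
          -- hdi : d + (j - s) = t - i
          have hm : c (t - i) = c' (d + (j - s)) := by
            rw [← hf1 i (by omega), ← hf2 j (by omega) (by omega), hfij]
          rw [← hdi] at hm
          have := hmax (d + (j-s)) (by omega) hm
          omega
        · -- both R2
          have := hd2 i (by omega) (by omega)
          rw [hfij, hd2 j (by omega) (by omega)] at this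
          omega
      · -- j = 2s+1
        have ej : j = 2*s+1 := by omega
        subst ej
        rcases Nat.lt_or_ge i (s+1) with hi1 | hi1
        · have hdi := hd1 i (by omega)
          rw [hfij, hf3, hv] at hdi
          omega
        rcases Nat.lt_or_ge i (2*s+1) with hi2 | hi2
        · have hdi := hd2 i (by omega) (by omega)
          rw [hfij, hf3, hv] at hdi
          omega
        · omega
    intro i hi j hj hfij
    rcases le_or_gt i j with h | h
    · exact aux i j h hj hfij
    · exact (aux j i (by omega) hi hfij.symm).symm



/-- L4 : g-type pair lemma. -/
lemma gtype_pair' (t : ℕ) (ht : 3 ≤ t) (G : SimpleGraph V) (x : V)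
    (hcyc : ∀ (v : V) (w : G.Walk v v), w.IsCycle →
      ¬(8 ≤ w.length ∧ w.length ≤ 2 * t + 2 ∧ Even w.length))
    (p g : V → V)
    (hpadj : ∀ w, G.dist x w = t → G.Adj (p w) w)
    (hgadj : ∀ w, G.dist x w = t → G.Adj (g w) (p w))
    (hpd : ∀ w, G.dist x w = t → G.dist x (p w) = t-1)
    (hgd : ∀ w, G.dist x w = t → G.dist x (g w) = t-2)
    (v v' : V) (hv : G.dist x v = t+1) (hv' : G.dist x v' = t+1) (hvv : v ≠ v')
    (u u' u0 : V) (hu : G.dist x u = t) (hu' : G.dist x u' = t) (hu0 : G.dist x u0 = t)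
    (avu : G.Adj v u) (av'u : G.Adj v' u) (av'u' : G.Adj v' u') (avu0 : G.Adj v u0)
    (n1 : u' ≠ u) (n2 : u0 ≠ u) (n3 : u0 ≠ u')
    (hgg : g u0 = g u') :
    p u0 = p u' := by
  by_contra hpp
  have dpu' : G.dist x (p u') = t - 1 := hpd u' hu'
  have dgu' : G.dist x (g u') = t - 2 := hgd u' hu'
  have dpu0 : G.dist x (p u0) = t - 1 := hpd u0 hu0
  set b : ℕ → V := fun i =>
    if i = 1 then v else if i = 2 then u else if i = 3 then v' else if i = 4 then u'
    else if i = 5 then p u' else if i = 6 then g u' else if i = 7 then p u0 else u0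
    with hbdef
  have hb0 : b 0 = u0 := by norm_num [hbdef]
  have hb1 : b 1 = v := by norm_num [hbdef]
  have hb2 : b 2 = u := by norm_num [hbdef]
  have hb3 : b 3 = v' := by norm_num [hbdef]
  have hb4 : b 4 = u' := by norm_num [hbdef]
  have hb5 : b 5 = p u' := by norm_num [hbdef]
  have hb6 : b 6 = g u' := by norm_num [hbdef]
  have hb7 : b 7 = p u0 := by norm_num [hbdef]
  have hb8 : b 8 = u0 := by norm_num [hbdef]
  refine no_cycle_fn t G hcyc b 8 (by omega) (by omega) ⟨4, by omega⟩ ?_ ?_ ?_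
  · intro i hi
    interval_cases i <;>
      simp only [hb0, hb1, hb2, hb3, hb4, hb5, hb6, hb7, hb8] <;>
      first
        | exact avu0.symm | exact avu | exact av'u.symm | exact av'u'
        | exact (hpadj u' hu').symm | exact (hgadj u' hu').symm
        | exact (hgg ▸ hgadj u0 hu0) | exact hpadj u0 hu0
  · rw [hb8, hb0]
  · intro i hi j hj heq
    interval_cases i <;> interval_cases j <;>
      simp only [hb0, hb1, hb2, hb3, hb4, hb5, hb6, hb7, hb8] at heq ⊢ <;>
      first
        | rfl
        | exact absurd (congrArg (G.dist x) heq)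
            (by simp only [hu0, hu, hu', hv, hv', dpu', dgu', dpu0]; omega)
        | exact absurd heq hvv | exact absurd heq (Ne.symm hvv)
        | exact absurd heq n1 | exact absurd heq (Ne.symm n1)
        | exact absurd heq n2 | exact absurd heq (Ne.symm n2)
        | exact absurd heq n3 | exact absurd heq (Ne.symm n3)
        | exact absurd heq (Ne.symm hpp) | exact absurd heq hpp



/-- L3 : no alternating path through three p-type heavy vertices. -/
lemma ptype_triple' (t : ℕ) (ht : 3 ≤ t) (G : SimpleGraph V) (x : V)
    (hcyc : ∀ (v : V) (w : G.Walk v v), w.IsCycle →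
      ¬(8 ≤ w.length ∧ w.length ≤ 2 * t + 2 ∧ Even w.length))
    (p : V → V)
    (hpadj : ∀ w, G.dist x w = t → G.Adj (p w) w)
    (hpd : ∀ w, G.dist x w = t → G.dist x (p w) = t-1)
    (v v' v'' : V) (hv : G.dist x v = t+1) (hv' : G.dist x v' = t+1) (hv'' : G.dist x v'' = t+1)
    (m1 : v ≠ v') (m2 : v ≠ v'') (m3 : v' ≠ v'')
    (u u' u0 u1 : V) (hu : G.dist x u = t) (hu' : G.dist x u' = t)
    (hu0 : G.dist x u0 = t) (hu1 : G.dist x u1 = t)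
    (avu : G.Adj v u) (av'u : G.Adj v' u) (av'u' : G.Adj v' u') (av''u' : G.Adj v'' u')
    (avu0 : G.Adj v u0) (av''u1 : G.Adj v'' u1)
    (n1 : u ≠ u') (n2 : u0 ≠ u) (n3 : u0 ≠ u') (n4 : u1 ≠ u) (n5 : u1 ≠ u') (n6 : u0 ≠ u1)
    (hpp : p u1 = p u0) : False := by
  have dpu0 : G.dist x (p u0) = t - 1 := hpd u0 hu0
  set b : ℕ → V := fun i =>
    if i = 1 then v else if i = 2 then u else if i = 3 then v' else if i = 4 then u'
    else if i = 5 then v'' else if i = 6 then u1 else if i = 7 then p u0 else u0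
    with hbdef
  have hb0 : b 0 = u0 := by norm_num [hbdef]
  have hb1 : b 1 = v := by norm_num [hbdef]
  have hb2 : b 2 = u := by norm_num [hbdef]
  have hb3 : b 3 = v' := by norm_num [hbdef]
  have hb4 : b 4 = u' := by norm_num [hbdef]
  have hb5 : b 5 = v'' := by norm_num [hbdef]
  have hb6 : b 6 = u1 := by norm_num [hbdef]
  have hb7 : b 7 = p u0 := by norm_num [hbdef]
  have hb8 : b 8 = u0 := by norm_num [hbdef]
  refine no_cycle_fn t G hcyc b 8 (by omega) (by omega) ⟨4, by omega⟩ ?_ ?_ ?_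
  · intro i hi
    interval_cases i <;>
      simp only [hb0, hb1, hb2, hb3, hb4, hb5, hb6, hb7, hb8] <;>
      first
        | exact avu0.symm | exact avu | exact av'u.symm | exact av'u'
        | exact av''u'.symm | exact av''u1
        | exact (show G.Adj (p u0) u1 from hpp ▸ hpadj u1 hu1).symm | exact hpadj u0 hu0
  · rw [hb8, hb0]
  · intro i hi j hj heq
    interval_cases i <;> interval_cases j <;>
      simp only [hb0, hb1, hb2, hb3, hb4, hb5, hb6, hb7, hb8] at heq ⊢ <;>
      first
        | rfl
        | exact absurd (congrArg (G.dist x) heq)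
            (by simp only [hu0, hu, hu', hu1, hv, hv', hv'', dpu0]; omega)
        | exact absurd heq m1 | exact absurd heq (Ne.symm m1)
        | exact absurd heq m2 | exact absurd heq (Ne.symm m2)
        | exact absurd heq m3 | exact absurd heq (Ne.symm m3)
        | exact absurd heq n1 | exact absurd heq (Ne.symm n1)
        | exact absurd heq n2 | exact absurd heq (Ne.symm n2)
        | exact absurd heq n3 | exact absurd heq (Ne.symm n3)
        | exact absurd heq n4 | exact absurd heq (Ne.symm n4)
        | exact absurd heq n5 | exact absurd heq (Ne.symm n5)
        | exact absurd heq n6 | exact absurd heq (Ne.symm n6)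

/-- L2 : a vertex at distance t cannot have both a p-type and a g-type heavy neighbour. -/
lemma type_exclusive' (t : ℕ) (ht : 3 ≤ t) (G : SimpleGraph V) (x : V)
    (hcyc : ∀ (v : V) (w : G.Walk v v), w.IsCycle →
      ¬(8 ≤ w.length ∧ w.length ≤ 2 * t + 2 ∧ Even w.length))
    (p g : V → V)
    (hpadj : ∀ w, G.dist x w = t → G.Adj (p w) w)
    (hgadj : ∀ w, G.dist x w = t → G.Adj (g w) (p w))
    (hpd : ∀ w, G.dist x w = t → G.dist x (p w) = t-1)
    (hgd : ∀ w, G.dist x w = t → G.dist x (g w) = t-2)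
    (v1 v3 : V) (hv1 : G.dist x v1 = t+1) (hv3 : G.dist x v3 = t+1) (hvv : v1 ≠ v3)
    (u u2 u'' : V) (hu : G.dist x u = t) (hu2 : G.dist x u2 = t) (hu'' : G.dist x u'' = t)
    (a1 : G.Adj v1 u) (a2 : G.Adj v1 u2) (a3 : G.Adj v3 u) (a4 : G.Adj v3 u'')
    (n1 : u ≠ u2) (n2 : u ≠ u'') (n3 : u2 ≠ u'')
    (hp2 : p u2 = p u) (hgu : g u'' = g u) (hpne : p u'' ≠ p u) : False := by
  have dpu : G.dist x (p u) = t - 1 := hpd u hu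
  have dgu : G.dist x (g u) = t - 2 := hgd u hu
  have dpu'' : G.dist x (p u'') = t - 1 := hpd u'' hu''
  set b : ℕ → V := fun i =>
    if i = 1 then v1 else if i = 2 then u2 else if i = 3 then p u else if i = 4 then g u
    else if i = 5 then p u'' else if i = 6 then u'' else if i = 7 then v3 else u
    with hbdef
  have hb0 : b 0 = u := by norm_num [hbdef]
  have hb1 : b 1 = v1 := by norm_num [hbdef]
  have hb2 : b 2 = u2 := by norm_num [hbdef]
  have hb3 : b 3 = p u := by norm_num [hbdef]
  have hb4 : b 4 = g u := by norm_num [hbdef]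
  have hb5 : b 5 = p u'' := by norm_num [hbdef]
  have hb6 : b 6 = u'' := by norm_num [hbdef]
  have hb7 : b 7 = v3 := by norm_num [hbdef]
  have hb8 : b 8 = u := by norm_num [hbdef]
  refine no_cycle_fn t G hcyc b 8 (by omega) (by omega) ⟨4, by omega⟩ ?_ ?_ ?_
  · intro i hi
    interval_cases i <;>
      simp only [hb0, hb1, hb2, hb3, hb4, hb5, hb6, hb7, hb8] <;>
      first
        | exact a1.symm | exact a2
        | exact (show G.Adj (p u) u2 from hp2 ▸ hpadj u2 hu2).symm
        | exact (hgadj u hu).symm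
        | exact (show G.Adj (g u) (p u'') from hgu ▸ hgadj u'' hu'')
        | exact hpadj u'' hu''
        | exact a4.symm | exact a3
  · rw [hb8, hb0]
  · intro i hi j hj heq
    interval_cases i <;> interval_cases j <;>
      simp only [hb0, hb1, hb2, hb3, hb4, hb5, hb6, hb7, hb8] at heq ⊢ <;>
      first
        | rfl
        | exact absurd (congrArg (G.dist x) heq)
            (by simp only [hu, hu2, hu'', hv1, hv3, dpu, dgu, dpu'']; omega)
        | exact absurd heq hvv | exact absurd heq (Ne.symm hvv)
        | exact absurd heq n1 | exact absurd heq (Ne.symm n1)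
        | exact absurd heq n2 | exact absurd heq (Ne.symm n2)
        | exact absurd heq n3 | exact absurd heq (Ne.symm n3)
        | exact absurd heq hpne | exact absurd heq (Ne.symm hpne)


variable {V : Type} [DecidableEq V]

lemma count_lemma' (N : V → Finset V) (B : Finset V)
    (h4 : ∀ v ∈ B, 4 ≤ (N v).card)
    (h3 : ∀ v ∈ B, ∀ v' ∈ B, ∀ v'' ∈ B, v ≠ v' → v' ≠ v'' → v ≠ v'' →
      ∀ a ∈ N v ∩ N v', ∀ b ∈ N v' ∩ N v'', a = b) :
    ∑ v ∈ B, (N v).card ≤ 2 * (B.biUnion N).card := by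
  induction B using Finset.strongInductionOn with
  | _ B IH =>
  rcases Finset.eq_empty_or_nonempty B with rfl | ⟨v0, hv0⟩
  · simp
  by_cases hiso : ∀ v ∈ B.erase v0, ∀ a ∈ N v0, a ∉ N v
  · -- N v0 disjoint from all others
    have hdisj : Disjoint (N v0) ((B.erase v0).biUnion N) := by
      rw [Finset.disjoint_left]
      intro a ha hmem
      obtain ⟨v, hv, hav⟩ := Finset.mem_biUnion.mp hmem
      exact hiso v hv a ha hav
    have hsplit : B = insert v0 (B.erase v0) := (Finset.insert_erase hv0).symm
    have hsub : B.erase v0 ⊂ B := Finset.erase_ssubset hv0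
    have hIH := IH (B.erase v0) hsub
      (fun v hv => h4 v (Finset.mem_of_mem_erase hv))
      (fun v hv v' hv' v'' hv'' => h3 v (Finset.mem_of_mem_erase hv) v'
        (Finset.mem_of_mem_erase hv') v'' (Finset.mem_of_mem_erase hv''))
    have hsum0 : ∑ v ∈ B, (N v).card = (N v0).card + ∑ v ∈ B.erase v0, (N v).card :=
      (Finset.add_sum_erase B _ hv0).symm
    have hbi0 : (B.biUnion N).card = (N v0).card + ((B.erase v0).biUnion N).card := by
      conv_lhs => rw [hsplit]
      rw [Finset.biUnion_insert, Finset.card_union_of_disjoint hdisj]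
    omega
  · push_neg at hiso
    obtain ⟨v1, hv1, ustar, hustar0, hustar1⟩ := hiso
    have hv1B : v1 ∈ B := Finset.mem_of_mem_erase hv1
    have hv1ne : v1 ≠ v0 := Finset.ne_of_mem_erase hv1
    set C := B.filter (fun v => ustar ∈ N v) with hC
    have hCB : C ⊆ B := Finset.filter_subset _ _
    have hv0C : v0 ∈ C := Finset.mem_filter.mpr ⟨hv0, hustar0⟩
    have hv1C : v1 ∈ C := Finset.mem_filter.mpr ⟨hv1B, hustar1⟩
    have hmemC : ∀ v ∈ C, ustar ∈ N v := fun v hv => (Finset.mem_filter.mp hv).2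
    have hC2 : 2 ≤ C.card := by
      have := Finset.card_le_card (show {v1, v0} ⊆ C by
        intro z hz; simp only [Finset.mem_insert, Finset.mem_singleton] at hz
        rcases hz with rfl | rfl <;> assumption)
      rwa [Finset.card_insert_of_notMem (by simpa using hv1ne), Finset.card_singleton] at this
    -- cross-disjointness
    have hcross : ∀ v ∈ C, ∀ v' ∈ B \ C, ∀ a ∈ N v, a ∉ N v' := by
      intro v hv v' hv' a ha ha'
      obtain ⟨hv'B, hv'nC⟩ := Finset.mem_sdiff.mp hv'
      have hvv' : v ≠ v' := fun h => hv'nC (h ▸ hv)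
      have hustarv' : ustar ∉ N v' := fun h => hv'nC (Finset.mem_filter.mpr ⟨hv'B, h⟩)
      set m := if v = v0 then v1 else v0 with hm
      have hmC : m ∈ C := by rw [hm]; split <;> assumption
      have hmv : m ≠ v := by
        rw [hm]; split
        · rename_i h; rw [h]; exact hv1ne
        · rename_i h; exact fun hh => h hh.symm
      have hmv' : m ≠ v' := fun h => hv'nC (h ▸ hmC)
      have := h3 m (hCB hmC) v (hCB hv) v' hv'B hmv hvv' hmv'
        ustar (Finset.mem_inter.mpr ⟨hmemC m hmC, hmemC v hv⟩)
        a (Finset.mem_inter.mpr ⟨ha, ha'⟩)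
      exact hustarv' (by rw [this]; exact ha')
    -- bound for C
    have hCsum : ∑ v ∈ C, (N v).card ≤ 2 * (C.biUnion N).card := by
      rcases Nat.lt_or_ge C.card 3 with hc3 | hc3
      · -- card = 2
        have : C.card = 2 := by omega
        obtain ⟨a, b, hab, hCab⟩ := Finset.card_eq_two.mp this
        rw [hCab, Finset.sum_pair hab, Finset.biUnion_insert, Finset.singleton_biUnion]
        have h1 := Finset.card_union_add_card_inter (N a) (N b)
        have h2 : (N a ∩ N b).card ≤ (N a ∪ N b).card :=
          Finset.card_le_card (Finset.inter_subset_left.trans Finset.subset_union_left)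
        omega
      · -- card ≥ 3 : sunflower
        have hpair : ∀ v ∈ C, ∀ v' ∈ C, v ≠ v' → ∀ a ∈ N v ∩ N v', a = ustar := by
          intro v hv v' hv' hvv' a ha
          obtain ⟨m, hmC, hmv, hmv'⟩ : ∃ m ∈ C, m ≠ v ∧ m ≠ v' := by
            have : ((C.erase v).erase v').Nonempty := by
              apply Finset.card_pos.mp
              have := Finset.card_erase_le (s := C.erase v) (a := v')
              have h1 := Finset.card_erase_le (s := C) (a := v)
              have e1 : (C.erase v).card = C.card - 1 := Finset.card_erase_of_mem hv
              have e2 : ((C.erase v).erase v').card ≥ (C.erase v).card - 1 :=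
                Finset.pred_card_le_card_erase
              omega
            obtain ⟨m, hm⟩ := this
            exact ⟨m, Finset.mem_of_mem_erase (Finset.mem_of_mem_erase hm),
              Finset.ne_of_mem_erase (Finset.mem_of_mem_erase hm), Finset.ne_of_mem_erase hm⟩
          exact (h3 m (hCB hmC) v (hCB hv) v' (hCB hv') hmv hvv' hmv'
            ustar (Finset.mem_inter.mpr ⟨hmemC m hmC, hmemC v hv⟩) a ha).symm
        set M := fun v => (N v).erase ustar with hM
        have hMdisj : (C : Set V).PairwiseDisjoint M := by
          intro v hv v' hv' hvv'
          simp only [Finset.disjoint_left, hM]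
          intro a ha ha'
          have h1 := Finset.mem_of_mem_erase ha
          have h2 := Finset.mem_of_mem_erase ha'
          exact (Finset.ne_of_mem_erase ha)
            (hpair v hv v' hv' hvv' a (Finset.mem_inter.mpr ⟨h1, h2⟩))
        have hMcard : ∀ v ∈ C, (M v).card = (N v).card - 1 := by
          intro v hv
          exact Finset.card_erase_of_mem (hmemC v hv)
        have hbiU : C.biUnion N = insert ustar (C.biUnion M) := by
          ext a
          simp only [Finset.mem_biUnion, Finset.mem_insert, hM, Finset.mem_erase]
          constructor
          · rintro ⟨v, hv, hav⟩
            by_cases h : a = ustar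
            · exact Or.inl h
            · exact Or.inr ⟨v, hv, h, hav⟩
          · rintro (rfl | ⟨v, hv, _, hav⟩)
            · exact ⟨v0, hv0C, hustar0⟩
            · exact ⟨v, hv, hav⟩
        have hustarM : ustar ∉ C.biUnion M := by
          simp only [Finset.mem_biUnion, hM, Finset.mem_erase]
          rintro ⟨v, hv, h, _⟩
          exact h rfl
        have hcard1 : (C.biUnion N).card = (C.biUnion M).card + 1 := by
          rw [hbiU, Finset.card_insert_of_notMem hustarM]
        have hcard2 : (C.biUnion M).card = ∑ v ∈ C, (M v).card :=
          Finset.card_biUnion (fun v hv v' hv' h => hMdisj hv hv' h)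
        have hsum1 : ∑ v ∈ C, (N v).card = (∑ v ∈ C, (M v).card) + C.card := by
          have : ∀ v ∈ C, (N v).card = (M v).card + 1 := by
            intro v hv
            have := hMcard v hv
            have h4' := h4 v (hCB hv)
            omega
          rw [Finset.sum_congr rfl this, Finset.sum_add_distrib, Finset.sum_const, smul_eq_mul,
            mul_one]
        have hS4 : 4 * C.card ≤ ∑ v ∈ C, (N v).card := by
          calc 4 * C.card = ∑ _v ∈ C, 4 := by rw [Finset.sum_const, smul_eq_mul, mul_comm]
            _ ≤ ∑ v ∈ C, (N v).card := Finset.sum_le_sum (fun v hv => h4 v (hCB hv))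
        omega
    -- combine C with the rest
    have hBsplit : C ∪ (B \ C) = B := Finset.union_sdiff_of_subset hCB
    have hdisjCB : Disjoint C (B \ C) := Finset.disjoint_sdiff
    have hsubB : B \ C ⊂ B := by
      apply Finset.ssubset_iff_of_subset (Finset.sdiff_subset) |>.mpr
      exact ⟨v0, hv0, by simp [hv0C]⟩
    have hIH := IH (B \ C) hsubB
      (fun v hv => h4 v (Finset.mem_sdiff.mp hv).1)
      (fun v hv v' hv' v'' hv'' => h3 v (Finset.mem_sdiff.mp hv).1 v'
        (Finset.mem_sdiff.mp hv').1 v'' (Finset.mem_sdiff.mp hv'').1)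
    have hdisjU : Disjoint (C.biUnion N) ((B \ C).biUnion N) := by
      rw [Finset.disjoint_left]
      intro a ha hmem
      obtain ⟨v, hv, hav⟩ := Finset.mem_biUnion.mp ha
      obtain ⟨v', hv', hav'⟩ := Finset.mem_biUnion.mp hmem
      exact hcross v hv v' hv' a hav hav'
    have hsum0 : ∑ v ∈ B, (N v).card = ∑ v ∈ C, (N v).card + ∑ v ∈ B \ C, (N v).card := by
      conv_lhs => rw [← hBsplit]
      rw [Finset.sum_union hdisjCB]
    have hbi0 : (B.biUnion N).card = (C.biUnion N).card + ((B \ C).biUnion N).card := by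
      have hbiu : (C ∪ B \ C).biUnion N = C.biUnion N ∪ (B \ C).biUnion N := by
        ext a
        simp only [Finset.mem_biUnion, Finset.mem_union, or_and_right, exists_or]
      conv_lhs => rw [← hBsplit]
      rw [hbiu, Finset.card_union_of_disjoint hdisjU]
    omega



end BottleneckAux

open BottleneckAux in
/-- If `t ≥ 3` and `G` has no cycle of length in `{8, 10, ..., 2t+2}`, then the number of
bottlenecks of type 2 (edges `uv` with `u` at distance exactly `t` from `x`, `v` at distance
exactly `t+1` from `x`, and `v` having at least four neighbours at distance exactly `t` from
`x`) is at most twice the number of vertices at distance exactly `t` from `x`.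
Edges are counted as ordered pairs `(u, v)` with `u` at distance `t` and `v` at distance
`t+1`, so each bottleneck edge is counted exactly once. -/
theorem bottlenecks_type_two_bound
    (t : ℕ) (ht : 3 ≤ t) (V : Type) [Fintype V] (G : SimpleGraph V)
    (hcyc : ∀ (v : V) (w : G.Walk v v), w.IsCycle →
      ¬(8 ≤ w.length ∧ w.length ≤ 2 * t + 2 ∧ Even w.length))
    (x : V) :
    {p : V × V | G.Adj p.1 p.2 ∧ G.dist x p.1 = t ∧ G.dist x p.2 = t + 1 ∧
        4 ≤ {w : V | G.Adj p.2 w ∧ G.dist x w = t}.ncard}.ncard ≤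
      2 * {v : V | G.dist x v = t}.ncard := by
  classical
  set A : Finset V := Finset.univ.filter (fun u => G.dist x u = t) with hA
  set Nb : V → Finset V := fun v => Finset.univ.filter (fun u => G.Adj v u ∧ G.dist x u = t)
    with hNb
  set B : Finset V := Finset.univ.filter (fun v => G.dist x v = t+1 ∧ 4 ≤ (Nb v).card) with hB
  have hmemNb : ∀ v u : V, u ∈ Nb v ↔ (G.Adj v u ∧ G.dist x u = t) := by
    intro v u; simp [hNb]
  have hmemB : ∀ v : V, v ∈ B ↔ (G.dist x v = t+1 ∧ 4 ≤ (Nb v).card) := by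
    intro v; simp [hB]
  have hNcard : ∀ v : V, {w : V | G.Adj v w ∧ G.dist x w = t}.ncard = (Nb v).card := by
    intro v
    rw [show {w | G.Adj v w ∧ G.dist x w = t} = ↑(Nb v) by ext w; simp [hNb]]
    exact Set.ncard_coe_finset _
  have hRHS : {v : V | G.dist x v = t}.ncard = A.card := by
    rw [show {v | G.dist x v = t} = ↑A by ext w; simp [hA]]
    exact Set.ncard_coe_finset _
  simp only [hNcard]
  rw [hRHS]
  -- LHS as a sum
  have hLHS : {p : V × V | G.Adj p.1 p.2 ∧ G.dist x p.1 = t ∧ G.dist x p.2 = t + 1 ∧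
      4 ≤ (Nb p.2).card}.ncard = ∑ v ∈ B, (Nb v).card := by
    have hset : {p : V × V | G.Adj p.1 p.2 ∧ G.dist x p.1 = t ∧ G.dist x p.2 = t + 1 ∧
        4 ≤ (Nb p.2).card} = ↑(B.biUnion (fun v => (Nb v).image (fun u => (u, v)))) := by
      ext ⟨a, b⟩
      simp only [Set.mem_setOf_eq, Finset.coe_biUnion, Set.mem_iUnion, Finset.mem_coe,
        Finset.mem_image, Finset.mem_biUnion]
      constructor
      · rintro ⟨hadj, hda, hdb, hcard⟩
        exact ⟨b, (hmemB b).mpr ⟨hdb, hcard⟩, a, (hmemNb b a).mpr ⟨hadj.symm, hda⟩, rfl⟩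
      · rintro ⟨v, hv, u, hu, huv⟩
        obtain ⟨rfl, rfl⟩ := Prod.mk.injEq .. |>.mp huv
        obtain ⟨hadj, hda⟩ := (hmemNb _ _).mp hu
        obtain ⟨hdb, hcard⟩ := (hmemB _).mp hv
        exact ⟨hadj.symm, hda, hdb, hcard⟩
    rw [hset, Set.ncard_coe_finset]
    rw [Finset.card_biUnion]
    · exact Finset.sum_congr rfl fun v _ =>
        Finset.card_image_of_injective _ (fun a b h => by simpa using (Prod.mk.injEq .. ▸ h).1)
    · intro v hv v' hv' hne
      rw [Function.onFun, Finset.disjoint_left]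
      rintro ⟨a, b⟩ hmem hmem'
      obtain ⟨u, _, huv⟩ := Finset.mem_image.mp hmem
      obtain ⟨u', _, huv'⟩ := Finset.mem_image.mp hmem'
      apply hne
      have e1 := (Prod.mk.injEq .. ▸ huv).2
      have e2 := (Prod.mk.injEq .. ▸ huv').2
      exact e1.trans e2.symm
  rw [hLHS]
  -- choose chains
  have hchain : ∀ u : V, G.dist x u = t →
      ∃ c : ℕ → V, c 0 = x ∧ c t = u ∧ (∀ i < t, G.Adj (c i) (c (i+1))) ∧
        (∀ i ≤ t, G.dist x (c i) = i) := by
    intro u hu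
    exact exists_chain' G x t u hu (Reachable.of_dist_ne_zero (by omega))
  choose! cc hcc using hchain
  set p : V → V := fun u => cc u (t-1) with hp
  set g : V → V := fun u => cc u (t-2) with hg
  have hpadj : ∀ w, G.dist x w = t → G.Adj (p w) w := by
    intro w hw
    have h := (hcc w hw).2.2.1 (t-1) (by omega)
    rw [show t - 1 + 1 = t from by omega, (hcc w hw).2.1] at h
    exact h
  have hgadj : ∀ w, G.dist x w = t → G.Adj (g w) (p w) := by
    intro w hw
    have h := (hcc w hw).2.2.1 (t-2) (by omega)
    rw [show t - 2 + 1 = t - 1 from by omega] at h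
    exact h
  have hpd : ∀ w, G.dist x w = t → G.dist x (p w) = t-1 :=
    fun w hw => (hcc w hw).2.2.2 (t-1) (by omega)
  have hgd : ∀ w, G.dist x w = t → G.dist x (g w) = t-2 :=
    fun w hw => (hcc w hw).2.2.2 (t-2) (by omega)
  -- Lemma 1, packaged
  have hL1 : ∀ v ∈ B, ∀ u1 ∈ Nb v, ∀ u2 ∈ Nb v, u1 ≠ u2 →
      p u1 = p u2 ∨ g u1 = g u2 := by
    intro v hvB u1 h1 u2 h2 hne
    obtain ⟨hvd, _⟩ := (hmemB v).mp hvB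
    obtain ⟨ha1, hd1⟩ := (hmemNb v u1).mp h1
    obtain ⟨ha2, hd2⟩ := (hmemNb v u2).mp h2
    exact meet_lemma' t ht G x hcyc u1 u2 v hne hvd ha1.symm ha2.symm (cc u1) (cc u2)
      (hcc u1 hd1).1 (hcc u1 hd1).2.1 (hcc u1 hd1).2.2.1 (hcc u1 hd1).2.2.2
      (hcc u2 hd2).1 (hcc u2 hd2).2.1 (hcc u2 hd2).2.2.1 (hcc u2 hd2).2.2.2
  -- split into p-type and g-type
  set P : V → Prop := fun v => ∀ u1 ∈ Nb v, ∀ u2 ∈ Nb v, p u1 = p u2 with hPdef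
  set Bp : Finset V := B.filter P with hBp
  set Bg : Finset V := B.filter (fun v => ¬ P v) with hBg
  have hBpB : Bp ⊆ B := Finset.filter_subset _ _
  have hBgB : Bg ⊆ B := Finset.filter_subset _ _
  -- g-type vertices have a common grandparent
  have hgcom : ∀ v ∈ Bg, ∀ u1 ∈ Nb v, ∀ u2 ∈ Nb v, g u1 = g u2 := by
    intro v hvBg u1 h1 u2 h2
    obtain ⟨hvB, hnP⟩ := Finset.mem_filter.mp hvBg
    have hnP' : ¬ ∀ u1 ∈ Nb v, ∀ u2 ∈ Nb v, p u1 = p u2 := hnP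
    push_neg at hnP'
    obtain ⟨c, hc, d, hd, hpcd⟩ := hnP'
    have hcd : c ≠ d := fun h => hpcd (by rw [h])
    have base : g c = g d := (hL1 v hvB c hc d hd hcd).resolve_left hpcd
    have all : ∀ u ∈ Nb v, g u = g c := by
      intro u hu
      by_cases huc : u = c
      · rw [huc]
      by_cases hud : u = d
      · rw [hud]; exact base.symm
      by_cases hpc : p u = p c
      · have hpdne : p u ≠ p d := by rw [hpc]; exact hpcd
        have := (hL1 v hvB u hu d hd hud).resolve_left hpdne
        rw [this]; exact base.symm
      · exact (hL1 v hvB u hu c hc huc).resolve_left hpc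
    rw [all u1 h1, all u2 h2]
  -- helper: pick elements
  have hpick1 : ∀ v ∈ B, ∀ (a : V), ((Nb v).erase a).Nonempty := by
    intro v hv a
    apply Finset.card_pos.mp
    have h4 := ((hmemB v).mp hv).2
    have := Finset.pred_card_le_card_erase (s := Nb v) (a := a)
    omega
  have hpick2 : ∀ v ∈ B, ∀ (a b : V), (((Nb v).erase a).erase b).Nonempty := by
    intro v hv a b
    apply Finset.card_pos.mp
    have h4 := ((hmemB v).mp hv).2
    have h1 := Finset.pred_card_le_card_erase (s := Nb v) (a := a)
    have h2 := Finset.pred_card_le_card_erase (s := (Nb v).erase a) (a := b)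
    omega
  have hpick3 : ∀ v ∈ B, ∀ (a b c : V), ((((Nb v).erase a).erase b).erase c).Nonempty := by
    intro v hv a b c
    apply Finset.card_pos.mp
    have h4 := ((hmemB v).mp hv).2
    have h1 := Finset.pred_card_le_card_erase (s := Nb v) (a := a)
    have h2 := Finset.pred_card_le_card_erase (s := (Nb v).erase a) (a := b)
    have h3 := Finset.pred_card_le_card_erase (s := ((Nb v).erase a).erase b) (a := c)
    omega
  -- L4 consequence (for g-type pairs)
  have hL4 : ∀ v ∈ Bg, ∀ v' ∈ Bg, v ≠ v' → ∀ a, a ∈ Nb v → a ∈ Nb v' →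
      ∀ w ∈ (Nb v).erase a, ∀ w' ∈ (Nb v').erase a, p w = p w' := by
    intro v hv v' hv' hvv' a hav hav' w hw w' hw'
    have hvB := hBgB hv
    have hv'B := hBgB hv'
    obtain ⟨hvd, _⟩ := (hmemB v).mp hvB
    obtain ⟨hv'd, _⟩ := (hmemB v').mp hv'B
    obtain ⟨hadja, hda⟩ := (hmemNb v a).mp hav
    obtain ⟨hadja', _⟩ := (hmemNb v' a).mp hav'
    have hwNv := Finset.mem_of_mem_erase hw
    have hwa : w ≠ a := Finset.ne_of_mem_erase hw
    have hw'Nv' := Finset.mem_of_mem_erase hw'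
    have hw'a : w' ≠ a := Finset.ne_of_mem_erase hw'
    obtain ⟨hadjw, hdw⟩ := (hmemNb v w).mp hwNv
    obtain ⟨hadjw', hdw'⟩ := (hmemNb v' w').mp hw'Nv'
    -- the common grandparent across the pair
    have hgg : ∀ z ∈ Nb v, ∀ z' ∈ Nb v', g z = g z' := by
      intro z hz z' hz'
      rw [hgcom v hv z hz a hav, hgcom v' hv' a hav' z' hz']
    -- direct application of gtype_pair'
    have direct : ∀ z ∈ (Nb v).erase a, ∀ z' ∈ (Nb v').erase a, z ≠ z' → p z = p z' := by
      intro z hz z' hz' hzz'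
      have hzNv := Finset.mem_of_mem_erase hz
      have hz'Nv' := Finset.mem_of_mem_erase hz'
      obtain ⟨hadjz, hdz⟩ := (hmemNb v z).mp hzNv
      obtain ⟨hadjz', hdz'⟩ := (hmemNb v' z').mp hz'Nv'
      exact gtype_pair' t ht G x hcyc p g hpadj hgadj hpd hgd v v' hvd hv'd hvv'
        a z' z hda hdz' hdz hadja hadja' hadjz' hadjz
        (Finset.ne_of_mem_erase hz') (Finset.ne_of_mem_erase hz) hzz'
        (hgg z hzNv z' hz'Nv')
    by_cases hww' : w = w'
    · -- pick auxiliary vertices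
      obtain ⟨z, hz⟩ := hpick2 v hvB a w
      obtain ⟨z', hz'⟩ := hpick3 v' hv'B a w z
      have hzE : z ∈ (Nb v).erase a := Finset.mem_of_mem_erase hz
      have hz'E : z' ∈ (Nb v').erase a :=
        Finset.mem_of_mem_erase (Finset.mem_of_mem_erase hz')
      have hzw : z ≠ w := Finset.ne_of_mem_erase hz
      have hz'z : z' ≠ z := Finset.ne_of_mem_erase hz'
      have hz'w : z' ≠ w := Finset.ne_of_mem_erase (Finset.mem_of_mem_erase hz')
      have e1 : p z = p w' := direct z hzE w' hw' (by rw [← hww']; exact hzw)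
      have e2 : p w = p z' := by
        have := direct w hw z' hz'E (fun h => hz'w h.symm)
        exact this
      have e3 : p z = p z' := direct z hzE z' hz'E (fun h => hz'z h.symm)
      rw [e2, ← e3, e1]
    · exact direct w hw w' hw' hww'
  -- counting hypothesis for Bp
  have hBpcount : ∑ v ∈ Bp, (Nb v).card ≤ 2 * (Bp.biUnion Nb).card := by
    apply count_lemma'
    · intro v hv; exact ((hmemB v).mp (hBpB hv)).2
    · intro v hv v' hv' v'' hv'' hne1 hne2 hne3 a ha b hb
      by_contra hab
      obtain ⟨haNv, haNv'⟩ := Finset.mem_inter.mp ha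
      obtain ⟨hbNv', hbNv''⟩ := Finset.mem_inter.mp hb
      have hvB := hBpB hv
      have hv'B := hBpB hv'
      have hv''B := hBpB hv''
      have hPv : P v := (Finset.mem_filter.mp hv).2
      have hPv' : P v' := (Finset.mem_filter.mp hv').2
      have hPv'' : P v'' := (Finset.mem_filter.mp hv'').2
      obtain ⟨u0, hu0⟩ := hpick2 v hvB a b
      obtain ⟨u1, hu1⟩ := hpick3 v'' hv''B a b u0
      have hu0Nv : u0 ∈ Nb v := Finset.mem_of_mem_erase (Finset.mem_of_mem_erase hu0)
      have hu1Nv'' : u1 ∈ Nb v'' :=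
        Finset.mem_of_mem_erase (Finset.mem_of_mem_erase (Finset.mem_of_mem_erase hu1))
      have hu0b : u0 ≠ b := Finset.ne_of_mem_erase hu0
      have hu0a : u0 ≠ a := Finset.ne_of_mem_erase (Finset.mem_of_mem_erase hu0)
      have hu1u0 : u1 ≠ u0 := Finset.ne_of_mem_erase hu1
      have hu1b : u1 ≠ b := Finset.ne_of_mem_erase (Finset.mem_of_mem_erase hu1)
      have hu1a : u1 ≠ a :=
        Finset.ne_of_mem_erase (Finset.mem_of_mem_erase (Finset.mem_of_mem_erase hu1))
      obtain ⟨hvd, _⟩ := (hmemB v).mp hvB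
      obtain ⟨hv'd, _⟩ := (hmemB v').mp hv'B
      obtain ⟨hv''d, _⟩ := (hmemB v'').mp hv''B
      obtain ⟨haa, hda⟩ := (hmemNb v a).mp haNv
      obtain ⟨haa', _⟩ := (hmemNb v' a).mp haNv'
      obtain ⟨hba', hdb⟩ := (hmemNb v' b).mp hbNv'
      obtain ⟨hba'', _⟩ := (hmemNb v'' b).mp hbNv''
      obtain ⟨hau0, hdu0⟩ := (hmemNb v u0).mp hu0Nv
      obtain ⟨hau1, hdu1⟩ := (hmemNb v'' u1).mp hu1Nv''
      have hpp : p u1 = p u0 := by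
        have e1 : p u1 = p b := hPv'' u1 hu1Nv'' b hbNv''
        have e2 : p b = p a := hPv' b hbNv' a haNv'
        have e3 : p a = p u0 := hPv a haNv u0 hu0Nv
        rw [e1, e2, e3]
      exact ptype_triple' t ht G x hcyc p hpadj hpd v v' v'' hvd hv'd hv''d hne1 hne3 hne2
        a b u0 u1 hda hdb hdu0 hdu1 haa haa' hba' hba'' hau0 hau1
        hab hu0a hu0b hu1a hu1b (fun h => hu1u0 h.symm) hpp
  -- counting hypothesis for Bg
  have hBgcount : ∑ v ∈ Bg, (Nb v).card ≤ 2 * (Bg.biUnion Nb).card := by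
    apply count_lemma'
    · intro v hv; exact ((hmemB v).mp (hBgB hv)).2
    · intro v hv v' hv' v'' hv'' hne1 hne2 hne3 a ha b hb
      by_contra hab
      obtain ⟨haNv, haNv'⟩ := Finset.mem_inter.mp ha
      obtain ⟨hbNv', hbNv''⟩ := Finset.mem_inter.mp hb
      have hv'B := hBgB hv'
      -- common parent of (Nb v').erase a
      obtain ⟨wf, hwf⟩ := hpick1 v (hBgB hv) a
      obtain ⟨wg, hwg⟩ := hpick1 v'' (hBgB hv'') b
      obtain ⟨w1, hw1⟩ := hpick2 v' hv'B a b
      have hw1Ea : w1 ∈ (Nb v').erase a := by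
        have h1 := Finset.mem_of_mem_erase hw1
        exact h1
      have hw1Eb : w1 ∈ (Nb v').erase b := by
        have := Finset.mem_of_mem_erase (Finset.mem_of_mem_erase hw1)
        exact Finset.mem_erase.mpr ⟨Finset.ne_of_mem_erase hw1, this⟩
      have haEb : a ∈ (Nb v').erase b := Finset.mem_erase.mpr ⟨hab, haNv'⟩
      have hbEa : b ∈ (Nb v').erase a := Finset.mem_erase.mpr ⟨fun h => hab h.symm, hbNv'⟩
      -- q : common parent value of (Nb v').erase a
      have hqall : ∀ w' ∈ (Nb v').erase a, p w' = p wf :=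
        fun w' hw' => (hL4 v hv v' hv' hne1 a haNv haNv' wf hwf w' hw').symm
      -- p a differs from it
      have hpa : p a ≠ p wf := by
        intro hpaq
        have hnP : ¬ P v' := (Finset.mem_filter.mp hv').2
        apply hnP
        intro z1 hz1 z2 hz2
        have key : ∀ z ∈ Nb v', p z = p wf := by
          intro z hz
          by_cases hza : z = a
          · rw [hza]; exact hpaq
          · exact hqall z (Finset.mem_erase.mpr ⟨hza, hz⟩)
        rw [key z1 hz1, key z2 hz2]
      -- but via the pair (v', v'') with common b : p a = p w1
      have h1 : p a = p wg := hL4 v' hv' v'' hv'' hne2 b hbNv' hbNv'' a haEb wg hwg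
      have h2 : p w1 = p wg := hL4 v' hv' v'' hv'' hne2 b hbNv' hbNv'' w1 hw1Eb wg hwg
      have h3 : p w1 = p wf := hqall w1 hw1Ea
      exact hpa (by rw [h1, ← h2, h3])
  -- the two unions are disjoint
  have hdisjU : Disjoint (Bp.biUnion Nb) (Bg.biUnion Nb) := by
    rw [Finset.disjoint_left]
    intro u hup hug
    obtain ⟨v1, hv1, huv1⟩ := Finset.mem_biUnion.mp hup
    obtain ⟨v3, hv3, huv3⟩ := Finset.mem_biUnion.mp hug
    have hv1B := hBpB hv1
    have hv3B := hBgB hv3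
    have hPv1 : P v1 := (Finset.mem_filter.mp hv1).2
    have hnPv3 : ¬ P v3 := (Finset.mem_filter.mp hv3).2
    have hv13 : v1 ≠ v3 := fun h => hnPv3 (h ▸ hPv1)
    obtain ⟨hv1d, _⟩ := (hmemB v1).mp hv1B
    obtain ⟨hv3d, _⟩ := (hmemB v3).mp hv3B
    obtain ⟨hadj1, hdu⟩ := (hmemNb v1 u).mp huv1
    obtain ⟨hadj3, _⟩ := (hmemNb v3 u).mp huv3
    obtain ⟨u2, hu2E⟩ := hpick1 v1 hv1B u
    have hu2Nv1 : u2 ∈ Nb v1 := Finset.mem_of_mem_erase hu2E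
    have hu2u : u2 ≠ u := Finset.ne_of_mem_erase hu2E
    obtain ⟨hadj2, hdu2⟩ := (hmemNb v1 u2).mp hu2Nv1
    have hp2 : p u2 = p u := hPv1 u2 hu2Nv1 u huv1
    have hnP' : ¬ ∀ u1 ∈ Nb v3, ∀ u2 ∈ Nb v3, p u1 = p u2 := hnPv3
    push_neg at hnP'
    obtain ⟨c, hc, d, hd, hpcd⟩ := hnP'
    obtain ⟨u'', hu''Nv3, hpu''⟩ : ∃ z ∈ Nb v3, p z ≠ p u := by
      by_cases hpc : p c = p u
      · exact ⟨d, hd, fun h => hpcd (by rw [hpc, h])⟩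
      · exact ⟨c, hc, hpc⟩
    obtain ⟨hadj'', hdu''⟩ := (hmemNb v3 u'').mp hu''Nv3
    have hgu : g u'' = g u := hgcom v3 hv3 u'' hu''Nv3 u huv3
    have hnu'' : u ≠ u'' := fun h => hpu'' (by rw [h])
    have hn2'' : u2 ≠ u'' := fun h => hpu'' (by rw [← h, hp2])
    exact type_exclusive' t ht G x hcyc p g hpadj hgadj hpd hgd v1 v3 hv1d hv3d hv13
      u u2 u'' hdu hdu2 hdu'' hadj1 hadj2 hadj3 hadj'' (fun h => hu2u h.symm) hnu'' hn2''
      hp2 hgu hpu''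
  -- final count
  have hsplit : ∑ v ∈ Bp, (Nb v).card + ∑ v ∈ Bg, (Nb v).card = ∑ v ∈ B, (Nb v).card :=
    Finset.sum_filter_add_sum_filter_not B P _
  have hUsub : Bp.biUnion Nb ∪ Bg.biUnion Nb ⊆ A := by
    intro u hu
    rcases Finset.mem_union.mp hu with h | h
    · obtain ⟨v, _, huv⟩ := Finset.mem_biUnion.mp h
      have := ((hmemNb v u).mp huv).2
      simp [hA, this]
    · obtain ⟨v, _, huv⟩ := Finset.mem_biUnion.mp h
      have := ((hmemNb v u).mp huv).2
      simp [hA, this]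
  have hUcard : (Bp.biUnion Nb).card + (Bg.biUnion Nb).card ≤ A.card := by
    rw [← Finset.card_union_of_disjoint hdisjU]
    exact Finset.card_le_card hUsub
  omega
end

section
/- Let t ≥ 3 be an integer, let G be a finite simple graph containing no cycle whose length lies in {8, 10, 12, …, 2t+2}, and let x be a vertex of G. Then the number of edges of G both of whose endpoints are at distance exactly t from x is at most (5/2)·|A_t(x)|; equivalently, twice the number of such edges is at most 5 times the number of vertices at distance exactly t from x. -/
open List Finset

namespace CycleAux

variable {V : Type} {G : SimpleGraph V}

/-- Build a walk from a chain of adjacent vertices. -/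
def mkW (G : SimpleGraph V) : ∀ (a : V) (l : List V), List.IsChain G.Adj (a :: l) →
    G.Walk a ((a :: l).getLast (by simp))
  | a, [], _ => SimpleGraph.Walk.nil
  | a, b :: l, h => by
      rw [List.isChain_cons_cons] at h
      exact (SimpleGraph.Walk.cons h.1 (mkW G b l h.2)).copy rfl
        (by rw [List.getLast_cons_cons])

@[simp] lemma mkW_support (a : V) (l : List V) (h : List.IsChain G.Adj (a :: l)) :
    (mkW G a l h).support = a :: l := by
  induction l generalizing a with
  | nil => simp [mkW]
  | cons b l ih => simp [mkW, ih]

@[simp] lemma mkW_length (a : V) (l : List V) (h : List.IsChain G.Adj (a :: l)) :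
    (mkW G a l h).length = l.length := by
  induction l generalizing a with
  | nil => simp [mkW]
  | cons b l ih => simp [mkW, ih]

lemma edge_head_not_mem {a b : V} (p : G.Walk a b) (hp : p.IsPath) (h2 : 2 ≤ p.length) :
    s(b, a) ∉ p.edges := by
  intro hmem
  cases p with
  | nil => simp at h2
  | cons hadj q =>
    rename_i c
    rw [SimpleGraph.Walk.cons_isPath_iff] at hp
    obtain ⟨hq, hna⟩ := hp
    rw [SimpleGraph.Walk.edges_cons, List.mem_cons] at hmem
    rcases hmem with h | h
    · rw [Sym2.eq_iff] at h
      rcases h with ⟨rfl, rfl⟩ | ⟨rfl, -⟩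
      · exact hna (q.end_mem_support)
      · -- q : G.Walk b b is a path, so nil
        have hq0 : q.length = 0 := by
          cases q with
          | nil => rfl
          | cons h r =>
            have := hq.support_nodup
            simp at this
        simp [SimpleGraph.Walk.length_cons, hq0] at h2
    · exact hna (SimpleGraph.Walk.snd_mem_support_of_mem_edges q h)

/-- From a closed chain of pairwise-distinct vertices, obtain a cycle of that length. -/
lemma cycle_of_list (l : List V) (hne : l ≠ []) (hc : l.IsChain G.Adj)
    (hnd : l.Nodup) (hcl : G.Adj (l.getLast hne) (l.head hne)) (hlen : 3 ≤ l.length) :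
    ∃ (v : V) (c : G.Walk v v), c.IsCycle ∧ c.length = l.length := by
  obtain ⟨a, tl, rfl⟩ : ∃ a tl, l = a :: tl := ⟨l.head hne, l.tail, (List.cons_head_tail hne).symm⟩
  have hchain : List.IsChain G.Adj (a :: tl) := hc
  set P : G.Walk a ((a :: tl).getLast (by simp)) := mkW G a tl hchain with hPdef
  have hsup : P.support = a :: tl := mkW_support a tl hchain
  have hPlen : P.length = tl.length := mkW_length a tl hchain
  have hPpath : P.IsPath := by
    rw [SimpleGraph.Walk.isPath_def, hsup]
    exact hnd
  have hadj : G.Adj ((a :: tl).getLast (by simp)) a := by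
    have : (a :: tl).head hne = a := rfl
    rw [← this]
    exact hcl
  refine ⟨(a :: tl).getLast (by simp), SimpleGraph.Walk.cons hadj P, ?_, ?_⟩
  · rw [SimpleGraph.Walk.cons_isCycle_iff]
    refine ⟨hPpath, ?_⟩
    apply edge_head_not_mem P hPpath
    simp only [hPlen]
    simp only [List.length_cons] at hlen
    omega
  · simp only [SimpleGraph.Walk.length_cons, hPlen, List.length_cons]

end CycleAux

namespace LevelAux

variable {V : Type} {G : SimpleGraph V} {x : V}

lemma exists_parent (v : V) (h : G.dist x v ≠ 0) :
    ∃ u, G.Adj v u ∧ G.dist x u + 1 = G.dist x v := by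
  obtain ⟨p, hp⟩ := SimpleGraph.exists_walk_of_dist_ne_zero h
  have hlen : p.reverse.length = G.dist x v := by rw [SimpleGraph.Walk.length_reverse, hp]
  cases hq : p.reverse with
  | nil =>
    rw [hq] at hlen
    simp only [SimpleGraph.Walk.length_nil] at hlen
    exact absurd hlen.symm h
  | cons hadj q =>
    rename_i u
    rw [hq] at hlen
    simp only [SimpleGraph.Walk.length_cons] at hlen
    refine ⟨u, hadj, ?_⟩
    have h1 : G.dist x u ≤ q.length := by
      have := SimpleGraph.dist_le q.reverse
      rwa [SimpleGraph.Walk.length_reverse] at this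
    have h2 : G.dist x v ≤ G.dist x u + 1 := by
      obtain ⟨r, hr⟩ := (q.reverse.reachable).exists_walk_length_eq_dist
      have := SimpleGraph.dist_le (r.concat hadj.symm)
      rwa [SimpleGraph.Walk.length_concat, hr] at this
    omega

open scoped Classical in
/-- parent function of the BFS tree rooted at `x` -/
noncomputable def pa (G : SimpleGraph V) (x : V) (v : V) : V :=
  if h : ∃ u, G.Adj v u ∧ G.dist x u + 1 = G.dist x v then h.choose else v

lemma pa_spec {v : V} (h : G.dist x v ≠ 0) :
    G.Adj v (pa G x v) ∧ G.dist x (pa G x v) + 1 = G.dist x v := by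
  classical
  have he := exists_parent (G := G) (x := x) v h
  rw [pa]
  rw [dif_pos he]
  exact he.choose_spec

/-- `k`-fold ancestor -/
noncomputable def anc (G : SimpleGraph V) (x : V) (k : ℕ) (v : V) : V := (pa G x)^[k] v

@[simp] lemma anc_zero (v : V) : anc G x 0 v = v := rfl

lemma anc_succ (k : ℕ) (v : V) : anc G x (k+1) v = pa G x (anc G x k v) := by
  rw [anc, Function.iterate_succ', Function.comp_apply]; rfl

lemma anc_dist {v : V} {k : ℕ} (hk : k ≤ G.dist x v) :
    G.dist x (anc G x k v) = G.dist x v - k := by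
  induction k with
  | zero => simp
  | succ m ih =>
    have hm : m ≤ G.dist x v := by omega
    have ihm := ih hm
    have hne : G.dist x (anc G x m v) ≠ 0 := by omega
    have := (pa_spec hne).2
    rw [anc_succ]
    omega

lemma anc_adj {v : V} {k : ℕ} (hk : k + 1 ≤ G.dist x v) :
    G.Adj (anc G x k v) (anc G x (k+1) v) := by
  have hne : G.dist x (anc G x k v) ≠ 0 := by
    rw [anc_dist (by omega : k ≤ G.dist x v)]; omega
  rw [anc_succ]
  exact (pa_spec hne).1

lemma anc_congr {u w : V} {k : ℕ} (h : anc G x k u = anc G x k w) (j : ℕ) :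
    anc G x (k + j) u = anc G x (k + j) w := by
  have key : ∀ z, anc G x (k+j) z = (pa G x)^[j] (anc G x k z) := by
    intro z
    rw [anc, anc, add_comm, Function.iterate_add_apply]
  rw [key, key, h]

lemma anc_eq_root {v : V} (h : G.dist x v ≠ 0) : anc G x (G.dist x v) v = x := by
  have hd : G.dist x (anc G x (G.dist x v) v) = 0 := by
    rw [anc_dist (le_refl _)]; omega
  -- reachability
  have hreach : ∀ k ≤ G.dist x v, G.Reachable x (anc G x k v) := by
    intro k hk
    induction k with
    | zero => simpa using SimpleGraph.Reachable.of_dist_ne_zero h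
    | succ m ih =>
      have := ih (by omega)
      exact this.trans (SimpleGraph.Adj.reachable (anc_adj (by omega)))
  have := (hreach _ (le_refl _)).dist_eq_zero_iff.1 hd
  exact this.symm

/-- descending chain list `[v, pa v, ..., anc k v]`. -/
noncomputable def descList (G : SimpleGraph V) (x : V) (k : ℕ) (v : V) : List V :=
  (List.range (k+1)).map (fun j => anc G x j v)

@[simp] lemma descList_length (k : ℕ) (v : V) : (descList G x k v).length = k + 1 := by
  simp [descList]

lemma descList_ne_nil (k : ℕ) (v : V) : descList G x k v ≠ [] := by
  intro h
  have := congrArg List.length h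
  simp at this

lemma descList_head (k : ℕ) (v : V) (h) : (descList G x k v).head h = v := by
  rw [List.head_eq_getElem]
  simp [descList]

lemma descList_getLast (k : ℕ) (v : V) (h) : (descList G x k v).getLast h = anc G x k v := by
  rw [List.getLast_eq_getElem]
  simp [descList]

lemma descList_mem {k : ℕ} {v y : V} (h : y ∈ descList G x k v) : ∃ j ≤ k, anc G x j v = y := by
  rw [descList, List.mem_map] at h
  obtain ⟨j, hj, rfl⟩ := h
  exact ⟨j, by have := List.mem_range.1 hj; omega, rfl⟩

lemma descList_chain' {k : ℕ} {v : V} (hk : k ≤ G.dist x v) :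
    (descList G x k v).IsChain G.Adj := by
  rw [descList, List.isChain_map]
  rw [List.isChain_range_succ]
  intro m hm
  exact anc_adj (by omega)

lemma descList_nodup {k : ℕ} {v : V} (hk : k ≤ G.dist x v) :
    (descList G x k v).Nodup := by
  rw [descList]
  refine List.Nodup.map_on ?_ List.nodup_range
  intro a ha b hb hab
  rw [List.mem_range] at ha hb
  have hda : G.dist x (anc G x a v) = G.dist x v - a := anc_dist (by omega)
  have hdb : G.dist x (anc G x b v) = G.dist x v - b := anc_dist (by omega)
  rw [hab] at hda
  omega

end LevelAux

namespace EGAux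

variable {V : Type} [DecidableEq V] {G : SimpleGraph V} [DecidableRel G.Adj]

/-- degree within a finset -/
def degA (G : SimpleGraph V) [DecidableRel G.Adj] (A : Finset V) (v : V) : ℕ :=
  (A.filter (fun u => G.Adj v u)).card

lemma degA_le (A : Finset V) (v : V) (hv : v ∈ A) : degA G A v ≤ A.card - 1 := by
  have : A.filter (fun u => G.Adj v u) ⊆ A.erase v := by
    intro u hu
    simp only [Finset.mem_filter] at hu
    exact Finset.mem_erase.2 ⟨fun h => G.irrefl (h ▸ hu.2), hu.1⟩
  calc degA G A v ≤ (A.erase v).card := Finset.card_le_card this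
    _ = A.card - 1 := Finset.card_erase_of_mem hv

/-- The key "rotation" argument: a graph where every vertex of `A` has at least 3
neighbours in `A`, `A` has at least 7 vertices, every nontrivial cut of `A` has a
crossing edge, has a path on 7 vertices inside `A`. -/
lemma rotation (A : Finset V)
    (h3 : ∀ v ∈ A, 3 ≤ degA G A v) (hA7 : 7 ≤ A.card)
    (hcut : ∀ B ⊆ A, B.Nonempty → (A \ B).Nonempty → ∃ u ∈ B, ∃ w ∈ A \ B, G.Adj u w)
    (hpath : ∀ l : List V, l.IsChain G.Adj → l.Nodup → (∀ v ∈ l, v ∈ A) → l.length ≠ 7) :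
    False := by
  classical
  set Pth : ℕ → Prop := fun ℓ => ∃ l : List V, l.IsChain G.Adj ∧ l.Nodup ∧
    (∀ v ∈ l, v ∈ A) ∧ l.length = ℓ + 1 with hPth
  -- a path with one edge exists
  have hP1 : Pth 1 := by
    have hAne : A.Nonempty := Finset.card_pos.1 (by omega)
    obtain ⟨v, hv⟩ := hAne
    have h3v := h3 v hv
    have : (A.filter (fun u => G.Adj v u)).Nonempty := Finset.card_pos.1 (by
      change 0 < degA G A v at *; omega)
    obtain ⟨u, hu⟩ := this
    simp only [Finset.mem_filter] at hu
    exact ⟨[v, u], by simp [List.isChain_cons_cons, hu.2],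
      by simp [G.ne_of_adj hu.2], by simp [hv, hu.1], rfl⟩
  set L : ℕ := Nat.findGreatest Pth 5 with hLdef
  have hL1 : 1 ≤ L := Nat.le_findGreatest (by norm_num) hP1
  have hL5 : L ≤ 5 := Nat.findGreatest_le 5
  have hPL : Pth L := Nat.findGreatest_spec (by norm_num) hP1
  have hnot : ¬ Pth (L + 1) := by
    rcases Nat.lt_or_ge (L + 1) 6 with h | h
    · exact Nat.findGreatest_is_greatest (Nat.lt_succ_self L) (by omega)
    · have h6 : L + 1 = 6 := by omega
      rintro ⟨l, hc, hnd, hmem, hlen⟩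
      exact hpath l hc hnd hmem (by omega)
  obtain ⟨l, hc, hnd, hmem, hlen⟩ := hPL
  have hlne : l ≠ [] := by
    intro h; rw [h] at hlen; simp at hlen
  -- extension step
  have hext : ∀ (m : List V) (hm : m ≠ []), m.IsChain G.Adj → m.Nodup →
      (∀ v ∈ m, v ∈ A) → m.length = L + 1 → ∀ u ∈ A, G.Adj (m.head hm) u → u ∈ m := by
    intro m hm hmc hmnd hmmem hmlen u huA hadj
    by_contra hnm
    apply hnot
    refine ⟨u :: m, ?_, by simp [hmnd, hnm], ?_, by simp [hmlen]⟩
    · rw [List.isChain_cons]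
      refine ⟨?_, hmc⟩
      intro y hy
      rw [List.head?_eq_head hm] at hy
      cases hy
      exact hadj.symm
    · intro v hv
      rcases List.mem_cons.1 hv with rfl | hv
      · exact huA
      · exact hmmem v hv
  set v0 := l.head hlne with hv0
  set vm := l.getLast hlne with hvm
  have hv0A : v0 ∈ A := hmem _ (List.head_mem hlne)
  have hvmA : vm ∈ A := hmem _ (List.getLast_mem hlne)
  -- neighbours of v0 in A lie on l
  have hnbr0 : ∀ u ∈ A, G.Adj v0 u → u ∈ l := fun u hu ha =>
    hext l hlne hc hnd hmem hlen u hu ha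
  -- neighbours of vm in A lie on l
  have hnbrm : ∀ u ∈ A, G.Adj vm u → u ∈ l := by
    intro u hu ha
    have hrne : l.reverse ≠ [] := by simp [hlne]
    have hcr : l.reverse.IsChain G.Adj := by
      rw [List.isChain_reverse]
      exact hc.imp (fun a b h => h.symm)
    have hh : l.reverse.head hrne = vm := List.head_reverse hrne
    have := hext l.reverse hrne hcr (by simpa using hnd) (by simpa using hmem)
      (by simpa using hlen) u hu (by rwa [hh])
    simpa using this
  have hlpos : 0 < l.length := List.length_pos_iff.2 hlne
  have hgetIdx : ∀ (u : V) (k : ℕ), u ∈ l → l.idxOf u = k → ∃ (hk : k < l.length), l[k] = u := by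
    intro u k hul hk
    have hlt := List.idxOf_lt_length_iff.2 hul
    refine ⟨hk ▸ hlt, ?_⟩
    have h1 : l[l.idxOf u]? = some u := by
      rw [List.getElem?_eq_getElem hlt, List.getElem_idxOf]
    rw [hk] at h1
    rw [List.getElem?_eq_getElem (hk ▸ hlt)] at h1
    exact Option.some.inj h1
  have hhead0 : l[0] = v0 := (List.head_eq_getElem hlne).symm
  have hlastE : l[l.length - 1] = vm := (List.getLast_eq_getElem hlne).symm
  -- index sets
  set N0 : Finset V := A.filter (fun u => G.Adj v0 u) with hN0
  set Nm : Finset V := A.filter (fun u => G.Adj vm u) with hNm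
  have hN0card : 3 ≤ N0.card := h3 v0 hv0A
  have hNmcard : 3 ≤ Nm.card := h3 vm hvmA
  have hN0mem : ∀ u ∈ N0, u ∈ l ∧ l.idxOf u ≠ 0 ∧ l.idxOf u < l.length := by
    intro u hu
    simp only [hN0, Finset.mem_filter] at hu
    have hul : u ∈ l := hnbr0 u hu.1 hu.2
    have hlt : l.idxOf u < l.length := List.idxOf_lt_length_iff.2 hul
    refine ⟨hul, ?_, hlt⟩
    intro h0
    obtain ⟨hk, hku⟩ := hgetIdx u 0 hul h0
    rw [hhead0] at hku
    exact G.irrefl (hku ▸ hu.2)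
  have hNmmem : ∀ u ∈ Nm, u ∈ l ∧ l.idxOf u ≠ l.length - 1 ∧ l.idxOf u < l.length := by
    intro u hu
    simp only [hNm, Finset.mem_filter] at hu
    have hul : u ∈ l := hnbrm u hu.1 hu.2
    have hlt : l.idxOf u < l.length := List.idxOf_lt_length_iff.2 hul
    refine ⟨hul, ?_, hlt⟩
    intro h0
    obtain ⟨hk, hku⟩ := hgetIdx u (l.length - 1) hul h0
    rw [hlastE] at hku
    exact G.irrefl (hku ▸ hu.2)
  set S : Finset ℕ := N0.image (fun u => l.idxOf u - 1) with hS
  set T : Finset ℕ := Nm.image (fun u => l.idxOf u) with hT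
  have hScard : 3 ≤ S.card := by
    rw [hS, Finset.card_image_of_injOn]
    · exact hN0card
    · intro a ha b hb hab
      obtain ⟨hal, ha0, halt⟩ := hN0mem a ha
      obtain ⟨hbl, hb0, hblt⟩ := hN0mem b hb
      have hab' : l.idxOf a - 1 = l.idxOf b - 1 := hab
      have : l.idxOf a = l.idxOf b := by omega
      have h1 : l[l.idxOf a] = a := List.getElem_idxOf halt
      have h2 : l[l.idxOf b] = b := List.getElem_idxOf hblt
      rw [← h1, ← h2]
      congr 1
  have hTcard : 3 ≤ T.card := by
    rw [hT, Finset.card_image_of_injOn]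
    · exact hNmcard
    · intro a ha b hb hab
      obtain ⟨hal, ha0, halt⟩ := hNmmem a ha
      obtain ⟨hbl, hb0, hblt⟩ := hNmmem b hb
      have hab' : l.idxOf a = l.idxOf b := hab
      have h1 : l[l.idxOf a] = a := List.getElem_idxOf halt
      have h2 : l[l.idxOf b] = b := List.getElem_idxOf hblt
      rw [← h1, ← h2]
      congr 1
  have hSsub : S ⊆ Finset.range L := by
    intro i hi
    rw [hS, Finset.mem_image] at hi
    obtain ⟨u, hu, rfl⟩ := hi
    obtain ⟨-, h0, hlt⟩ := hN0mem u hu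
    rw [Finset.mem_range]
    omega
  have hTsub : T ⊆ Finset.range L := by
    intro i hi
    rw [hT, Finset.mem_image] at hi
    obtain ⟨u, hu, rfl⟩ := hi
    obtain ⟨-, h0, hlt⟩ := hNmmem u hu
    rw [Finset.mem_range]
    omega
  -- pigeonhole
  have hST : (S ∩ T).Nonempty := by
    rw [Finset.nonempty_iff_ne_empty]
    intro hempty
    have hdisj : Disjoint S T := Finset.disjoint_iff_inter_eq_empty.2 hempty
    have : (S ∪ T).card = S.card + T.card := Finset.card_union_of_disjoint hdisj
    have hsub : S ∪ T ⊆ Finset.range L := Finset.union_subset hSsub hTsub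
    have := Finset.card_le_card hsub
    rw [Finset.card_range] at this
    omega
  obtain ⟨i, hiST⟩ := hST
  rw [Finset.mem_inter] at hiST
  obtain ⟨hiS, hiT⟩ := hiST
  -- extract adjacencies
  have hiL : i < L := by
    have := hSsub hiS; rwa [Finset.mem_range] at this
  have hadj1 : ∃ (h : i + 1 < l.length), G.Adj v0 l[i+1] := by
    rw [hS, Finset.mem_image] at hiS
    obtain ⟨u, hu, hui⟩ := hiS
    obtain ⟨hul, h0, hlt⟩ := hN0mem u hu
    have hidx : l.idxOf u = i + 1 := by omega
    obtain ⟨hk, hku⟩ := hgetIdx u (i+1) hul hidx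
    refine ⟨hk, ?_⟩
    rw [hku]
    simp only [hN0, Finset.mem_filter] at hu
    exact hu.2
  have hadj2 : ∃ (h : i < l.length), G.Adj vm l[i] := by
    rw [hT, Finset.mem_image] at hiT
    obtain ⟨u, hu, hui⟩ := hiT
    obtain ⟨hul, h0, hlt⟩ := hNmmem u hu
    obtain ⟨hk, hku⟩ := hgetIdx u i hul hui
    refine ⟨hk, ?_⟩
    rw [hku]
    simp only [hNm, Finset.mem_filter] at hu
    exact hu.2
  obtain ⟨hi1len, hadj1⟩ := hadj1
  obtain ⟨hilen, hadj2⟩ := hadj2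
  -- build the cycle list
  set c : List V := l.take (i+1) ++ (l.drop (i+1)).reverse with hcdef
  have htakelen : (l.take (i+1)).length = i + 1 := by
    rw [List.length_take]; omega
  have hdroplen : (l.drop (i+1)).length = L - i := by
    rw [List.length_drop]; omega
  have htakene : l.take (i+1) ≠ [] := by
    intro h; rw [h] at htakelen; simp at htakelen
  have hdropne : l.drop (i+1) ≠ [] := by
    intro h
    rw [h] at hdroplen
    simp at hdroplen
    omega
  have hcperm : c.Perm l := by
    have h1 : c.Perm (l.take (i+1) ++ l.drop (i+1)) :=
      List.Perm.append_left _ (List.reverse_perm _)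
    rwa [List.take_append_drop] at h1
  have hcnd : c.Nodup := hcperm.nodup_iff.2 hnd
  have hcmem : ∀ v ∈ c, v ∈ A := fun v hv => hmem v (hcperm.mem_iff.1 hv)
  have hclen : c.length = L + 1 := by rw [hcperm.length_eq, hlen]
  have hcc : c.IsChain G.Adj := by
    rw [hcdef, List.isChain_append]
    refine ⟨hc.prefix (List.take_prefix _ _), ?_, ?_⟩
    · rw [List.isChain_reverse]
      exact (hc.suffix (List.drop_suffix _ _)).imp (fun a b h => h.symm)
    · intro xx hx yy hy
      rw [List.getLast?_eq_getLast htakene] at hx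
      rw [List.head?_eq_head (by simp [hdropne])] at hy
      cases hx; cases hy
      have h1 : (l.take (i+1)).getLast htakene = l[i] := by
        rw [List.getLast_eq_getElem]
        simp only [htakelen]
        rw [List.getElem_take]
        simp only [Nat.add_sub_cancel]
      have h2 : ((l.drop (i+1)).reverse).head (by simp [hdropne]) = vm := by
        rw [List.head_reverse, List.getLast_drop]
      rw [h1, h2]
      exact hadj2.symm
  have hcne : c ≠ [] := by simp [hcdef, htakene]
  have hchead : ∀ (h : c ≠ []), c.head h = v0 := by
    intro h
    have h2 : (l.take (i+1) ++ (l.drop (i+1)).reverse).head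
        (by simp [htakene]) = v0 := by
      rw [List.head_append_left htakene, List.head_take]
    exact h2
  have hclast : ∀ (h : c ≠ []), c.getLast h = l[i+1] := by
    intro h
    have h2 : (l.take (i+1) ++ (l.drop (i+1)).reverse).getLast
        (by simp [hdropne]) = l[i+1] := by
      rw [List.getLast_append_of_ne_nil _ (by simp [hdropne]), List.getLast_reverse,
        List.head_drop]
    exact h2
  have hcclose : G.Adj (c.getLast hcne) (c.head hcne) := by
    rw [hchead, hclast]
    exact hadj1.symm
  -- the cut around the cycle
  set B : Finset V := c.toFinset with hBdef
  have hBsub : B ⊆ A := by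
    intro v hv
    rw [hBdef, List.mem_toFinset] at hv
    exact hcmem v hv
  have hBne : B.Nonempty := ⟨c.head hcne, by rw [hBdef, List.mem_toFinset]; exact List.head_mem hcne⟩
  have hBcard : B.card = L + 1 := by
    rw [hBdef, List.toFinset_card_of_nodup hcnd, hclen]
  have hABne : (A \ B).Nonempty := by
    rw [← Finset.card_pos, Finset.card_sdiff_of_subset hBsub]
    omega
  obtain ⟨u, huB, w, hwAB, huw⟩ := hcut B hBsub hBne hABne
  rw [hBdef, List.mem_toFinset] at huB
  rw [Finset.mem_sdiff] at hwAB
  obtain ⟨hwA, hwB⟩ := hwAB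
  have hwc : w ∉ c := by
    intro h
    exact hwB (by rw [hBdef, List.mem_toFinset]; exact h)
  -- rotate c so that it starts at u
  obtain ⟨j, hj, hcj⟩ := List.mem_iff_getElem.1 huB
  set rot : List V := c.drop j ++ c.take j with hrotdef
  have hdropne' : c.drop j ≠ [] := by
    intro h
    have := congrArg List.length h
    rw [List.length_drop] at this
    simp at this
    omega
  have hrotperm : rot.Perm c := by
    have h1 : rot.Perm (c.take j ++ c.drop j) := List.perm_append_comm
    rwa [List.take_append_drop] at h1
  have hrotne : rot ≠ [] := by
    intro h
    exact hdropne' (List.append_eq_nil_iff.1 (hrotdef ▸ h)).1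
  have hrothead : ∀ (h : rot ≠ []), rot.head h = u := by
    intro h
    have h2 : (c.drop j ++ c.take j).head (by simp [hdropne']) = u := by
      rw [List.head_append_left hdropne', List.head_drop]
      exact hcj
    exact h2
  have hrotc : rot.IsChain G.Adj := by
    rw [hrotdef, List.isChain_append]
    refine ⟨hcc.suffix (List.drop_suffix _ _), hcc.prefix (List.take_prefix _ _), ?_⟩
    intro xx hx yy hy
    rw [List.getLast?_eq_getLast hdropne'] at hx
    cases hx
    have hytake : c.take j ≠ [] := by
      intro hh
      rw [hh] at hy
      simp at hy
    rw [List.head?_eq_head hytake] at hy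
    cases hy
    rw [List.getLast_drop, List.head_take]
    exact hcclose
  -- the extended path: w :: rot
  apply hnot
  refine ⟨w :: rot, ?_, ?_, ?_, ?_⟩
  · rw [List.isChain_cons]
    refine ⟨?_, hrotc⟩
    intro y hy
    rw [List.head?_eq_head hrotne] at hy
    cases hy
    rw [hrothead]
    exact huw.symm
  · rw [List.nodup_cons]
    exact ⟨fun h => hwc (hrotperm.mem_iff.1 h), hrotperm.nodup_iff.2 hcnd⟩
  · intro v hv
    rcases List.mem_cons.1 hv with rfl | hv
    · exact hwA
    · exact hcmem v (hrotperm.mem_iff.1 hv)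
  · simp only [List.length_cons]
    rw [hrotperm.length_eq, hclen]


/-- Erdős–Gallai-type bound: if there is no path on 7 vertices inside `A`, then the sum of
the degrees (within `A`) of vertices of `A` is at most `5 * |A|`. -/
theorem eg_bound (G : SimpleGraph V) [DecidableRel G.Adj] :
    ∀ (n : ℕ) (A : Finset V), A.card ≤ n →
    (∀ l : List V, l.IsChain G.Adj → l.Nodup → (∀ v ∈ l, v ∈ A) → l.length ≠ 7) →
    ∑ v ∈ A, degA G A v ≤ 5 * A.card := by
  intro n
  induction n with
  | zero =>
    intro A hA _
    have : A = ∅ := Finset.card_eq_zero.1 (by omega)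
    subst this
    simp
  | succ n ih =>
    intro A hA hpath
    by_cases hsmall : A.card ≤ 6
    · -- small sets: degrees are at most |A| - 1 ≤ 5
      calc ∑ v ∈ A, degA G A v ≤ ∑ v ∈ A, 5 := by
            apply Finset.sum_le_sum
            intro v hv
            have := degA_le (G := G) A v hv
            omega
        _ = 5 * A.card := by rw [Finset.sum_const, smul_eq_mul, mul_comm]
    · push_neg at hsmall
      by_cases hdeg : ∃ v ∈ A, degA G A v ≤ 2
      · -- remove a low-degree vertex
        obtain ⟨v, hvA, hv2⟩ := hdeg
        set A' : Finset V := A.erase v with hA'def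
        have hA'sub : A' ⊆ A := Finset.erase_subset _ _
        have hA'card : A'.card = A.card - 1 := Finset.card_erase_of_mem hvA
        have hsum : ∑ w ∈ A, degA G A w = ∑ w ∈ A', degA G A' w + 2 * degA G A v := by
          have h1 : ∑ w ∈ A, degA G A w = degA G A v + ∑ w ∈ A', degA G A w :=
            (Finset.add_sum_erase A _ hvA).symm
          have h2 : ∀ w ∈ A', degA G A w = degA G A' w + (if G.Adj w v then 1 else 0) := by
            intro w hw
            have hvnA' : v ∉ A' := Finset.notMem_erase _ _
            have hAins : A = insert v A' := (Finset.insert_erase hvA).symm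
            rw [degA, degA, hAins, Finset.filter_insert]
            by_cases hwv : G.Adj w v
            · rw [if_pos hwv, Finset.card_insert_of_notMem
                (fun hmem => hvnA' (Finset.mem_of_mem_filter _ hmem))]
              simp [hwv]
            · rw [if_neg hwv]
              simp [hwv]
          have h3 : ∑ w ∈ A', degA G A w
              = ∑ w ∈ A', degA G A' w + ∑ w ∈ A', (if G.Adj w v then 1 else 0) := by
            rw [← Finset.sum_add_distrib]
            exact Finset.sum_congr rfl h2
          have h4 : ∑ w ∈ A', (if G.Adj w v then 1 else 0) = degA G A v := by
            rw [Finset.sum_boole]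
            rw [degA]
            have : A.filter (fun u => G.Adj v u) = A'.filter (fun w => G.Adj w v) := by
              apply Finset.ext
              intro u
              simp only [Finset.mem_filter, hA'def, Finset.mem_erase]
              constructor
              · rintro ⟨huA, hadj⟩
                exact ⟨⟨fun h => G.irrefl (h ▸ hadj), huA⟩, hadj.symm⟩
              · rintro ⟨⟨hne, huA⟩, hadj⟩
                exact ⟨huA, hadj.symm⟩
            rw [this]
            simp
          omega
        have hA'path : ∀ l : List V, l.IsChain G.Adj → l.Nodup → (∀ v ∈ l, v ∈ A') → l.length ≠ 7 :=
          fun l hc hnd hm => hpath l hc hnd (fun v hv => hA'sub (hm v hv))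
        have hih := ih A' (by omega) hA'path
        omega
      · push_neg at hdeg
        have h3 : ∀ v ∈ A, 3 ≤ degA G A v := fun v hv => hdeg v hv
        by_cases hsplit : ∃ B ⊆ A, B.Nonempty ∧ (A \ B).Nonempty ∧
            ∀ u ∈ B, ∀ w ∈ A \ B, ¬ G.Adj u w
        · obtain ⟨B, hBsub, hBne, hABne, hnoadj⟩ := hsplit
          have hBcard : 1 ≤ B.card := Finset.card_pos.2 hBne
          have hABcard : 1 ≤ (A \ B).card := Finset.card_pos.2 hABne
          have hcards : (A \ B).card + B.card = A.card := Finset.card_sdiff_add_card_eq_card hBsub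
          have hdB : ∀ v ∈ B, degA G A v = degA G B v := by
            intro v hv
            rw [degA, degA]
            congr 1
            apply Finset.ext
            intro u
            simp only [Finset.mem_filter]
            constructor
            · rintro ⟨huA, hadj⟩
              by_contra hcon
              simp only [not_and] at hcon
              have huB : u ∉ B := fun h => hcon h hadj
              exact hnoadj v hv u (Finset.mem_sdiff.2 ⟨huA, huB⟩) hadj
            · rintro ⟨huB, hadj⟩
              exact ⟨hBsub huB, hadj⟩
          have hdAB : ∀ v ∈ A \ B, degA G A v = degA G (A \ B) v := by
            intro v hv
            rw [degA, degA]
            congr 1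
            apply Finset.ext
            intro u
            simp only [Finset.mem_filter]
            constructor
            · rintro ⟨huA, hadj⟩
              refine ⟨Finset.mem_sdiff.2 ⟨huA, ?_⟩, hadj⟩
              intro huB
              exact hnoadj u huB v hv hadj.symm
            · rintro ⟨huAB, hadj⟩
              exact ⟨(Finset.mem_sdiff.1 huAB).1, hadj⟩
          have hsum : ∑ v ∈ A, degA G A v
              = ∑ v ∈ A \ B, degA G (A \ B) v + ∑ v ∈ B, degA G B v := by
            rw [← Finset.sum_sdiff hBsub]
            congr 1
            · exact Finset.sum_congr rfl hdAB
            · exact Finset.sum_congr rfl hdB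
          have hihB := ih B (by omega) (fun l hc hnd hm => hpath l hc hnd
            (fun v hv => hBsub (hm v hv)))
          have hihAB := ih (A \ B) (by omega) (fun l hc hnd hm => hpath l hc hnd
            (fun v hv => (Finset.mem_sdiff.1 (hm v hv)).1))
          omega
        · push_neg at hsplit
          exact absurd hpath (by
            intro hp
            exact rotation A h3 (by omega) (fun B hB hBne hABne => hsplit B hB hBne hABne) hp)

end EGAux

section Main

open LevelAux EGAux
open CycleAux (cycle_of_list)

variable {V : Type} {G : SimpleGraph V} {x : V} {t : ℕ}

/-- produce a contradiction from a closed chain list of forbidden length -/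
lemma no_cycle_list
    (hcyc : ∀ (v : V) (w : G.Walk v v), w.IsCycle →
      ¬(8 ≤ w.length ∧ w.length ≤ 2 * t + 2 ∧ Even w.length))
    (l : List V) (hne : l ≠ []) (hc : l.IsChain G.Adj) (hnd : l.Nodup)
    (hcl : G.Adj (l.getLast hne) (l.head hne))
    (hlen8 : 8 ≤ l.length) (hlenU : l.length ≤ 2*t+2) (heven : Even l.length) : False := by
  obtain ⟨v, c, hcyc', hclen⟩ := cycle_of_list l hne hc hnd hcl (by omega)
  exact hcyc v c hcyc' ⟨by omega, by omega, by rwa [hclen]⟩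

section Lemmas

/-- Lemma 1: two distinct level-t vertices with a common level-t neighbour have the
same grandparent. -/
lemma anc2_eq (ht : 3 ≤ t)
    (hcyc : ∀ (v : V) (w : G.Walk v v), w.IsCycle →
      ¬(8 ≤ w.length ∧ w.length ≤ 2 * t + 2 ∧ Even w.length))
    (u w v : V) (hu : G.dist x u = t) (hw : G.dist x w = t)
    (hv : G.dist x v = t) (huw : u ≠ w) (h1 : G.Adj u v) (h2 : G.Adj w v) :
    anc G x 2 u = anc G x 2 w := by
  classical
  by_contra hne2
  have hdu : G.dist x u ≠ 0 := by omega
  have hdw : G.dist x w ≠ 0 := by omega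
  set P : ℕ → Prop := fun ℓ => anc G x (t - ℓ) u = anc G x (t - ℓ) w with hPdef
  have hP0 : P 0 := by
    show anc G x (t - 0) u = anc G x (t - 0) w
    have ha : anc G x t u = x := by
      have := anc_eq_root (v := u) (G := G) (x := x) hdu
      rwa [hu] at this
    have hb : anc G x t w = x := by
      have := anc_eq_root (v := w) (G := G) (x := x) hdw
      rwa [hw] at this
    rw [Nat.sub_zero, ha, hb]
  set j : ℕ := Nat.findGreatest P (t-2) with hjdef
  have hPj : P j := Nat.findGreatest_spec (Nat.zero_le _) hP0
  have hjle : j ≤ t - 2 := Nat.findGreatest_le _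
  have hnP : ¬ P (t-2) := by
    intro hp
    apply hne2
    have hp' : anc G x (t - (t-2)) u = anc G x (t - (t-2)) w := hp
    rwa [(by omega : t - (t - 2) = 2)] at hp'
  have hjlt : j < t - 2 := lt_of_le_of_ne hjle (fun hh => hnP (hh ▸ hPj))
  have hgt : ∀ ℓ, j < ℓ → ℓ ≤ t - 2 → ¬ P ℓ := fun ℓ h1 h2 =>
    Nat.findGreatest_is_greatest h1 h2
  set k : ℕ := t - j with hkdef
  have hk3 : 3 ≤ k := by omega
  have hkt : k ≤ t := by omega
  have hapex : anc G x k u = anc G x k w := hPj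
  have hpa : anc G x 1 u ≠ anc G x 1 w := by
    intro h
    exact hne2 (anc_congr h 1)
  -- distinctness of the two descending chains
  have hcross : ∀ a, a ∈ descList G x k u → a ∈ descList G x (k-1) w → False := by
    intro a hau haw
    obtain ⟨j1, hj1, rfl⟩ := descList_mem hau
    obtain ⟨j2, hj2, heq⟩ := descList_mem haw
    have hd1 : G.dist x (anc G x j1 u) = t - j1 := by
      have := anc_dist (v := u) (G := G) (x := x) (k := j1) (by omega)
      rwa [hu] at this
    have hd2 : G.dist x (anc G x j2 w) = t - j2 := by
      have := anc_dist (v := w) (G := G) (x := x) (k := j2) (by omega)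
      rwa [hw] at this
    rw [heq] at hd2
    have hj12 : j1 = j2 := by omega
    subst hj12
    rcases Nat.lt_or_ge j1 2 with hj2lt | hj2lt
    · interval_cases j1
      · simp only [anc_zero] at heq
        exact huw heq.symm
      · exact hpa heq.symm
    · -- j1 ≥ 2 : contradicts maximality of j
      have hℓ : t - (t - j1) = j1 := by omega
      apply hgt (t - j1) (by omega) (by omega)
      show anc G x (t - (t - j1)) u = anc G x (t - (t - j1)) w
      rw [hℓ]
      exact heq.symm
  have hvne : ∀ (z : V) (k' : ℕ), G.Adj z v → G.dist x z = t → k' ≤ t → v ∉ descList G x k' z := by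
    intro z k' hadj hdz hk' hmem
    obtain ⟨j1, hj1, heq⟩ := descList_mem hmem
    have hd1 : G.dist x (anc G x j1 z) = t - j1 := by
      have := anc_dist (v := z) (G := G) (x := x) (k := j1) (by omega)
      rwa [hdz] at this
    rw [heq, hv] at hd1
    have : j1 = 0 := by omega
    subst this
    simp only [anc_zero] at heq
    exact hadj.ne' (by rw [heq])
  -- assemble the cycle list
  set D1 : List V := descList G x k u with hD1
  set D2 : List V := (descList G x (k-1) w).reverse with hD2
  set l : List V := D1 ++ (D2 ++ [v]) with hldef
  have hD1ne : D1 ≠ [] := descList_ne_nil _ _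
  have hD2ne : D2 ≠ [] := by simp [hD2, descList_ne_nil]
  have hD1last : ∀ h, D1.getLast h = anc G x k u := by
    intro h
    have hh : (descList G x k u).getLast (descList_ne_nil _ _) = anc G x k u :=
      descList_getLast _ _ _
    exact hh
  have hD2head : ∀ h, D2.head h = anc G x (k-1) w := by
    intro h
    have hh : ((descList G x (k-1) w).reverse).head (by simp [descList_ne_nil]) =
        anc G x (k-1) w := by
      rw [List.head_reverse, descList_getLast]
    exact hh
  have hD2last : ∀ h, D2.getLast h = w := by
    intro h
    have hh : ((descList G x (k-1) w).reverse).getLast (by simp [descList_ne_nil]) = w := by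
      rw [List.getLast_reverse, descList_head]
    exact hh
  have hchain : l.IsChain G.Adj := by
    rw [hldef, List.isChain_append]
    refine ⟨descList_chain' (by omega), ?_, ?_⟩
    · rw [List.isChain_append]
      refine ⟨?_, List.isChain_singleton v, ?_⟩
      · rw [hD2, List.isChain_reverse]
        exact (descList_chain' (by omega)).imp (fun a b h => h.symm)
      · intro xx hx yy hy
        rw [List.getLast?_eq_getLast hD2ne] at hx
        cases hx
        simp only [List.head?_cons, Option.mem_some_iff] at hy
        cases hy
        rw [hD2last]
        exact h2
    · intro xx hx yy hy
      rw [List.getLast?_eq_getLast hD1ne] at hx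
      cases hx
      rw [List.head?_eq_head (by simp [hD2ne])] at hy
      cases hy
      rw [List.head_append_left hD2ne, hD2head, hD1last, hapex]
      have hadj := anc_adj (v := w) (G := G) (x := x) (k := k-1) (by omega)
      have hkk : k - 1 + 1 = k := by omega
      rw [hkk] at hadj
      exact hadj.symm
  have hlne : l ≠ [] := by simp [hldef, hD1ne]
  have hlhead : l.head hlne = u := by
    have hh : (D1 ++ (D2 ++ [v])).head (by simp [hD1ne]) = u := by
      rw [List.head_append_left hD1ne]
      have : D1.head hD1ne = u := by
        have h3 : (descList G x k u).head (descList_ne_nil _ _) = u := descList_head _ _ _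
        exact h3
      exact this
    exact hh
  have hllast : l.getLast hlne = v := by
    have hh : (D1 ++ (D2 ++ [v])).getLast (by simp) = v := by
      rw [List.getLast_append_of_ne_nil _ (by simp), List.getLast_append_of_ne_nil _ (by simp)]
      rfl
    exact hh
  have hnd : l.Nodup := by
    rw [hldef, List.nodup_append, List.nodup_append]
    refine ⟨descList_nodup (by omega), ⟨?_, List.nodup_singleton v, ?_⟩, ?_⟩
    · rw [hD2, List.nodup_reverse]
      exact descList_nodup (by omega)
    · intro a haD2 b hav hab
      subst hab
      rw [List.mem_singleton] at hav
      subst hav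
      exact hvne w (k-1) h2 hw (by omega) (by rw [hD2, List.mem_reverse] at haD2; exact haD2)
    · intro a haD1 b ha2 hab
      subst hab
      rcases List.mem_append.1 ha2 with h | h
      · exact hcross a haD1 (by rwa [hD2, List.mem_reverse] at h)
      · rw [List.mem_singleton] at h
        subst h
        exact hvne u k h1 hu (by omega) haD1
  have hlen : l.length = 2 * k + 2 := by
    simp [hldef, hD1, hD2]
    omega
  exact no_cycle_list hcyc l hlne hchain hnd
    (by rw [hlhead, hllast]; exact h1.symm) (by omega) (by omega) (by rw [hlen]; exact ⟨k+1, by omega⟩)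

lemma ne_of_dist {a b : V} (h : G.dist x a ≠ G.dist x b) : a ≠ b :=
  fun hh => h (hh ▸ rfl)

/-- Lemma 2: the endpoints of any 4-edge path inside level `t` have the same parent. -/
lemma same_parent (ht : 3 ≤ t)
    (hcyc : ∀ (v : V) (w : G.Walk v v), w.IsCycle →
      ¬(8 ≤ w.length ∧ w.length ≤ 2 * t + 2 ∧ Even w.length))
    (v0 v1 v2 v3 v4 : V)
    (hd0 : G.dist x v0 = t) (hd1 : G.dist x v1 = t) (hd2 : G.dist x v2 = t)
    (hd3 : G.dist x v3 = t) (hd4 : G.dist x v4 = t)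
    (hnd : ([v0, v1, v2, v3, v4] : List V).Nodup)
    (ha01 : G.Adj v0 v1) (ha12 : G.Adj v1 v2) (ha23 : G.Adj v2 v3) (ha34 : G.Adj v3 v4) :
    anc G x 1 v0 = anc G x 1 v4 := by
  classical
  simp only [List.nodup_cons, List.mem_cons, List.mem_singleton, List.not_mem_nil, or_false,
    not_or, List.nodup_nil, and_true] at hnd
  obtain ⟨⟨n01, n02, n03, n04⟩, ⟨n12, n13, n14⟩, ⟨n23, n24⟩, hn34⟩ := hnd
  have n34 : v3 ≠ v4 := hn34.1
  have h02 : anc G x 2 v0 = anc G x 2 v2 :=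
    anc2_eq ht hcyc v0 v2 v1 hd0 hd2 hd1 n02 ha01 ha12.symm
  have h24 : anc G x 2 v2 = anc G x 2 v4 :=
    anc2_eq ht hcyc v2 v4 v3 hd2 hd4 hd3 n24 ha23 ha34.symm
  by_contra hne
  -- distances of ancestors
  have dB : G.dist x (anc G x 1 v0) = t - 1 := by
    have := anc_dist (v := v0) (G := G) (x := x) (k := 1) (by omega); rwa [hd0] at this
  have dC : G.dist x (anc G x 2 v0) = t - 2 := by
    have := anc_dist (v := v0) (G := G) (x := x) (k := 2) (by omega); rwa [hd0] at this
  have dD : G.dist x (anc G x 1 v4) = t - 1 := by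
    have := anc_dist (v := v4) (G := G) (x := x) (k := 1) (by omega); rwa [hd4] at this
  -- adjacencies
  have aAB : G.Adj v0 (anc G x 1 v0) := by
    have := anc_adj (v := v0) (G := G) (x := x) (k := 0) (by omega)
    simpa using this
  have aBC : G.Adj (anc G x 1 v0) (anc G x 2 v0) :=
    anc_adj (v := v0) (G := G) (x := x) (k := 1) (by omega)
  have aCD : G.Adj (anc G x 2 v0) (anc G x 1 v4) := by
    rw [h02, h24]
    exact (anc_adj (v := v4) (G := G) (x := x) (k := 1) (by omega)).symm
  have aDE : G.Adj (anc G x 1 v4) v4 := by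
    have := anc_adj (v := v4) (G := G) (x := x) (k := 0) (by omega)
    simpa using this.symm
  set l : List V := [v0, anc G x 1 v0, anc G x 2 v0, anc G x 1 v4, v4, v3, v2, v1] with hldef
  have hlne : l ≠ [] := by simp [hldef]
  have hchain : l.IsChain G.Adj := by
    simp only [hldef, List.isChain_cons_cons, List.isChain_singleton, and_true]
    exact ⟨aAB, aBC, aCD, aDE, ha34.symm, ha23.symm, ha12.symm⟩
  have hnodup : l.Nodup := by
    simp only [hldef, List.nodup_cons, List.mem_cons, List.mem_singleton, List.not_mem_nil,
      or_false, not_or, List.nodup_nil, and_true]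
    refine ⟨⟨?_, ?_, ?_, ?_, ?_, ?_, ?_⟩, ⟨?_, ?_, ?_, ?_, ?_, ?_⟩, ⟨?_, ?_, ?_, ?_, ?_⟩,
      ⟨?_, ?_, ?_, ?_⟩, ⟨?_, ?_, ?_⟩, ⟨?_, ?_⟩, ?_⟩
    · exact ne_of_dist (by rw [hd0, dB]; omega)
    · exact ne_of_dist (by rw [hd0, dC]; omega)
    · exact ne_of_dist (by rw [hd0, dD]; omega)
    · exact n04
    · exact n03
    · exact n02
    · exact n01
    · exact ne_of_dist (by rw [dB, dC]; omega)
    · exact hne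
    · exact ne_of_dist (by rw [dB, hd4]; omega)
    · exact ne_of_dist (by rw [dB, hd3]; omega)
    · exact ne_of_dist (by rw [dB, hd2]; omega)
    · exact ne_of_dist (by rw [dB, hd1]; omega)
    · exact ne_of_dist (by rw [dC, dD]; omega)
    · exact ne_of_dist (by rw [dC, hd4]; omega)
    · exact ne_of_dist (by rw [dC, hd3]; omega)
    · exact ne_of_dist (by rw [dC, hd2]; omega)
    · exact ne_of_dist (by rw [dC, hd1]; omega)
    · exact ne_of_dist (by rw [dD, hd4]; omega)
    · exact ne_of_dist (by rw [dD, hd3]; omega)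
    · exact ne_of_dist (by rw [dD, hd2]; omega)
    · exact ne_of_dist (by rw [dD, hd1]; omega)
    · exact (fun h => n34 h.symm)
    · exact (fun h => n24 h.symm)
    · exact (fun h => n14 h.symm)
    · exact (fun h => n23 h.symm)
    · exact (fun h => n13 h.symm)
    · exact ⟨Ne.symm n12, not_false⟩
  have hlen : l.length = 8 := by simp [hldef]
  have hhead : l.head hlne = v0 := by simp [hldef]
  have hlast : l.getLast hlne = v1 := by simp [hldef]
  exact no_cycle_list hcyc l hlne hchain hnodup
    (by rw [hhead, hlast]; exact ha01.symm) (by omega) (by omega) (by rw [hlen]; decide)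

/-- Lemma 3: there is no 6-edge path inside level `t`. -/
lemma no_sixpath (ht : 3 ≤ t)
    (hcyc : ∀ (v : V) (w : G.Walk v v), w.IsCycle →
      ¬(8 ≤ w.length ∧ w.length ≤ 2 * t + 2 ∧ Even w.length))
    (v0 v1 v2 v3 v4 v5 v6 : V)
    (hd0 : G.dist x v0 = t) (hd1 : G.dist x v1 = t) (hd2 : G.dist x v2 = t)
    (hd3 : G.dist x v3 = t) (hd4 : G.dist x v4 = t) (hd5 : G.dist x v5 = t)
    (hd6 : G.dist x v6 = t)
    (hnd : ([v0, v1, v2, v3, v4, v5, v6] : List V).Nodup)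
    (ha01 : G.Adj v0 v1) (ha12 : G.Adj v1 v2) (ha23 : G.Adj v2 v3) (ha34 : G.Adj v3 v4)
    (ha45 : G.Adj v4 v5) (ha56 : G.Adj v5 v6) : False := by
  classical
  have hnd04 : ([v0, v1, v2, v3, v4] : List V).Nodup := by
    have hsub : ([v0, v1, v2, v3, v4] : List V) <+: [v0, v1, v2, v3, v4, v5, v6] :=
      ⟨[v5, v6], rfl⟩
    exact hnd.sublist hsub.sublist
  have hnd26 : ([v2, v3, v4, v5, v6] : List V).Nodup := by
    have hsub : ([v2, v3, v4, v5, v6] : List V) <:+ [v0, v1, v2, v3, v4, v5, v6] :=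
      ⟨[v0, v1], rfl⟩
    exact hnd.sublist hsub.sublist
  have hp04 : anc G x 1 v0 = anc G x 1 v4 :=
    same_parent ht hcyc v0 v1 v2 v3 v4 hd0 hd1 hd2 hd3 hd4 hnd04 ha01 ha12 ha23 ha34
  have hp26 : anc G x 1 v2 = anc G x 1 v6 :=
    same_parent ht hcyc v2 v3 v4 v5 v6 hd2 hd3 hd4 hd5 hd6 hnd26 ha23 ha34 ha45 ha56
  simp only [List.nodup_cons, List.mem_cons, List.mem_singleton, List.not_mem_nil, or_false,
    not_or, List.nodup_nil, and_true] at hnd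
  obtain ⟨⟨n01, n02, n03, n04, n05, n06⟩, ⟨n12, n13, n14, n15, n16⟩, ⟨n23, n24, n25, n26⟩,
    ⟨n34, n35, n36⟩, ⟨n45, n46⟩, hn56⟩ := hnd
  have n56 : v5 ≠ v6 := hn56.1
  have aA : ∀ z : V, G.dist x z = t → G.Adj z (anc G x 1 z) := by
    intro z hz
    have := anc_adj (v := z) (G := G) (x := x) (k := 0) (by omega)
    simpa using this
  have dA : ∀ z : V, G.dist x z = t → G.dist x (anc G x 1 z) = t - 1 := by
    intro z hz
    have := anc_dist (v := z) (G := G) (x := x) (k := 1) (by omega)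
    rwa [hz] at this
  by_cases hPP : anc G x 1 v0 = anc G x 1 v2
  · -- same parent class: v0 and v6 share a parent
    have hB : anc G x 1 v0 = anc G x 1 v6 := hPP.trans hp26
    set l : List V := [v0, anc G x 1 v0, v6, v5, v4, v3, v2, v1] with hldef
    have hlne : l ≠ [] := by simp [hldef]
    have hchain : l.IsChain G.Adj := by
      simp only [hldef, List.isChain_cons_cons, List.isChain_singleton, and_true]
      exact ⟨aA v0 hd0, by rw [hB]; exact (aA v6 hd6).symm, ha56.symm, ha45.symm,
        ha34.symm, ha23.symm, ha12.symm⟩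
    have hnodup : l.Nodup := by
      simp only [hldef, List.nodup_cons, List.mem_cons, List.mem_singleton, List.not_mem_nil,
        or_false, not_or, List.nodup_nil, and_true]
      refine ⟨⟨?_, ?_, ?_, ?_, ?_, ?_, ?_⟩, ⟨?_, ?_, ?_, ?_, ?_, ?_⟩, ⟨?_, ?_, ?_, ?_, ?_⟩,
        ⟨?_, ?_, ?_, ?_⟩, ⟨?_, ?_, ?_⟩, ⟨?_, ?_⟩, ⟨?_, not_false⟩⟩
      · exact ne_of_dist (by rw [hd0, dA v0 hd0]; omega)
      · exact n06
      · exact n05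
      · exact n04
      · exact n03
      · exact n02
      · exact n01
      · exact ne_of_dist (by rw [dA v0 hd0, hd6]; omega)
      · exact ne_of_dist (by rw [dA v0 hd0, hd5]; omega)
      · exact ne_of_dist (by rw [dA v0 hd0, hd4]; omega)
      · exact ne_of_dist (by rw [dA v0 hd0, hd3]; omega)
      · exact ne_of_dist (by rw [dA v0 hd0, hd2]; omega)
      · exact ne_of_dist (by rw [dA v0 hd0, hd1]; omega)
      · exact Ne.symm n56
      · exact Ne.symm n46
      · exact Ne.symm n36
      · exact Ne.symm n26
      · exact Ne.symm n16
      · exact Ne.symm n45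
      · exact Ne.symm n35
      · exact Ne.symm n25
      · exact Ne.symm n15
      · exact Ne.symm n34
      · exact Ne.symm n24
      · exact Ne.symm n14
      · exact Ne.symm n23
      · exact Ne.symm n13
      · exact Ne.symm n12
    have hlen : l.length = 8 := by simp [hldef]
    have hhead : l.head hlne = v0 := by simp [hldef]
    have hlast : l.getLast hlne = v1 := by simp [hldef]
    exact no_cycle_list hcyc l hlne hchain hnodup
      (by rw [hhead, hlast]; exact ha01.symm) (by omega) (by omega) (by rw [hlen]; decide)
  · -- different parent classes
    have hBne : anc G x 1 v0 ≠ anc G x 1 v6 := fun h => hPP (h.trans hp26.symm)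
    set l : List V := [v0, anc G x 1 v0, v4, v5, v6, anc G x 1 v6, v2, v1] with hldef
    have hlne : l ≠ [] := by simp [hldef]
    have hchain : l.IsChain G.Adj := by
      simp only [hldef, List.isChain_cons_cons, List.isChain_singleton, and_true]
      refine ⟨aA v0 hd0, by rw [hp04]; exact (aA v4 hd4).symm, ha45, ha56, aA v6 hd6,
        by rw [← hp26]; exact (aA v2 hd2).symm, ha12.symm⟩
    have hnodup : l.Nodup := by
      simp only [hldef, List.nodup_cons, List.mem_cons, List.mem_singleton, List.not_mem_nil,
        or_false, not_or, List.nodup_nil, and_true]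
      refine ⟨⟨?_, ?_, ?_, ?_, ?_, ?_, ?_⟩, ⟨?_, ?_, ?_, ?_, ?_, ?_⟩, ⟨?_, ?_, ?_, ?_, ?_⟩,
        ⟨?_, ?_, ?_, ?_⟩, ⟨?_, ?_, ?_⟩, ⟨?_, ?_⟩, ⟨?_, not_false⟩⟩
      · exact ne_of_dist (by rw [hd0, dA v0 hd0]; omega)
      · exact n04
      · exact n05
      · exact n06
      · exact ne_of_dist (by rw [hd0, dA v6 hd6]; omega)
      · exact n02
      · exact n01
      · exact ne_of_dist (by rw [dA v0 hd0, hd4]; omega)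
      · exact ne_of_dist (by rw [dA v0 hd0, hd5]; omega)
      · exact ne_of_dist (by rw [dA v0 hd0, hd6]; omega)
      · exact hBne
      · exact ne_of_dist (by rw [dA v0 hd0, hd2]; omega)
      · exact ne_of_dist (by rw [dA v0 hd0, hd1]; omega)
      · exact n45
      · exact n46
      · exact ne_of_dist (by rw [hd4, dA v6 hd6]; omega)
      · exact Ne.symm n24
      · exact Ne.symm n14
      · exact n56
      · exact ne_of_dist (by rw [hd5, dA v6 hd6]; omega)
      · exact Ne.symm n25
      · exact Ne.symm n15
      · exact ne_of_dist (by rw [hd6, dA v6 hd6]; omega)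
      · exact Ne.symm n26
      · exact Ne.symm n16
      · exact ne_of_dist (by rw [dA v6 hd6, hd2]; omega)
      · exact ne_of_dist (by rw [dA v6 hd6, hd1]; omega)
      · exact Ne.symm n12
    have hlen : l.length = 8 := by simp [hldef]
    have hhead : l.head hlne = v0 := by simp [hldef]
    have hlast : l.getLast hlne = v1 := by simp [hldef]
    exact no_cycle_list hcyc l hlne hchain hnodup
      (by rw [hhead, hlast]; exact ha01.symm) (by omega) (by omega) (by rw [hlen]; decide)

/-- No 7-vertex path-list inside level `t`. -/
lemma no_seven_list (ht : 3 ≤ t)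
    (hcyc : ∀ (v : V) (w : G.Walk v v), w.IsCycle →
      ¬(8 ≤ w.length ∧ w.length ≤ 2 * t + 2 ∧ Even w.length))
    (l : List V) (hc : l.IsChain G.Adj) (hnd : l.Nodup)
    (hdist : ∀ y ∈ l, G.dist x y = t) : l.length ≠ 7 := by
  intro hlen
  obtain ⟨v0, l, rfl⟩ : ∃ a l', l = a :: l' := by
    cases l with
    | nil => simp at hlen
    | cons a l' => exact ⟨a, l', rfl⟩
  obtain ⟨v1, l, rfl⟩ : ∃ a l', l = a :: l' := by
    cases l with
    | nil => simp at hlen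
    | cons a l' => exact ⟨a, l', rfl⟩
  obtain ⟨v2, l, rfl⟩ : ∃ a l', l = a :: l' := by
    cases l with
    | nil => simp at hlen
    | cons a l' => exact ⟨a, l', rfl⟩
  obtain ⟨v3, l, rfl⟩ : ∃ a l', l = a :: l' := by
    cases l with
    | nil => simp at hlen
    | cons a l' => exact ⟨a, l', rfl⟩
  obtain ⟨v4, l, rfl⟩ : ∃ a l', l = a :: l' := by
    cases l with
    | nil => simp at hlen
    | cons a l' => exact ⟨a, l', rfl⟩
  obtain ⟨v5, l, rfl⟩ : ∃ a l', l = a :: l' := by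
    cases l with
    | nil => simp at hlen
    | cons a l' => exact ⟨a, l', rfl⟩
  obtain ⟨v6, l, rfl⟩ : ∃ a l', l = a :: l' := by
    cases l with
    | nil => simp at hlen
    | cons a l' => exact ⟨a, l', rfl⟩
  have hnil : l = [] := by
    simp only [List.length_cons] at hlen
    exact List.length_eq_zero_iff.1 (by omega)
  subst hnil
  simp only [List.isChain_cons_cons, List.isChain_singleton, and_true] at hc
  obtain ⟨ha01, ha12, ha23, ha34, ha45, ha56⟩ := hc
  exact no_sixpath ht hcyc v0 v1 v2 v3 v4 v5 v6
    (hdist _ (by simp)) (hdist _ (by simp)) (hdist _ (by simp)) (hdist _ (by simp))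
    (hdist _ (by simp)) (hdist _ (by simp)) (hdist _ (by simp))
    hnd ha01 ha12 ha23 ha34 ha45 ha56

end Lemmas

end Main



/-- If `t ≥ 3` and `G` has no cycle of length in `{8, 10, ..., 2t+2}`, then the number of
edges of `G` both of whose endpoints are at distance exactly `t` from `x` is at most
`(5/2)` times the number of vertices at distance exactly `t` from `x`.  Here edges are
counted as ordered pairs of adjacent vertices, i.e. each edge is counted twice. -/
theorem edges_inside_level_t_bound
    (t : ℕ) (ht : 3 ≤ t) (V : Type) [Fintype V] (G : SimpleGraph V)
    (hcyc : ∀ (v : V) (w : G.Walk v v), w.IsCycle →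
      ¬(8 ≤ w.length ∧ w.length ≤ 2 * t + 2 ∧ Even w.length))
    (x : V) :
    {p : V × V | G.Adj p.1 p.2 ∧ G.dist x p.1 = t ∧ G.dist x p.2 = t}.ncard ≤
      5 * {v : V | G.dist x v = t}.ncard := by
  classical
  set A : Finset V := Finset.univ.filter (fun v => G.dist x v = t) with hA
  have hAmem : ∀ v : V, v ∈ A ↔ G.dist x v = t := by
    intro v; simp [hA]
  have hR : {v : V | G.dist x v = t}.ncard = A.card := by
    have : {v : V | G.dist x v = t} = ↑A := by
      ext v; simp [hAmem]
    rw [this, Set.ncard_coe_finset]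
  set F : Finset (V × V) := Finset.univ.filter
    (fun p : V × V => G.Adj p.1 p.2 ∧ G.dist x p.1 = t ∧ G.dist x p.2 = t) with hF
  have hFmem : ∀ p : V × V, p ∈ F ↔ G.Adj p.1 p.2 ∧ G.dist x p.1 = t ∧ G.dist x p.2 = t := by
    intro p; simp [hF]
  have hL : {p : V × V | G.Adj p.1 p.2 ∧ G.dist x p.1 = t ∧ G.dist x p.2 = t}.ncard = F.card := by
    have : {p : V × V | G.Adj p.1 p.2 ∧ G.dist x p.1 = t ∧ G.dist x p.2 = t} = ↑F := by
      ext p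
      simp only [Set.mem_setOf_eq, Finset.coe_filter, hF]
      simp
    rw [this, Set.ncard_coe_finset]
  have hfib : F.card = ∑ v ∈ A, EGAux.degA G A v := by
    rw [Finset.card_eq_sum_card_fiberwise (f := Prod.fst) (t := A)
      (fun p hp => (hAmem p.1).2 ((hFmem p).1 hp).2.1)]
    apply Finset.sum_congr rfl
    intro v hv
    rw [EGAux.degA]
    refine Finset.card_bij' (fun p _ => p.2) (fun u _ => (v, u)) ?_ ?_ ?_ ?_
    · intro p hp
      simp only [Finset.mem_filter] at hp ⊢
      obtain ⟨hpF, hp1⟩ := hp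
      rw [hFmem] at hpF
      refine ⟨(hAmem p.2).2 hpF.2.2, ?_⟩
      rw [← hp1]
      exact hpF.1
    · intro u hu
      simp only [Finset.mem_filter] at hu ⊢
      refine ⟨(hFmem _).2 ⟨hu.2, (hAmem v).1 hv, (hAmem u).1 hu.1⟩, trivial⟩
    · intro p hp
      simp only [Finset.mem_filter] at hp
      exact Prod.ext hp.2.symm rfl
    · intro u hu
      rfl
  have hpath : ∀ l : List V, l.IsChain G.Adj → l.Nodup → (∀ v ∈ l, v ∈ A) → l.length ≠ 7 := by
    intro l hc hnd hmem
    exact no_seven_list ht hcyc l hc hnd (fun y hy => (hAmem y).1 (hmem y hy))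
  have hEG := EGAux.eg_bound G A.card A le_rfl hpath
  rw [hL, hR, hfib]
  exact hEG
end

section
/- For every positive integer t and every positive even integer d there exists a finite simple graph G of maximum degree at most d such that χ(Gᵗ) ≥ (d/2)ᵗ. Moreover, if t ≥ 2 and t ≠ 3 then G can additionally be chosen to contain no triangle (girth at least 4), and if t is even then G can additionally be chosen to be bipartite. -/
/-- The `t`-th power of a simple graph `G`: two distinct vertices are adjacent
iff they are joined in `G` by a walk of length at most `t`. -/
def SimpleGraph.power {V : Type*} (G : SimpleGraph V) (t : ℕ) : SimpleGraph V where
  Adj u v := u ≠ v ∧ ∃ w : G.Walk u v, w.length ≤ t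
  symm := ⟨by
    rintro u v ⟨huv, w, hw⟩
    exact ⟨huv.symm, w.reverse, by simpa using hw⟩⟩
  loopless := ⟨by rintro u ⟨h, -⟩; exact h rfl⟩

private lemma walk_of_chain {V : Type*} {G : SimpleGraph V} (v : ℕ → V) :
    ∀ n, (∀ s < n, G.Adj (v s) (v (s+1))) → ∃ w : G.Walk (v 0) (v n), w.length = n := by
  intro n
  induction n with
  | zero => exact fun _ => ⟨.nil, rfl⟩
  | succ n ih =>
    intro h
    obtain ⟨w, hw⟩ := ih (fun s hs => h s (hs.trans (Nat.lt_succ_self n)))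
    exact ⟨w.concat (h n (Nat.lt_succ_self n)), by simp [hw]⟩

/-- For every positive `t` and positive even `d` there is a finite simple graph `G` of
maximum degree at most `d` with `χ(Gᵗ) ≥ (d/2)ᵗ`; moreover `G` can be chosen triangle-free
(girth at least `4`) whenever `t ≥ 2` and `t ≠ 3`, and bipartite whenever `t` is even. -/
theorem circular_construction_simple (t d : ℕ) (ht : 0 < t) (hd : 0 < d) (hde : Even d) :
    ∃ (V : Type) (_ : Fintype V) (G : SimpleGraph V),
      (∀ v : V, {w : V | G.Adj v w}.ncard ≤ d) ∧
      (((d / 2) ^ t : ℕ) : ℕ∞) ≤ (G.power t).chromaticNumber ∧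
      (2 ≤ t ∧ t ≠ 3 → 4 ≤ G.egirth) ∧
      (Even t → G.Colorable 2) := by
  haveI : NeZero t := ⟨ht.ne'⟩
  obtain ⟨r, rfl⟩ := hde
  set m := (r + r) / 2 with hm
  set V : Type := ZMod t × (ZMod t → Fin m) with hV
  classical
  set Step : V → V → Prop :=
    fun u v => v.1 = u.1 + 1 ∧ ∀ k : ZMod t, k ≠ u.1 → v.2 k = u.2 k with hStep
  set G : SimpleGraph V :=
    { Adj := fun u v => u ≠ v ∧ (Step u v ∨ Step v u)
      symm := ⟨by rintro u v ⟨h, h'⟩; exact ⟨h.symm, h'.symm⟩⟩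
      loopless := ⟨by rintro u ⟨h, -⟩; exact h rfl⟩ } with hG
  have hlayer : ∀ u v : V, G.Adj u v → v.1 = u.1 + 1 ∨ v.1 = u.1 - 1 := by
    rintro u v ⟨-, h | h⟩
    · exact Or.inl h.1
    · right; rw [h.1]; ring
  refine ⟨V, inferInstance, G, ?_, ?_, ?_, ?_⟩
  · -- degree bound
    rintro ⟨i, x⟩
    set f : Fin m ⊕ Fin m → V := fun a =>
      match a with
      | .inl a => (i + 1, Function.update x i a)
      | .inr a => (i - 1, Function.update x (i - 1) a) with hf
    have hsub : {w : V | G.Adj (i, x) w} ⊆ Set.range f := by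
      rintro ⟨j, y⟩ ⟨-, hst | hst⟩
      · obtain ⟨hj, hk⟩ := hst
        have hj' : j = i + 1 := hj
        have hk' : ∀ k : ZMod t, k ≠ i → y k = x k := hk
        refine ⟨.inl (y i), ?_⟩
        refine Prod.ext hj'.symm ?_
        show Function.update x i (y i) = y
        funext k
        by_cases hki : k = i
        · subst hki; simp
        · rw [Function.update_of_ne hki]
          exact (hk' k hki).symm
      · obtain ⟨hj, hk⟩ := hst
        have hj0 : i = j + 1 := hj
        have hj' : j = i - 1 := by rw [hj0]; ring
        have hk' : ∀ k : ZMod t, k ≠ j → x k = y k := hk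
        refine ⟨.inr (y (i-1)), ?_⟩
        refine Prod.ext hj'.symm ?_
        show Function.update x (i-1) (y (i-1)) = y
        funext k
        by_cases hki : k = i - 1
        · subst hki; simp
        · rw [Function.update_of_ne hki]
          exact hk' k (by rw [hj']; exact hki)
    calc {w : V | G.Adj (i, x) w}.ncard ≤ (Set.range f).ncard :=
          Set.ncard_le_ncard hsub (Set.finite_range f)
      _ = (f '' Set.univ).ncard := by rw [Set.image_univ]
      _ ≤ (Set.univ : Set (Fin m ⊕ Fin m)).ncard := Set.ncard_image_le Set.finite_univ
      _ = m + m := by simp [Set.ncard_univ]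
      _ ≤ r + r := by omega
  · -- chromatic number lower bound
    set s : Finset V :=
      Finset.univ.image (fun x : ZMod t → Fin m => ((0 : ZMod t), x)) with hs
    have hcard : s.card = m ^ t := by
      rw [hs, Finset.card_image_of_injective _
        (fun a b h => ((Prod.mk.injEq _ _ _ _).mp h).2)]
      simp [ZMod.card]
    have hclique : (G.power t).IsClique (s : Set V) := by
      intro u hu w hw hne
      simp only [hs, Finset.coe_image, Set.mem_image] at hu hw
      obtain ⟨x', -, rfl⟩ := hu
      obtain ⟨y', -, rfl⟩ := hw
      have hxy : x' ≠ y' := fun h => hne (by rw [h])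
      refine ⟨hne, ?_⟩
      set z : ℕ → ZMod t → Fin m := fun n k => if k.val < n then y' k else x' k with hz
      set v : ℕ → V := fun n => ((n : ZMod t), z n) with hv
      have hz0 : z 0 = x' := funext fun k => if_neg (Nat.not_lt_zero _)
      have hzt : z t = y' := funext fun k => if_pos (ZMod.val_lt k)
      have hchain : ∀ n < t, G.Adj (v n) (v (n+1)) := by
        intro n hn
        have hcoord : ∀ k : ZMod t, k ≠ ((n : ℕ) : ZMod t) → z (n+1) k = z n k := by
          intro k hk
          have hiff : k.val < n + 1 ↔ k.val < n := by
            constructor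
            · intro h
              rcases Nat.lt_succ_iff_lt_or_eq.mp h with h | h
              · exact h
              · exact absurd (by rw [← h]; exact (ZMod.natCast_rightInverse k).symm) hk
            · exact fun h => h.trans (Nat.lt_succ_self n)
          show (if k.val < n + 1 then y' k else x' k) = (if k.val < n then y' k else x' k)
          rw [if_congr hiff rfl rfl]
        have hstep : Step (v n) (v (n+1)) := by
          refine ⟨?_, hcoord⟩
          show ((n + 1 : ℕ) : ZMod t) = ((n : ℕ) : ZMod t) + 1
          push_cast; ring
        refine ⟨?_, Or.inl hstep⟩
        intro he
        have h1 : ((n + 1 : ℕ) : ZMod t) = ((n : ℕ) : ZMod t) := by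
          simpa [hv] using (congrArg Prod.fst he).symm
        have h0 : ((1 : ℕ) : ZMod t) = 0 := by push_cast at h1 ⊢; linear_combination h1
        rw [ZMod.natCast_eq_zero_iff] at h0
        have ht1 : t = 1 := Nat.dvd_one.mp h0
        have hn0 : n = 0 := by omega
        apply hxy
        have hzz : z n = z (n + 1) := congrArg Prod.snd he
        rw [hn0] at hzz
        calc x' = z 0 := hz0.symm
          _ = z (0 + 1) := hzz
          _ = z t := congrArg z (by omega)
          _ = y' := hzt
      obtain ⟨w, hw⟩ := walk_of_chain v t (fun s hs => hchain s hs)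
      have h0 : v 0 = ((0 : ZMod t), x') := Prod.ext (by simp [hv]) hz0
      have h1 : v t = ((0 : ZMod t), y') := Prod.ext (by simp [hv, ZMod.natCast_self]) hzt
      exact ⟨w.copy h0 h1, by simp [hw]⟩
    have := hclique.card_le_chromaticNumber
    rw [hcard] at this
    exact this
  · -- girth at least 4
    rintro ⟨ht2, ht3⟩
    rw [SimpleGraph.le_egirth]
    intro a w hw
    by_contra hlen
    have hlt : w.length < 4 := by
      exact_mod_cast not_le.mp hlen
    have hlen3 : w.length = 3 := le_antisymm (by omega) hw.three_le_length
    have h01 := w.adj_getVert_succ (show 0 < w.length by omega)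
    have h12 := w.adj_getVert_succ (show 1 < w.length by omega)
    have h23 := w.adj_getVert_succ (show 2 < w.length by omega)
    have hend : (w.getVert 3).1 = (w.getVert 0).1 := by
      rw [← hlen3, w.getVert_length, w.getVert_zero]
    have e1 := hlayer _ _ h01
    have e2 := hlayer _ _ h12
    have e3 := hlayer _ _ h23
    have key : ((1 : ℕ) : ZMod t) = 0 ∨ ((3 : ℕ) : ZMod t) = 0 := by
      push_cast
      rcases e1 with h1 | h1 <;> rcases e2 with h2 | h2 <;> rcases e3 with h3 | h3 <;>
        first
          | exact Or.inl (by linear_combination hend - h1 - h2 - h3)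
          | exact Or.inl (by linear_combination h1 + h2 + h3 - hend)
          | exact Or.inr (by linear_combination hend - h1 - h2 - h3)
          | exact Or.inr (by linear_combination h1 + h2 + h3 - hend)
    rcases key with h | h <;> rw [ZMod.natCast_eq_zero_iff] at h
    · have := Nat.dvd_one.mp h; omega
    · have := (Nat.prime_three).eq_one_or_self_of_dvd t h; omega
  · -- bipartite when t even
    intro hte
    have hdvd : (2 : ℕ) ∣ t := hte.two_dvd
    have C : G.Coloring (ZMod 2) := by
      refine SimpleGraph.Coloring.mk (fun u => ZMod.castHom hdvd (ZMod 2) u.1) ?_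
      intro u v hadj
      show ZMod.castHom hdvd (ZMod 2) u.1 ≠ ZMod.castHom hdvd (ZMod 2) v.1
      rcases hlayer u v hadj with h | h
      · intro hEq
        rw [h, map_add, map_one] at hEq
        exact absurd (by linear_combination -hEq : (1 : ZMod 2) = 0) (by decide)
      · intro hEq
        rw [h, map_sub, map_one] at hEq
        exact absurd (by linear_combination hEq : (1 : ZMod 2) = 0) (by decide)
    have := C.colorable
    simpa [ZMod.card] using this
end
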